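/- arXiv:1707.01486 — 6 statements merged into one kernel-verified Lean document; each statement's English description precedes it below -/
import Mathlib

section
/- Let I ⊆ ℝ be an interval and let v, w : I → ℝ be differentiable functions with v'(r) = w(r) and w'(r) = (w(r) − 1/2)·v(r) for all r ∈ I, and suppose w(r) ≠ 1/2 for all r ∈ I. Then the function r ↦ v(r)² − 2·w(r) − ln|2·w(r) − 1| is constant on I. -/
/-- First integral of the normalized shrinking soliton system `v' = w`, `w' = (w − 1/2)·v`:
the quantity `v² − 2w − ln|2w − 1|` is constant. -/
theorem shrinking_soliton_first_integral
    (I : Set ℝ) (hI : I.OrdConnected) (v w : ℝ → ℝ)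
    (hv : ∀ r ∈ I, HasDerivAt v (w r) r)
    (hw : ∀ r ∈ I, HasDerivAt w ((w r - 1 / 2) * v r) r)
    (hne : ∀ r ∈ I, w r ≠ 1 / 2) :
    ∃ C : ℝ, ∀ r ∈ I, (v r) ^ 2 - 2 * w r - Real.log |2 * w r - 1| = C := by
  rcases I.eq_empty_or_nonempty with rfl | ⟨r₀, hr₀⟩
  · exact ⟨0, fun r h => absurd h (Set.notMem_empty r)⟩
  set F : ℝ → ℝ := fun r => (v r) ^ 2 - 2 * w r - Real.log (2 * w r - 1) with hF
  have hconv : Convex ℝ I := hI.convex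
  have key : ∀ r ∈ I, HasDerivAt F 0 r := by
    intro r hr
    have hne' : 2 * w r - 1 ≠ 0 := by
      intro h
      apply hne r hr
      linarith
    have h1 : HasDerivAt (fun r => (v r) ^ 2) (2 * v r * w r) r := by
      simpa [mul_comm] using ((hv r hr).fun_pow 2)
    have h2 : HasDerivAt (fun r => 2 * w r) (2 * ((w r - 1 / 2) * v r)) r :=
      (hw r hr).const_mul 2
    have h3 : HasDerivAt (fun r => 2 * w r - 1) (2 * ((w r - 1 / 2) * v r)) r :=
      h2.sub_const 1
    have h4 : HasDerivAt (fun r => Real.log (2 * w r - 1))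
        ((2 * w r - 1)⁻¹ * (2 * ((w r - 1 / 2) * v r))) r :=
      by have := (Real.hasDerivAt_log hne').comp r h3; exact this
    have h5 : (2 * w r - 1)⁻¹ * (2 * ((w r - 1 / 2) * v r)) = v r := by
      field_simp
    rw [h5] at h4
    have := (h1.sub h2).sub h4
    convert this using 1
    · rfl
    · rfl
    · rfl
    · ring
  refine ⟨F r₀, fun r hr => ?_⟩
  have hlog : ∀ r, Real.log |2 * w r - 1| = Real.log (2 * w r - 1) := fun r =>
    Real.log_abs _
  rw [hlog]
  have hconst : F r = F r₀ := by
    have hbnd : ‖F r - F r₀‖ ≤ 0 * ‖r - r₀‖ :=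
      Convex.norm_image_sub_le_of_norm_hasDerivWithin_le
        (f' := fun _ => (0 : ℝ))
        (fun x hx => (key x hx).hasDerivWithinAt)
        (fun x _ => by simp) hconv hr₀ hr
    have : ‖F r - F r₀‖ ≤ 0 := by simpa using hbnd
    have := le_antisymm this (norm_nonneg _)
    rwa [norm_eq_zero, sub_eq_zero] at this
  exact hconst
end

section
/- Let I ⊆ ℝ be an interval and let v, w : I → ℝ be differentiable functions with v'(r) = w(r) and w'(r) = (w(r) + 1/2)·v(r) for all r ∈ I, and suppose w(r) ≠ −1/2 for all r ∈ I. Then the function r ↦ v(r)² − 2·w(r) + ln|2·w(r) + 1| is constant on I. -/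
/-- First integral of the normalized expanding soliton system `v' = w`, `w' = (w + 1/2)·v`:
the quantity `v² − 2w + ln|2w + 1|` is constant. -/
theorem expanding_soliton_first_integral
    (I : Set ℝ) (hI : I.OrdConnected) (v w : ℝ → ℝ)
    (hv : ∀ r ∈ I, HasDerivAt v (w r) r)
    (hw : ∀ r ∈ I, HasDerivAt w ((w r + 1 / 2) * v r) r)
    (hne : ∀ r ∈ I, w r ≠ -(1 / 2)) :
    ∃ C : ℝ, ∀ r ∈ I, (v r) ^ 2 - 2 * w r + Real.log |2 * w r + 1| = C := by
  rcases I.eq_empty_or_nonempty with h | ⟨r₀, hr₀⟩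
  · exact ⟨0, by simp [h]⟩
  set H : ℝ → ℝ := fun r => (v r) ^ 2 - 2 * w r + Real.log |2 * w r + 1| with hH
  have key : ∀ r ∈ I, HasDerivAt H 0 r := by
    intro r hr
    have hne' : 2 * w r + 1 ≠ 0 := by
      intro h
      apply hne r hr
      linarith
    have h1 : HasDerivAt (fun r => 2 * w r + 1) (2 * ((w r + 1 / 2) * v r)) r := by
      simpa using ((hw r hr).const_mul 2).add_const 1
    have hlog : HasDerivAt (fun r => Real.log |2 * w r + 1|)
        ((2 * ((w r + 1 / 2) * v r)) / (2 * w r + 1)) r := by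
      have := h1.log hne'
      simpa [Real.log_abs] using this
    have hmain : HasDerivAt H
        ((2 : ℕ) * v r ^ 1 * w r - 2 * ((w r + 1 / 2) * v r)
          + (2 * ((w r + 1 / 2) * v r)) / (2 * w r + 1)) r := by
      exact (((hv r hr).pow 2).sub ((hw r hr).const_mul 2)).add hlog
    convert hmain using 1
    rw [show (2:ℝ) * ((w r + 1 / 2) * v r) = v r * (2 * w r + 1) by ring, mul_div_assoc, div_self hne']
    push_cast
    ring
  refine ⟨H r₀, fun r hr => ?_⟩
  have := hI.convex.norm_image_sub_le_of_norm_hasDerivWithin_le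
    (f := H) (f' := fun _ => 0) (C := 0)
    (fun x hx => (key x hx).hasDerivWithinAt) (fun x _ => by simp) hr₀ hr
  simp only [norm_zero, zero_mul] at this
  have : H r - H r₀ = 0 := by
    have h0 : ‖H r - H r₀‖ ≤ 0 := this
    simpa [Real.norm_eq_abs, abs_nonpos_iff] using h0
  show H r = H r₀
  linarith
end

section
/- For every pair of real numbers α₁, α₂ with 0 < α₁ < α₂ < ∞ there exists a unique a > 0 with the following property: there exist A > 0 and a twice differentiable function h : [0, A] → ℝ with h > 0 on (0, A), satisfying h''(r) − a·h(r)·h'(r) + h(r)/2 = 0 for all r ∈ [0, A], together with the boundary conditions h(0) = 0, h(A) = 0, h'(0) = α₁/(2π), and h'(A) = −α₂/(2π). -/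
open Real Set

noncomputable section

namespace FootballAux

def Dfun (b₁ b₂ a : ℝ) : ℝ :=
  (2*a*b₁ - 1) * Real.exp (2*a*b₁) + (2*a*b₂ + 1) * Real.exp (-(2*a*b₂))

def psi (b₁ b₂ a : ℝ) : ℝ := b₁^2 * Real.exp (2*a*b₁) - b₂^2 * Real.exp (-(2*a*b₂))

lemma hasDerivAt_lin (b x : ℝ) : HasDerivAt (fun y : ℝ => 2*y*b) (2*b) x := by
  have h := ((hasDerivAt_id x).const_mul (2:ℝ)).mul_const b
  simpa [mul_assoc] using h

lemma hasDerivAt_Dfun (b₁ b₂ x : ℝ) :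
    HasDerivAt (Dfun b₁ b₂) (4*x*(psi b₁ b₂ x)) x := by
  have e1 := hasDerivAt_lin b₁ x
  have e2 : HasDerivAt (fun y : ℝ => 2*y*b₁ - 1) (2*b₁) x := e1.sub_const 1
  have e3 : HasDerivAt (fun y : ℝ => Real.exp (2*y*b₁)) (Real.exp (2*x*b₁) * (2*b₁)) x := e1.exp
  have e4 := e2.mul e3
  have f1 : HasDerivAt (fun y : ℝ => -(2*y*b₂)) (-(2*b₂)) x := (hasDerivAt_lin b₂ x).neg
  have f2 : HasDerivAt (fun y : ℝ => Real.exp (-(2*y*b₂))) (Real.exp (-(2*x*b₂)) * (-(2*b₂))) x :=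
    f1.exp
  have f3 : HasDerivAt (fun y : ℝ => 2*y*b₂ + 1) (2*b₂) x := (hasDerivAt_lin b₂ x).add_const 1
  have f4 := f3.mul f2
  have := e4.add f4
  refine this.congr_deriv ?_
  unfold psi
  ring

lemma psi_strictMono {b₁ b₂ : ℝ} (hb₁ : 0 < b₁) (hb₂ : 0 < b₂) : StrictMono (psi b₁ b₂) := by
  intro u v huv
  have h1 : Real.exp (2*u*b₁) < Real.exp (2*v*b₁) := by
    apply Real.exp_lt_exp.2; nlinarith
  have h2 : Real.exp (-(2*v*b₂)) < Real.exp (-(2*u*b₂)) := by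
    apply Real.exp_lt_exp.2; nlinarith
  unfold psi
  nlinarith [sq_nonneg b₁, sq_nonneg b₂, pow_pos hb₁ 2, pow_pos hb₂ 2]

lemma Dfun_zero (b₁ b₂ : ℝ) : Dfun b₁ b₂ 0 = 0 := by
  unfold Dfun; norm_num

lemma continuous_Dfun (b₁ b₂ : ℝ) : Continuous (Dfun b₁ b₂) := by
  unfold Dfun; continuity

lemma psi_pos_of_root {b₁ b₂ a : ℝ} (hb₁ : 0 < b₁) (hb₂ : 0 < b₂) (ha : 0 < a)
    (hroot : Dfun b₁ b₂ a = 0) : 0 < psi b₁ b₂ a := by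
  by_contra hcon
  push_neg at hcon
  have hanti : StrictAntiOn (Dfun b₁ b₂) (Icc 0 a) := by
    apply strictAntiOn_of_deriv_neg (convex_Icc 0 a) ((continuous_Dfun b₁ b₂).continuousOn)
    intro t ht
    rw [interior_Icc] at ht
    rw [(hasDerivAt_Dfun b₁ b₂ t).deriv]
    have hψ : psi b₁ b₂ t < 0 := lt_of_lt_of_le (psi_strictMono hb₁ hb₂ ht.2) hcon
    nlinarith [ht.1]
  have := hanti (left_mem_Icc.2 ha.le) (right_mem_Icc.2 ha.le) ha
  rw [Dfun_zero, hroot] at this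
  exact lt_irrefl 0 this

lemma Dfun_root_unique {b₁ b₂ u v : ℝ} (hb₁ : 0 < b₁) (hb₂ : 0 < b₂)
    (hu : 0 < u) (hv : 0 < v) (hru : Dfun b₁ b₂ u = 0) (hrv : Dfun b₁ b₂ v = 0) : u = v := by
  rcases lt_trichotomy u v with h | h | h
  · exfalso
    have hmono : StrictMonoOn (Dfun b₁ b₂) (Icc u v) := by
      apply strictMonoOn_of_deriv_pos (convex_Icc u v) ((continuous_Dfun b₁ b₂).continuousOn)
      intro t ht
      rw [interior_Icc] at ht
      rw [(hasDerivAt_Dfun b₁ b₂ t).deriv]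
      have hψ : 0 < psi b₁ b₂ t :=
        lt_trans (psi_pos_of_root hb₁ hb₂ hu hru) (psi_strictMono hb₁ hb₂ ht.1)
      have : 0 < t := lt_trans hu ht.1
      nlinarith
    have := hmono (left_mem_Icc.2 h.le) (right_mem_Icc.2 h.le) h
    rw [hru, hrv] at this; exact lt_irrefl 0 this
  · exact h
  · exfalso
    have hmono : StrictMonoOn (Dfun b₁ b₂) (Icc v u) := by
      apply strictMonoOn_of_deriv_pos (convex_Icc v u) ((continuous_Dfun b₁ b₂).continuousOn)
      intro t ht
      rw [interior_Icc] at ht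
      rw [(hasDerivAt_Dfun b₁ b₂ t).deriv]
      have hψ : 0 < psi b₁ b₂ t :=
        lt_trans (psi_pos_of_root hb₁ hb₂ hv hrv) (psi_strictMono hb₁ hb₂ ht.1)
      have : 0 < t := lt_trans hv ht.1
      nlinarith
    have := hmono (left_mem_Icc.2 h.le) (right_mem_Icc.2 h.le) h
    rw [hru, hrv] at this; exact lt_irrefl 0 this

lemma Dfun_root_exists {b₁ b₂ : ℝ} (hb₁ : 0 < b₁) (hb : b₁ < b₂) :
    ∃ a : ℝ, 0 < a ∧ Dfun b₁ b₂ a = 0 := by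
  have hb₂ : 0 < b₂ := lt_trans hb₁ hb
  set a₁ : ℝ := Real.log (b₂/b₁) / (2*(b₁+b₂)) with ha₁def
  have hlogpos : 0 < Real.log (b₂/b₁) := Real.log_pos (by rw [lt_div_iff₀ hb₁]; linarith)
  have ha₁pos : 0 < a₁ := div_pos hlogpos (by linarith)
  -- psi is negative on (0, a₁]
  have hψneg : ∀ t ∈ Ioc (0:ℝ) a₁, psi b₁ b₂ t < 0 := by
    intro t ht
    have key : Real.exp (2*t*b₁) * Real.exp (2*t*b₂) ≤ b₂/b₁ := by
      rw [← Real.exp_add]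
      calc Real.exp (2*t*b₁ + 2*t*b₂) ≤ Real.exp (Real.log (b₂/b₁)) := by
            apply Real.exp_le_exp.2
            have : 2*t*(b₁+b₂) ≤ 2*a₁*(b₁+b₂) := by nlinarith [ht.2]
            have h2 : 2*a₁*(b₁+b₂) = Real.log (b₂/b₁) := by
              rw [ha₁def]; field_simp
            nlinarith
        _ = b₂/b₁ := Real.exp_log (div_pos hb₂ hb₁)
    have hexp2 : 0 < Real.exp (2*t*b₂) := Real.exp_pos _
    -- b₁^2 * exp(2tb₁) < b₂^2 * exp(-(2tb₂))
    unfold psi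
    rw [sub_neg]
    rw [Real.exp_neg, ← div_eq_mul_inv, lt_div_iff₀ hexp2]
    calc b₁^2 * Real.exp (2*t*b₁) * Real.exp (2*t*b₂) ≤ b₁^2 * (b₂/b₁) := by
          nlinarith [sq_nonneg b₁, pow_pos hb₁ 2, mul_le_mul_of_nonneg_left key (le_of_lt (pow_pos hb₁ 2))]
      _ = b₁ * b₂ := by field_simp
      _ < b₂^2 := by nlinarith
  -- hence Dfun is negative at a₁
  have hDa₁ : Dfun b₁ b₂ a₁ < 0 := by
    have hanti : StrictAntiOn (Dfun b₁ b₂) (Icc 0 a₁) := by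
      apply strictAntiOn_of_deriv_neg (convex_Icc 0 a₁) ((continuous_Dfun b₁ b₂).continuousOn)
      intro t ht
      rw [interior_Icc] at ht
      rw [(hasDerivAt_Dfun b₁ b₂ t).deriv]
      have := hψneg t ⟨ht.1, ht.2.le⟩
      nlinarith [ht.1]
    have := hanti (left_mem_Icc.2 ha₁pos.le) (right_mem_Icc.2 ha₁pos.le) ha₁pos
    rwa [Dfun_zero] at this
  -- Dfun is positive at a₂ = 1/(2 b₁)
  set a₂ : ℝ := 1/(2*b₁) with ha₂def
  have ha₂pos : 0 < a₂ := by positivity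
  have hDa₂ : 0 < Dfun b₁ b₂ a₂ := by
    unfold Dfun
    have h1 : 2*a₂*b₁ - 1 = 0 := by rw [ha₂def]; field_simp; norm_num
    rw [h1, zero_mul, zero_add]
    positivity
  -- IVT
  have hcont : ContinuousOn (Dfun b₁ b₂) (uIcc a₁ a₂) := (continuous_Dfun b₁ b₂).continuousOn
  have h0mem : (0:ℝ) ∈ Icc (Dfun b₁ b₂ a₁) (Dfun b₁ b₂ a₂) := ⟨hDa₁.le, hDa₂.le⟩
  have := intermediate_value_uIcc (f := Dfun b₁ b₂) (a := a₁) (b := a₂) hcont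
  have h0' : (0:ℝ) ∈ Icc (Dfun b₁ b₂ a₁) (Dfun b₁ b₂ a₂) := h0mem
  have hsub : Icc (Dfun b₁ b₂ a₁) (Dfun b₁ b₂ a₂) ⊆ uIcc (Dfun b₁ b₂ a₁) (Dfun b₁ b₂ a₂) :=
    Icc_subset_uIcc
  obtain ⟨a₀, ha₀mem, ha₀⟩ := this (hsub h0')
  refine ⟨a₀, ?_, ha₀⟩
  have : min a₁ a₂ ≤ a₀ := ha₀mem.1
  calc (0:ℝ) < min a₁ a₂ := lt_min ha₁pos ha₂pos
    _ ≤ a₀ := this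

lemma two_mul_root_lt {b₁ b₂ a : ℝ} (hb₂ : 0 < b₂) (ha : 0 < a)
    (hroot : Dfun b₁ b₂ a = 0) : 2*a*b₁ < 1 := by
  unfold Dfun at hroot
  nlinarith [Real.exp_pos (2*a*b₁), Real.exp_pos (-(2*a*b₂)), mul_pos (by nlinarith : (0:ℝ) < 2*a*b₂ + 1) (Real.exp_pos (-(2*a*b₂)))]


lemma root_of_solution {a b₁ b₂ A : ℝ} {h h' h'' : ℝ → ℝ} (hA : 0 < A)
    (hd1 : ∀ r ∈ Icc (0:ℝ) A, HasDerivWithinAt h (h' r) (Icc (0:ℝ) A) r)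
    (hd2 : ∀ r ∈ Icc (0:ℝ) A, HasDerivWithinAt h' (h'' r) (Icc (0:ℝ) A) r)
    (hode : ∀ r ∈ Icc (0:ℝ) A, h'' r - a * h r * h' r + h r / 2 = 0)
    (h0 : h 0 = 0) (hA0 : h A = 0) (hb1 : h' 0 = b₁) (hb2 : h' A = -b₂) :
    Dfun b₁ b₂ a = 0 := by
  set Q : ℝ → ℝ := fun r => (2*a*h' r - 1) * Real.exp (2*a*h' r - a^2*(h r)^2) with hQdef
  have hQd : ∀ r ∈ Icc (0:ℝ) A, HasDerivWithinAt Q 0 (Icc (0:ℝ) A) r := by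
    intro r hr
    have hu : HasDerivWithinAt (fun r => 2*a*h' r - 1) (2*a*h'' r) (Icc (0:ℝ) A) r :=
      ((hd2 r hr).const_mul (2*a)).sub_const 1
    have hsq : HasDerivWithinAt (fun r => (h r)^2) ((2:ℕ)*(h r)^1*(h' r)) (Icc (0:ℝ) A) r :=
      (hd1 r hr).pow 2
    have hw : HasDerivWithinAt (fun r => 2*a*h' r - a^2*(h r)^2)
        (2*a*h'' r - a^2*((2:ℕ)*(h r)^1*(h' r))) (Icc (0:ℝ) A) r :=
      ((hd2 r hr).const_mul (2*a)).sub (hsq.const_mul (a^2))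
    have hv : HasDerivWithinAt (fun r => Real.exp (2*a*h' r - a^2*(h r)^2))
        (Real.exp (2*a*h' r - a^2*(h r)^2) * (2*a*h'' r - a^2*((2:ℕ)*(h r)^1*(h' r))))
        (Icc (0:ℝ) A) r := hw.exp
    have hQ := hu.mul hv
    have hzero : 2*a*h'' r * Real.exp (2*a*h' r - a^2*(h r)^2) +
        (2*a*h' r - 1) * (Real.exp (2*a*h' r - a^2*(h r)^2) *
          (2*a*h'' r - a^2*((2:ℕ)*(h r)^1*(h' r)))) = 0 := by
      have := hode r hr
      push_cast
      linear_combination (4*a^2*h' r*Real.exp (2*a*h' r - a^2*(h r)^2)) * this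
    rw [hzero] at hQ
    exact hQ
  have hQAQ0 : Q A = Q 0 := by
    have := Convex.norm_image_sub_le_of_norm_hasDerivWithin_le (f := Q) (f' := fun _ => (0:ℝ))
      (C := 0) (fun x hx => hQd x hx) (fun x _ => by simp) (convex_Icc 0 A)
      (left_mem_Icc.2 hA.le) (right_mem_Icc.2 hA.le)
    simp only [zero_mul, norm_le_zero_iff, sub_eq_zero] at this
    exact this
  have hq0 : Q 0 = (2*a*b₁ - 1) * Real.exp (2*a*b₁) := by
    rw [hQdef]; simp [h0, hb1]
  have hqA : Q A = -((2*a*b₂ + 1) * Real.exp (-(2*a*b₂))) := by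
    rw [hQdef]; simp [hA0, hb2]; ring_nf
  unfold Dfun
  rw [← hq0, ← neg_neg ((2*a*b₂ + 1) * Real.exp (-(2*a*b₂))), ← hqA, hQAQ0]
  ring


/-- The constant in the first integral. -/
def Cc (a b₁ : ℝ) : ℝ := (2*a*b₁ - 1) * Real.exp (2*a*b₁) / a^2

/-- The first-integral profile: on a solution, `h² = Phi (h' - (a/2) h²)`. -/
def Phi (a b₁ : ℝ) (u : ℝ) : ℝ := Cc a b₁ * Real.exp (-(2*a*u)) - 2*u/a + 1/a^2

lemma Cc_neg {a b₁ b₂ : ℝ} (hb₂ : 0 < b₂) (ha : 0 < a) (hroot : Dfun b₁ b₂ a = 0) :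
    Cc a b₁ < 0 := by
  have h1 : 2*a*b₁ - 1 < 0 := by
    unfold Dfun at hroot
    nlinarith [Real.exp_pos (2*a*b₁), Real.exp_pos (-(2*a*b₂)),
      mul_pos (by nlinarith : (0:ℝ) < 2*a*b₂ + 1) (Real.exp_pos (-(2*a*b₂)))]
  unfold Cc
  apply div_neg_of_neg_of_pos
  · exact mul_neg_of_neg_of_pos h1 (Real.exp_pos _)
  · positivity

lemma Phi_b₁ {a b₁ : ℝ} (ha : 0 < a) : Phi a b₁ b₁ = 0 := by
  have he : Real.exp (2*a*b₁) * Real.exp (-(2*a*b₁)) = 1 := by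
    rw [← Real.exp_add]; simp
  unfold Phi Cc
  rw [div_mul_eq_mul_div, mul_assoc, he, mul_one]
  field_simp
  ring

lemma Phi_negb₂ {a b₁ b₂ : ℝ} (ha : 0 < a) (hroot : Dfun b₁ b₂ a = 0) :
    Phi a b₁ (-b₂) = 0 := by
  unfold Phi Cc
  unfold Dfun at hroot
  have h2 : (2*a*b₁ - 1) * Real.exp (2*a*b₁) = -((2*a*b₂ + 1) * Real.exp (-(2*a*b₂))) := by
    linarith
  rw [h2]
  have : -(2*a*(-b₂)) = 2*a*b₂ := by ring
  rw [this]
  have he : Real.exp (-(2*a*b₂)) * Real.exp (2*a*b₂) = 1 := by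
    rw [← Real.exp_add]; simp
  rw [neg_div, neg_mul, div_mul_eq_mul_div, mul_assoc, he, mul_one]
  field_simp
  ring

lemma hasDerivAt_Phi {a b₁ : ℝ} (ha : 0 < a) (u : ℝ) :
    HasDerivAt (Phi a b₁) (-2*a*Cc a b₁*Real.exp (-(2*a*u)) - 2/a) u := by
  have l1 : HasDerivAt (fun y : ℝ => 2*a*y) (2*a) u := by
    simpa using (hasDerivAt_id u).const_mul (2*a)
  have l2 : HasDerivAt (fun y : ℝ => -(2*a*y)) (-(2*a)) u := l1.neg
  have l3 : HasDerivAt (fun y : ℝ => Cc a b₁ * Real.exp (-(2*a*y)))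
      (Cc a b₁ * (Real.exp (-(2*a*u)) * (-(2*a)))) u := (l2.exp).const_mul _
  have l4 : HasDerivAt (fun y : ℝ => 2*y/a) (2/a) u := by
    have := ((hasDerivAt_id u).const_mul (2:ℝ)).div_const a
    simpa using this
  have := (l3.sub l4).add_const (1/a^2)
  refine this.congr_deriv ?_
  ring

/-- key algebraic identity: `-(Phi' u)/4 = u + (a/2) * Phi u`. -/
lemma Phi_deriv_identity {a b₁ : ℝ} (ha : 0 < a) (u : ℝ) :
    -(-2*a*Cc a b₁*Real.exp (-(2*a*u)) - 2/a)/4 = u + a/2 * Phi a b₁ u := by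
  unfold Phi
  have ha' : a ≠ 0 := ne_of_gt ha
  field_simp
  ring

lemma continuous_Phi (a b₁ : ℝ) : Continuous (Phi a b₁) := by
  unfold Phi Cc; continuity

lemma strictConcaveOn_Phi {a b₁ b₂ : ℝ} (hb₂ : 0 < b₂) (ha : 0 < a)
    (hroot : Dfun b₁ b₂ a = 0) : StrictConcaveOn ℝ univ (Phi a b₁) := by
  apply strictConcaveOn_of_deriv2_neg convex_univ (continuous_Phi a b₁).continuousOn
  intro u _
  have hd1 : deriv (Phi a b₁) = fun u => -2*a*Cc a b₁*Real.exp (-(2*a*u)) - 2/a :=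
    funext fun u => (hasDerivAt_Phi ha u).deriv
  have hd2 : HasDerivAt (fun u : ℝ => -2*a*Cc a b₁*Real.exp (-(2*a*u)) - 2/a)
      (4*a^2*Cc a b₁*Real.exp (-(2*a*u))) u := by
    have l1 : HasDerivAt (fun y : ℝ => 2*a*y) (2*a) u := by
      simpa using (hasDerivAt_id u).const_mul (2*a)
    have l3 : HasDerivAt (fun y : ℝ => Real.exp (-(2*a*y)))
        (Real.exp (-(2*a*u)) * (-(2*a))) u := (l1.neg).exp
    have := (l3.const_mul (-2*a*Cc a b₁)).sub_const (2/a)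
    refine this.congr_deriv ?_
    ring
  have : deriv^[2] (Phi a b₁) u = 4*a^2*Cc a b₁*Real.exp (-(2*a*u)) := by
    rw [show deriv^[2] (Phi a b₁) = deriv (deriv (Phi a b₁)) from rfl, hd1, hd2.deriv]
  rw [this]
  have hC := Cc_neg hb₂ ha hroot
  apply mul_neg_of_neg_of_pos _ (Real.exp_pos _)
  exact mul_neg_of_pos_of_neg (by positivity) hC

lemma Phi_pos {a b₁ b₂ : ℝ} (hb₁ : 0 < b₁) (hb₂ : 0 < b₂) (ha : 0 < a)
    (hroot : Dfun b₁ b₂ a = 0) : ∀ u ∈ Ioo (-b₂) b₁, 0 < Phi a b₁ u := by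
  intro u hu
  have hconc := strictConcaveOn_Phi (b₁ := b₁) hb₂ ha hroot
  set t : ℝ := (b₁ - u)/(b₁ + b₂) with htdef
  have hden : 0 < b₁ + b₂ := by linarith
  have ht0 : 0 < t := div_pos (by linarith [hu.2]) hden
  have ht1 : t < 1 := by
    rw [div_lt_one hden]; linarith [hu.1]
  have hcomb : t • (-b₂) + (1-t) • b₁ = u := by
    simp only [smul_eq_mul]
    rw [htdef]
    field_simp
    ring
  have hne : (-b₂ : ℝ) ≠ b₁ := by linarith
  have key := hconc.2 (mem_univ (-b₂)) (mem_univ b₁) hne (show (0:ℝ) < t from ht0)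
    (show (0:ℝ) < 1 - t by linarith) (show t + (1-t) = 1 by ring)
  rw [hcomb, Phi_b₁ ha, Phi_negb₂ ha hroot] at key
  simpa using key


/-! ### Stage B: the desingularized integrand -/

def mm (b₁ b₂ : ℝ) : ℝ := (b₁ - b₂)/2
def RR (b₁ b₂ : ℝ) : ℝ := (b₁ + b₂)/2

def Gfun (a b₁ b₂ : ℝ) (u : ℝ) : ℝ := Phi a b₁ u / ((b₁ - u) * (u + b₂))

def Wfun (a b₁ b₂ : ℝ) (θ : ℝ) : ℝ :=
  2 / Real.sqrt (Gfun a b₁ b₂ (mm b₁ b₂ + RR b₁ b₂ * Real.sin θ))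

def gmin (a b₁ b₂ : ℝ) : ℝ := Phi a b₁ (mm b₁ b₂) / (2*(RR b₁ b₂)^2)

section Stage2

variable {a b₁ b₂ : ℝ}

lemma RR_pos (hb₁ : 0 < b₁) (hb₂ : 0 < b₂) : 0 < RR b₁ b₂ := by
  unfold RR; linarith

lemma mm_mem (hb₁ : 0 < b₁) (hb₂ : 0 < b₂) : mm b₁ b₂ ∈ Ioo (-b₂) b₁ := by
  unfold mm; constructor <;> [linarith; linarith]

lemma Phi_mm_pos (hb₁ : 0 < b₁) (hb₂ : 0 < b₂) (ha : 0 < a) (hroot : Dfun b₁ b₂ a = 0) :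
    0 < Phi a b₁ (mm b₁ b₂) :=
  Phi_pos hb₁ hb₂ ha hroot _ (mm_mem hb₁ hb₂)

lemma gmin_pos (hb₁ : 0 < b₁) (hb₂ : 0 < b₂) (ha : 0 < a) (hroot : Dfun b₁ b₂ a = 0) :
    0 < gmin a b₁ b₂ := by
  unfold gmin
  have := RR_pos hb₁ hb₂
  exact div_pos (Phi_mm_pos hb₁ hb₂ ha hroot) (by positivity)

/-- chord lower bound for the concave function `Phi`. -/
lemma Phi_chord (hb₁ : 0 < b₁) (hb₂ : 0 < b₂) (ha : 0 < a) (hroot : Dfun b₁ b₂ a = 0) :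
    ∀ u ∈ Ioo (-b₂) b₁,
      Phi a b₁ (mm b₁ b₂) * ((b₁ - u) * (u + b₂)) ≤ (2*(RR b₁ b₂)^2) * Phi a b₁ u := by
  intro u hu
  have hconc := (strictConcaveOn_Phi hb₂ ha hroot).concaveOn
  have hR : 0 < RR b₁ b₂ := RR_pos hb₁ hb₂
  have hPm : 0 < Phi a b₁ (mm b₁ b₂) := Phi_mm_pos hb₁ hb₂ ha hroot
  have hmmlt : -b₂ < mm b₁ b₂ := (mm_mem hb₁ hb₂).1
  have hmmlt' : mm b₁ b₂ < b₁ := (mm_mem hb₁ hb₂).2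
  rcases le_total u (mm b₁ b₂) with hcase | hcase
  · -- u between -b₂ and m
    set t : ℝ := (u + b₂)/(RR b₁ b₂) with htdef
    have ht0 : 0 < t := div_pos (by linarith [hu.1]) hR
    have ht1 : t ≤ 1 := by
      rw [div_le_one hR]
      unfold RR; unfold mm at hcase; linarith
    have hcomb : t • (mm b₁ b₂) + (1-t) • (-b₂) = u := by
      simp only [smul_eq_mul]
      rw [htdef]
      unfold RR mm
      field_simp
      ring
    have key := hconc.2 (mem_univ (mm b₁ b₂)) (mem_univ (-b₂)) (show (0:ℝ) ≤ t from ht0.le)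
      (show (0:ℝ) ≤ 1 - t by linarith) (show t + (1-t) = 1 by ring)
    rw [hcomb, Phi_negb₂ ha hroot] at key
    simp only [smul_eq_mul, mul_zero, add_zero] at key
    -- key : t * Phi m ≤ Phi u
    have hPhiu : (u + b₂) * Phi a b₁ (mm b₁ b₂) ≤ RR b₁ b₂ * Phi a b₁ u := by
      rw [htdef] at key
      rw [div_mul_eq_mul_div, div_le_iff₀ hR] at key
      linarith [key]
    have hbu : b₁ - u ≤ 2 * RR b₁ b₂ := by unfold RR; linarith [hu.1]
    nlinarith [mul_le_mul_of_nonneg_left hPhiu (by linarith : (0:ℝ) ≤ 2*RR b₁ b₂),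
      mul_nonneg (mul_nonneg (by linarith [hu.1] : (0:ℝ) ≤ u + b₂) hPm.le)
        (by linarith : (0:ℝ) ≤ 2*RR b₁ b₂ - (b₁ - u))]
  · -- u between m and b₁
    set t : ℝ := (b₁ - u)/(RR b₁ b₂) with htdef
    have ht0 : 0 < t := div_pos (by linarith [hu.2]) hR
    have ht1 : t ≤ 1 := by
      rw [div_le_one hR]
      unfold RR; unfold mm at hcase; linarith
    have hcomb : t • (mm b₁ b₂) + (1-t) • b₁ = u := by
      simp only [smul_eq_mul]
      rw [htdef]
      unfold RR mm
      field_simp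
      ring
    have key := hconc.2 (mem_univ (mm b₁ b₂)) (mem_univ b₁) (show (0:ℝ) ≤ t from ht0.le)
      (show (0:ℝ) ≤ 1 - t by linarith) (show t + (1-t) = 1 by ring)
    rw [hcomb, Phi_b₁ ha] at key
    simp only [smul_eq_mul, mul_zero, add_zero] at key
    have hPhiu : (b₁ - u) * Phi a b₁ (mm b₁ b₂) ≤ RR b₁ b₂ * Phi a b₁ u := by
      rw [htdef] at key
      rw [div_mul_eq_mul_div, div_le_iff₀ hR] at key
      linarith [key]
    have hbu : u + b₂ ≤ 2 * RR b₁ b₂ := by unfold RR; linarith [hu.2]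
    nlinarith [mul_le_mul_of_nonneg_left hPhiu (by linarith : (0:ℝ) ≤ 2*RR b₁ b₂),
      mul_nonneg (mul_nonneg (by linarith [hu.2] : (0:ℝ) ≤ b₁ - u) hPm.le)
        (by linarith : (0:ℝ) ≤ 2*RR b₁ b₂ - (u + b₂))]

lemma Gfun_pos (hb₁ : 0 < b₁) (hb₂ : 0 < b₂) (ha : 0 < a) (hroot : Dfun b₁ b₂ a = 0) :
    ∀ u ∈ Ioo (-b₂) b₁, 0 < Gfun a b₁ b₂ u := by
  intro u hu
  have hden : 0 < (b₁ - u) * (u + b₂) :=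
    mul_pos (by linarith [hu.2]) (by linarith [hu.1])
  exact div_pos (Phi_pos hb₁ hb₂ ha hroot u hu) hden

lemma Gfun_ge (hb₁ : 0 < b₁) (hb₂ : 0 < b₂) (ha : 0 < a) (hroot : Dfun b₁ b₂ a = 0) :
    ∀ u ∈ Ioo (-b₂) b₁, gmin a b₁ b₂ ≤ Gfun a b₁ b₂ u := by
  intro u hu
  have hden : 0 < (b₁ - u) * (u + b₂) :=
    mul_pos (by linarith [hu.2]) (by linarith [hu.1])
  have hR : 0 < RR b₁ b₂ := RR_pos hb₁ hb₂
  unfold Gfun gmin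
  rw [div_le_div_iff₀ (by positivity) hden]
  calc Phi a b₁ (mm b₁ b₂) * ((b₁ - u) * (u + b₂))
      ≤ (2*(RR b₁ b₂)^2) * Phi a b₁ u := Phi_chord hb₁ hb₂ ha hroot u hu
    _ = Phi a b₁ u * (2*(RR b₁ b₂)^2) := by ring

/-- the point on the circle -/
lemma utheta_mem (hb₁ : 0 < b₁) (hb₂ : 0 < b₂) {θ : ℝ} (hθ : θ ∈ Ioo (-(π/2)) (π/2)) :
    mm b₁ b₂ + RR b₁ b₂ * Real.sin θ ∈ Ioo (-b₂) b₁ := by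
  have hR : 0 < RR b₁ b₂ := RR_pos hb₁ hb₂
  have hmem : θ ∈ Icc (-(π/2)) (π/2) := Ioo_subset_Icc_self hθ
  have h1 : Real.sin θ < 1 := by
    rw [← Real.sin_pi_div_two]
    exact Real.strictMonoOn_sin hmem (right_mem_Icc.2 (by linarith [Real.pi_pos])) hθ.2
  have h2 : -1 < Real.sin θ := by
    have : Real.sin (-(π/2)) = -1 := by simp
    rw [← this]
    exact Real.strictMonoOn_sin (left_mem_Icc.2 (by linarith [Real.pi_pos])) hmem hθ.1
  constructor
  · unfold mm RR at *; nlinarith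
  · unfold mm RR at *; nlinarith

lemma Wfun_nonneg (θ : ℝ) : 0 ≤ Wfun a b₁ b₂ θ :=
  div_nonneg (by norm_num) (Real.sqrt_nonneg _)

lemma Wfun_pos (hb₁ : 0 < b₁) (hb₂ : 0 < b₂) (ha : 0 < a) (hroot : Dfun b₁ b₂ a = 0)
    {θ : ℝ} (hθ : θ ∈ Ioo (-(π/2)) (π/2)) : 0 < Wfun a b₁ b₂ θ := by
  have := Gfun_pos hb₁ hb₂ ha hroot _ (utheta_mem hb₁ hb₂ hθ)
  unfold Wfun
  positivity

lemma Wfun_le (hb₁ : 0 < b₁) (hb₂ : 0 < b₂) (ha : 0 < a) (hroot : Dfun b₁ b₂ a = 0)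
    {θ : ℝ} (hθ : θ ∈ Icc (-(π/2)) (π/2)) :
    Wfun a b₁ b₂ θ ≤ 2 / Real.sqrt (gmin a b₁ b₂) := by
  have hg := gmin_pos hb₁ hb₂ ha hroot
  rcases eq_or_lt_of_le hθ.1 with hL | hL
  · -- θ = -π/2 : W = 0
    have hs : Real.sin θ = -1 := by rw [← hL]; simp
    have hzero : Gfun a b₁ b₂ (mm b₁ b₂ + RR b₁ b₂ * Real.sin θ) = 0 := by
      unfold Gfun
      have : mm b₁ b₂ + RR b₁ b₂ * Real.sin θ + b₂ = 0 := by
        rw [hs]; unfold mm RR; ring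
      rw [this, mul_zero, div_zero]
    unfold Wfun
    rw [hzero, Real.sqrt_zero, div_zero]
    positivity
  rcases eq_or_lt_of_le hθ.2 with hU | hU
  · -- θ = π/2 : W = 0
    have hs : Real.sin θ = 1 := by rw [hU]; simp
    have hzero : Gfun a b₁ b₂ (mm b₁ b₂ + RR b₁ b₂ * Real.sin θ) = 0 := by
      unfold Gfun
      have : b₁ - (mm b₁ b₂ + RR b₁ b₂ * Real.sin θ) = 0 := by
        rw [hs]; unfold mm RR; ring
      rw [this, zero_mul, div_zero]
    unfold Wfun
    rw [hzero, Real.sqrt_zero, div_zero]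
    positivity
  · -- interior
    have hG := Gfun_ge hb₁ hb₂ ha hroot _ (utheta_mem hb₁ hb₂ ⟨hL, hU⟩)
    have h1 : Real.sqrt (gmin a b₁ b₂) ≤ Real.sqrt (Gfun a b₁ b₂ (mm b₁ b₂ + RR b₁ b₂ * Real.sin θ)) :=
      Real.sqrt_le_sqrt hG
    have h2 : 0 < Real.sqrt (gmin a b₁ b₂) := Real.sqrt_pos.2 hg
    exact div_le_div_of_nonneg_left (by norm_num) h2 h1

lemma measurable_Wfun : Measurable (Wfun a b₁ b₂) := by
  have hG : Measurable (Gfun a b₁ b₂) :=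
    (continuous_Phi a b₁).measurable.div
      ((continuous_const.sub continuous_id).mul (continuous_id.add continuous_const)).measurable
  have hmap : Measurable (fun θ : ℝ => mm b₁ b₂ + RR b₁ b₂ * Real.sin θ) :=
    (continuous_const.add (continuous_const.mul Real.continuous_sin)).measurable
  exact measurable_const.div ((hG.comp hmap).sqrt)

lemma Wfun_integrableOn (hb₁ : 0 < b₁) (hb₂ : 0 < b₂) (ha : 0 < a)
    (hroot : Dfun b₁ b₂ a = 0) :
    MeasureTheory.IntegrableOn (Wfun a b₁ b₂) (Icc (-(π/2)) (π/2)) := by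
  apply MeasureTheory.Measure.integrableOn_of_bounded (M := 2 / Real.sqrt (gmin a b₁ b₂))
  · exact (measure_Icc_lt_top).ne
  · exact measurable_Wfun.aestronglyMeasurable
  · rw [MeasureTheory.ae_restrict_iff' measurableSet_Icc]
    refine MeasureTheory.ae_of_all _ fun θ hθ => ?_
    rw [Real.norm_eq_abs, abs_of_nonneg (Wfun_nonneg θ)]
    exact Wfun_le hb₁ hb₂ ha hroot hθ

lemma Wfun_intervalIntegrable (hb₁ : 0 < b₁) (hb₂ : 0 < b₂) (ha : 0 < a)
    (hroot : Dfun b₁ b₂ a = 0) {s t : ℝ} (hs : s ∈ Icc (-(π/2)) (π/2))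
    (ht : t ∈ Icc (-(π/2)) (π/2)) :
    IntervalIntegrable (Wfun a b₁ b₂) MeasureTheory.volume s t := by
  have hsub : Set.uIoc s t ⊆ Icc (-(π/2)) (π/2) :=
    subset_trans uIoc_subset_uIcc (uIcc_subset_Icc hs ht)
  have h2 : MeasureTheory.IntegrableOn (Wfun a b₁ b₂) (Set.uIoc s t) MeasureTheory.volume :=
    (Wfun_integrableOn hb₁ hb₂ ha hroot).mono_set hsub
  exact intervalIntegrable_iff.2 h2

end Stage2

/-! ### Stage C: the time variable as a function of the angle -/

def tau (a b₁ b₂ : ℝ) (θ : ℝ) : ℝ := ∫ s in θ..(π/2), Wfun a b₁ b₂ s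

def Alen (a b₁ b₂ : ℝ) : ℝ := tau a b₁ b₂ (-(π/2))

def clamp (θ : ℝ) : ℝ := max (-(π/2)) (min (π/2) θ)

def taut (a b₁ b₂ : ℝ) (θ : ℝ) : ℝ := tau a b₁ b₂ (clamp θ) + (clamp θ - θ)

section Stage3

variable {a b₁ b₂ : ℝ}

lemma pihalf_mem_right : (π/2 : ℝ) ∈ Icc (-(π/2)) (π/2) :=
  right_mem_Icc.2 (by linarith [Real.pi_pos])

lemma pihalf_mem_left : (-(π/2) : ℝ) ∈ Icc (-(π/2)) (π/2) :=
  left_mem_Icc.2 (by linarith [Real.pi_pos])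

lemma tau_pi_div_two : tau a b₁ b₂ (π/2) = 0 := intervalIntegral.integral_same

lemma tau_sub (hb₁ : 0 < b₁) (hb₂ : 0 < b₂) (ha : 0 < a) (hroot : Dfun b₁ b₂ a = 0)
    {s t : ℝ} (hs : s ∈ Icc (-(π/2)) (π/2)) (ht : t ∈ Icc (-(π/2)) (π/2)) :
    (∫ x in s..t, Wfun a b₁ b₂ x) + tau a b₁ b₂ t = tau a b₁ b₂ s :=
  intervalIntegral.integral_add_adjacent_intervals
    (Wfun_intervalIntegrable hb₁ hb₂ ha hroot hs ht)
    (Wfun_intervalIntegrable hb₁ hb₂ ha hroot ht pihalf_mem_right)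

lemma tau_strictAntiOn (hb₁ : 0 < b₁) (hb₂ : 0 < b₂) (ha : 0 < a)
    (hroot : Dfun b₁ b₂ a = 0) : StrictAntiOn (tau a b₁ b₂) (Icc (-(π/2)) (π/2)) := by
  intro s hs t ht hst
  have hpos : 0 < ∫ x in s..t, Wfun a b₁ b₂ x := by
    apply intervalIntegral.intervalIntegral_pos_of_pos_on
      (Wfun_intervalIntegrable hb₁ hb₂ ha hroot hs ht)
    · intro x hx
      exact Wfun_pos hb₁ hb₂ ha hroot ⟨lt_of_le_of_lt hs.1 hx.1, lt_of_lt_of_le hx.2 ht.2⟩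
    · exact hst
  have := tau_sub hb₁ hb₂ ha hroot hs ht
  linarith

lemma tau_nonneg (hb₁ : 0 < b₁) (hb₂ : 0 < b₂) (ha : 0 < a) (hroot : Dfun b₁ b₂ a = 0)
    {t : ℝ} (ht : t ∈ Icc (-(π/2)) (π/2)) : 0 ≤ tau a b₁ b₂ t := by
  rcases eq_or_lt_of_le ht.2 with h | h
  · rw [h, tau_pi_div_two]
  · have := tau_strictAntiOn hb₁ hb₂ ha hroot ht pihalf_mem_right h
    rw [tau_pi_div_two] at this
    linarith

lemma tau_le_Alen (hb₁ : 0 < b₁) (hb₂ : 0 < b₂) (ha : 0 < a) (hroot : Dfun b₁ b₂ a = 0)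
    {t : ℝ} (ht : t ∈ Icc (-(π/2)) (π/2)) : tau a b₁ b₂ t ≤ Alen a b₁ b₂ := by
  rcases eq_or_lt_of_le ht.1 with h | h
  · rw [← h]; rfl
  · exact (tau_strictAntiOn hb₁ hb₂ ha hroot pihalf_mem_left ht h).le

lemma Alen_pos (hb₁ : 0 < b₁) (hb₂ : 0 < b₂) (ha : 0 < a) (hroot : Dfun b₁ b₂ a = 0) :
    0 < Alen a b₁ b₂ := by
  have h := tau_strictAntiOn hb₁ hb₂ ha hroot pihalf_mem_left pihalf_mem_right
    (by linarith [Real.pi_pos])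
  rw [tau_pi_div_two] at h
  exact h

lemma tau_continuousOn (hb₁ : 0 < b₁) (hb₂ : 0 < b₂) (ha : 0 < a)
    (hroot : Dfun b₁ b₂ a = 0) : ContinuousOn (tau a b₁ b₂) (Icc (-(π/2)) (π/2)) := by
  have h := intervalIntegral.continuousOn_primitive_interval_left
    (f := Wfun a b₁ b₂) (a := -(π/2)) (b := π/2) (μ := MeasureTheory.volume) ?_
  · have huIcc : uIcc (-(π/2)) (π/2) = Icc (-(π/2)) (π/2) :=
      uIcc_of_le (by linarith [Real.pi_pos])
    rw [huIcc] at h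
    exact h
  · rw [uIcc_of_le (by linarith [Real.pi_pos] : -(π/2) ≤ (π/2:ℝ))]
    exact Wfun_integrableOn hb₁ hb₂ ha hroot

lemma tau_hasDerivAt (hb₁ : 0 < b₁) (hb₂ : 0 < b₂) (ha : 0 < a)
    (hroot : Dfun b₁ b₂ a = 0) {θ : ℝ} (hθ : θ ∈ Ioo (-(π/2)) (π/2)) :
    HasDerivAt (tau a b₁ b₂) (-(Wfun a b₁ b₂ θ)) θ := by
  have hint := Wfun_intervalIntegrable hb₁ hb₂ ha hroot (Ioo_subset_Icc_self hθ)
    pihalf_mem_right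
  have hmeas : StronglyMeasurableAtFilter (Wfun a b₁ b₂) (nhds θ) MeasureTheory.volume :=
    measurable_Wfun.aestronglyMeasurable.stronglyMeasurableAtFilter
  have hWcont : ContinuousAt (Wfun a b₁ b₂) θ := by
    have humem := utheta_mem hb₁ hb₂ hθ
    have hu : ContinuousAt (fun θ : ℝ => mm b₁ b₂ + RR b₁ b₂ * Real.sin θ) θ := by fun_prop
    have hden : ((b₁ - (mm b₁ b₂ + RR b₁ b₂ * Real.sin θ)) *
        ((mm b₁ b₂ + RR b₁ b₂ * Real.sin θ) + b₂)) ≠ 0 := by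
      have h1 : 0 < b₁ - (mm b₁ b₂ + RR b₁ b₂ * Real.sin θ) := by linarith [humem.2]
      have h2 : 0 < (mm b₁ b₂ + RR b₁ b₂ * Real.sin θ) + b₂ := by linarith [humem.1]
      positivity
    have hG : ContinuousAt (Gfun a b₁ b₂) (mm b₁ b₂ + RR b₁ b₂ * Real.sin θ) := by
      apply ContinuousAt.div
      · exact (continuous_Phi a b₁).continuousAt
      · fun_prop
      · exact hden
    have hsq : ContinuousAt (fun u => Real.sqrt (Gfun a b₁ b₂ u))
        (mm b₁ b₂ + RR b₁ b₂ * Real.sin θ) := Real.continuous_sqrt.continuousAt.comp hG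
    have hcomp : ContinuousAt (fun θ : ℝ =>
        Real.sqrt (Gfun a b₁ b₂ (mm b₁ b₂ + RR b₁ b₂ * Real.sin θ))) θ :=
      ContinuousAt.comp (f := fun θ : ℝ => mm b₁ b₂ + RR b₁ b₂ * Real.sin θ) hsq hu
    have hne : Real.sqrt (Gfun a b₁ b₂ (mm b₁ b₂ + RR b₁ b₂ * Real.sin θ)) ≠ 0 :=
      ne_of_gt (Real.sqrt_pos.2 (Gfun_pos hb₁ hb₂ ha hroot _ humem))
    exact continuousAt_const.div hcomp hne
  exact intervalIntegral.integral_hasDerivAt_left hint hmeas hWcont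

/-! clamp lemmas -/

lemma clamp_mem : ∀ θ : ℝ, clamp θ ∈ Icc (-(π/2)) (π/2) := by
  intro θ
  unfold clamp
  constructor
  · exact le_max_left _ _
  · exact max_le (by linarith [Real.pi_pos]) (min_le_left _ _)

lemma clamp_of_mem {θ : ℝ} (hθ : θ ∈ Icc (-(π/2)) (π/2)) : clamp θ = θ := by
  unfold clamp
  rw [min_eq_right hθ.2, max_eq_right hθ.1]

lemma clamp_of_le {θ : ℝ} (hθ : θ ≤ -(π/2)) : clamp θ = -(π/2) := by
  unfold clamp
  rw [min_eq_right (by linarith [Real.pi_pos] : θ ≤ (π/2:ℝ)), max_eq_left hθ]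

lemma clamp_of_ge {θ : ℝ} (hθ : (π/2:ℝ) ≤ θ) : clamp θ = π/2 := by
  unfold clamp
  rw [min_eq_left hθ, max_eq_right (by linarith [Real.pi_pos] : -(π/2:ℝ) ≤ π/2)]

lemma continuous_clamp : Continuous clamp :=
  continuous_const.max (continuous_const.min continuous_id)

lemma taut_eq {θ : ℝ} (hθ : θ ∈ Icc (-(π/2)) (π/2)) : taut a b₁ b₂ θ = tau a b₁ b₂ θ := by
  unfold taut
  rw [clamp_of_mem hθ]
  ring

lemma taut_continuous (hb₁ : 0 < b₁) (hb₂ : 0 < b₂) (ha : 0 < a)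
    (hroot : Dfun b₁ b₂ a = 0) : Continuous (taut a b₁ b₂) := by
  unfold taut
  apply Continuous.add
  · exact (tau_continuousOn hb₁ hb₂ ha hroot).comp_continuous continuous_clamp clamp_mem
  · exact continuous_clamp.sub continuous_id

lemma taut_strictAnti (hb₁ : 0 < b₁) (hb₂ : 0 < b₂) (ha : 0 < a)
    (hroot : Dfun b₁ b₂ a = 0) : StrictAnti (taut a b₁ b₂) := by
  have hπ : (0:ℝ) < π/2 := by linarith [Real.pi_pos]
  have hA := Alen_pos hb₁ hb₂ ha hroot
  intro s t hst
  show taut a b₁ b₂ t < taut a b₁ b₂ s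
  rcases lt_or_ge s (-(π/2)) with hsI | hsI
  · have hts : taut a b₁ b₂ s = Alen a b₁ b₂ + (-(π/2) - s) := by
      unfold taut; rw [clamp_of_le hsI.le]; rfl
    rcases lt_or_ge t (-(π/2)) with htI | htI
    · have htt : taut a b₁ b₂ t = Alen a b₁ b₂ + (-(π/2) - t) := by
        unfold taut; rw [clamp_of_le htI.le]; rfl
      rw [hts, htt]; linarith
    · rcases le_or_gt t (π/2) with htII | htIII
      · have htt : taut a b₁ b₂ t = tau a b₁ b₂ t := taut_eq ⟨htI, htII⟩
        have := tau_le_Alen hb₁ hb₂ ha hroot (⟨htI, htII⟩ : t ∈ Icc (-(π/2)) (π/2))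
        rw [hts, htt]; linarith
      · have htt : taut a b₁ b₂ t = π/2 - t := by
          unfold taut; rw [clamp_of_ge htIII.le, tau_pi_div_two]; ring
        rw [hts, htt]; linarith
  · rcases le_or_gt s (π/2) with hsII | hsIII
    · have hsmem : s ∈ Icc (-(π/2)) (π/2) := ⟨hsI, hsII⟩
      have hts : taut a b₁ b₂ s = tau a b₁ b₂ s := taut_eq hsmem
      rcases le_or_gt t (π/2) with htII | htIII
      · have htmem : t ∈ Icc (-(π/2)) (π/2) := ⟨le_trans hsI hst.le, htII⟩
        have htt : taut a b₁ b₂ t = tau a b₁ b₂ t := taut_eq htmem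
        rw [hts, htt]
        exact tau_strictAntiOn hb₁ hb₂ ha hroot hsmem htmem hst
      · have htt : taut a b₁ b₂ t = π/2 - t := by
          unfold taut; rw [clamp_of_ge htIII.le, tau_pi_div_two]; ring
        have := tau_nonneg hb₁ hb₂ ha hroot hsmem
        rw [hts, htt]; linarith
    · have hts : taut a b₁ b₂ s = π/2 - s := by
        unfold taut; rw [clamp_of_ge hsIII.le, tau_pi_div_two]; ring
      have htt : taut a b₁ b₂ t = π/2 - t := by
        unfold taut; rw [clamp_of_ge (by linarith : (π/2:ℝ) ≤ t), tau_pi_div_two]; ring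
      rw [hts, htt]; linarith

lemma taut_surj_comp (hb₁ : 0 < b₁) (hb₂ : 0 < b₂) (ha : 0 < a)
    (hroot : Dfun b₁ b₂ a = 0) : Function.Surjective (fun x : ℝ => taut a b₁ b₂ (-x)) := by
  have hπ : (0:ℝ) < π/2 := by linarith [Real.pi_pos]
  have hcont : Continuous (fun x : ℝ => taut a b₁ b₂ (-x)) :=
    (taut_continuous hb₁ hb₂ ha hroot).comp continuous_neg
  apply hcont.surjective
  · -- tendsto atTop atTop
    apply Filter.tendsto_atTop_mono' _ (show ∀ᶠ x in Filter.atTop,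
      Alen a b₁ b₂ + (-(π/2) + x) ≤ taut a b₁ b₂ (-x) from ?_)
    · exact Filter.tendsto_atTop_add_const_left _ _
        (Filter.tendsto_atTop_add_const_left _ _ Filter.tendsto_id)
    · filter_upwards [Filter.eventually_ge_atTop (π/2 : ℝ)] with x hx
      have : (-x) ≤ -(π/2) := by linarith
      unfold taut
      rw [clamp_of_le this]
      simp only [ge_iff_le]
      have : tau a b₁ b₂ (-(π / 2)) = Alen a b₁ b₂ := rfl
      rw [this]
      linarith
  · -- tendsto atBot atBot
    apply Filter.tendsto_atBot_mono' _ (show ∀ᶠ x in Filter.atBot,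
      taut a b₁ b₂ (-x) ≤ π/2 + x from ?_)
    · exact Filter.tendsto_atBot_add_const_left _ _ Filter.tendsto_id
    · filter_upwards [Filter.eventually_le_atBot (-(π/2) : ℝ)] with x hx
      have hge : (π/2:ℝ) ≤ -x := by linarith
      unfold taut
      rw [clamp_of_ge hge, tau_pi_div_two]
      linarith

end Stage3

/-! ### Stage D: construction of the solution -/

lemma solution_exists {a b₁ b₂ : ℝ} (hb₁ : 0 < b₁) (hb₂ : 0 < b₂) (ha : 0 < a)
    (hroot : Dfun b₁ b₂ a = 0) :
    ∃ (A : ℝ) (h h' h'' : ℝ → ℝ), 0 < A ∧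
      (∀ r ∈ Icc (0:ℝ) A, HasDerivWithinAt h (h' r) (Icc (0:ℝ) A) r) ∧
      (∀ r ∈ Icc (0:ℝ) A, HasDerivWithinAt h' (h'' r) (Icc (0:ℝ) A) r) ∧
      (∀ r ∈ Icc (0:ℝ) A, h'' r - a * h r * h' r + h r / 2 = 0) ∧
      (∀ r ∈ Ioo (0:ℝ) A, 0 < h r) ∧
      h 0 = 0 ∧ h A = 0 ∧ h' 0 = b₁ ∧ h' A = -b₂ := by
  have hπ : (0:ℝ) < π/2 := by linarith [Real.pi_pos]
  set A := Alen a b₁ b₂ with hAdef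
  have hApos : 0 < A := Alen_pos hb₁ hb₂ ha hroot
  -- the inverse function Θ of taut
  set g : ℝ → ℝ := fun x => taut a b₁ b₂ (-x) with hgdef
  have hgmono : StrictMono g := by
    intro u v huv
    exact taut_strictAnti hb₁ hb₂ ha hroot (by linarith : -v < -u)
  have hgsurj : Function.Surjective g := taut_surj_comp hb₁ hb₂ ha hroot
  set ee := StrictMono.orderIsoOfSurjective g hgmono hgsurj with heedef
  set Θ : ℝ → ℝ := fun r => -(ee.symm r) with hΘdef
  have htautΘ : ∀ r : ℝ, taut a b₁ b₂ (Θ r) = r := by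
    intro r
    show taut a b₁ b₂ (-(ee.symm r)) = r
    exact StrictMono.orderIsoOfSurjective_self_symm_apply g hgmono hgsurj r
  have hΘcont : Continuous Θ := (ee.symm.continuous).neg
  have hΘanti : StrictAnti Θ := by
    intro u v huv
    exact neg_lt_neg (ee.symm.strictMono huv)
  have htautinj : Function.Injective (taut a b₁ b₂) :=
    (taut_strictAnti hb₁ hb₂ ha hroot).injective
  have hΘ0 : Θ 0 = π/2 := by
    apply htautinj
    rw [htautΘ, taut_eq pihalf_mem_right, tau_pi_div_two]
  have hΘA : Θ A = -(π/2) := by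
    apply htautinj
    rw [htautΘ, taut_eq pihalf_mem_left]
    rfl
  have hΘmem : ∀ r ∈ Icc (0:ℝ) A, Θ r ∈ Icc (-(π/2)) (π/2) := by
    intro r hr
    constructor
    · rw [← hΘA]; exact hΘanti.antitone hr.2
    · rw [← hΘ0]; exact hΘanti.antitone hr.1
  have hΘmemO : ∀ r ∈ Ioo (0:ℝ) A, Θ r ∈ Ioo (-(π/2)) (π/2) := by
    intro r hr
    constructor
    · rw [← hΘA]; exact hΘanti hr.2
    · rw [← hΘ0]; exact hΘanti hr.1
  -- the profile functions
  set P : ℝ → ℝ := fun r => mm b₁ b₂ + RR b₁ b₂ * Real.sin (Θ r) with hPdef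
  set hf : ℝ → ℝ := fun r => Real.sqrt (Phi a b₁ (P r)) with hfdef
  set hf' : ℝ → ℝ := fun r => P r + a/2 * (hf r)^2 with hf'def
  set hf'' : ℝ → ℝ := fun r => a * hf r * hf' r - hf r / 2 with hf''def
  have hPcont : Continuous P := by
    apply continuous_const.add (continuous_const.mul (Real.continuous_sin.comp hΘcont))
  have hfcont : Continuous hf :=
    Real.continuous_sqrt.comp ((continuous_Phi a b₁).comp hPcont)
  have hf'cont : Continuous hf' :=
    hPcont.add (continuous_const.mul (hfcont.pow 2))
  have hf''cont : Continuous hf'' :=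
    ((continuous_const.mul hfcont).mul hf'cont).sub (hfcont.div_const 2)
  have hPmemO : ∀ r ∈ Ioo (0:ℝ) A, P r ∈ Ioo (-b₂) b₁ := fun r hr =>
    utheta_mem hb₁ hb₂ (hΘmemO r hr)
  -- endpoint values
  have hP0 : P 0 = b₁ := by
    show mm b₁ b₂ + RR b₁ b₂ * Real.sin (Θ 0) = b₁
    rw [hΘ0, Real.sin_pi_div_two, mul_one]
    unfold mm RR; ring
  have hPA : P A = -b₂ := by
    show mm b₁ b₂ + RR b₁ b₂ * Real.sin (Θ A) = -b₂
    rw [hΘA]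
    simp only [Real.sin_neg, Real.sin_pi_div_two]
    unfold mm RR; ring
  have hf0 : hf 0 = 0 := by
    show Real.sqrt (Phi a b₁ (P 0)) = 0
    rw [hP0, Phi_b₁ ha, Real.sqrt_zero]
  have hfA : hf A = 0 := by
    show Real.sqrt (Phi a b₁ (P A)) = 0
    rw [hPA, Phi_negb₂ ha hroot, Real.sqrt_zero]
  have hf'0 : hf' 0 = b₁ := by
    show P 0 + a/2 * (hf 0)^2 = b₁
    rw [hP0, hf0]; ring
  have hf'A : hf' A = -b₂ := by
    show P A + a/2 * (hf A)^2 = -b₂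
    rw [hPA, hfA]; ring
  have hfpos : ∀ r ∈ Ioo (0:ℝ) A, 0 < hf r := by
    intro r hr
    exact Real.sqrt_pos.2 (Phi_pos hb₁ hb₂ ha hroot _ (hPmemO r hr))
  -- interior derivatives
  have hInt : ∀ r ∈ Ioo (0:ℝ) A, HasDerivAt hf (hf' r) r ∧ HasDerivAt hf' (hf'' r) r := by
    intro r hr
    have hθr : Θ r ∈ Ioo (-(π/2)) (π/2) := hΘmemO r hr
    have hWpos : 0 < Wfun a b₁ b₂ (Θ r) := Wfun_pos hb₁ hb₂ ha hroot hθr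
    have hGpos : 0 < Gfun a b₁ b₂ (P r) := Gfun_pos hb₁ hb₂ ha hroot _ (hPmemO r hr)
    set sq : ℝ := Real.sqrt (Gfun a b₁ b₂ (P r)) with hsqdef
    have hsqpos : 0 < sq := Real.sqrt_pos.2 hGpos
    have hWval : Wfun a b₁ b₂ (Θ r) = 2 / sq := rfl
    -- derivative of taut at Θ r
    have hev : taut a b₁ b₂ =ᶠ[nhds (Θ r)] tau a b₁ b₂ :=
      Filter.eventuallyEq_of_mem (isOpen_Ioo.mem_nhds hθr)
        (fun θ hθ => taut_eq (Ioo_subset_Icc_self hθ))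
    have htaut_d : HasDerivAt (taut a b₁ b₂) (-(Wfun a b₁ b₂ (Θ r))) (Θ r) :=
      (tau_hasDerivAt hb₁ hb₂ ha hroot hθr).congr_of_eventuallyEq hev
    have hWne : -(Wfun a b₁ b₂ (Θ r)) ≠ 0 := neg_ne_zero.2 (ne_of_gt hWpos)
    have hΘd : HasDerivAt Θ (-(Wfun a b₁ b₂ (Θ r)))⁻¹ r :=
      HasDerivAt.of_local_left_inverse hΘcont.continuousAt htaut_d hWne
        (Filter.Eventually.of_forall htautΘ)
    have hinv : (-(Wfun a b₁ b₂ (Θ r)))⁻¹ = -(sq/2) := by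
      rw [hWval]
      field_simp
    have hΘd' : HasDerivAt Θ (-(sq/2)) r := hinv ▸ hΘd
    have hcos : 0 < Real.cos (Θ r) := Real.cos_pos_of_mem_Ioo hθr
    have hsin : HasDerivAt (fun r => Real.sin (Θ r)) (Real.cos (Θ r) * (-(sq/2))) r :=
      (Real.hasDerivAt_sin (Θ r)).comp r hΘd'
    have hPd : HasDerivAt P (RR b₁ b₂ * (Real.cos (Θ r) * (-(sq/2)))) r :=
      (hsin.const_mul (RR b₁ b₂)).const_add (mm b₁ b₂)
    -- √(Φ(P r)) = R cos(Θ r) √(G (P r))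
    have hden_pos : 0 < (b₁ - P r) * (P r + b₂) := by
      have := hPmemO r hr
      exact mul_pos (by linarith [this.2]) (by linarith [this.1])
    have hfactor : Phi a b₁ (P r) = (RR b₁ b₂ * Real.cos (Θ r))^2 * Gfun a b₁ b₂ (P r) := by
      have h1 : (b₁ - P r) * (P r + b₂) * Gfun a b₁ b₂ (P r) = Phi a b₁ (P r) := by
        unfold Gfun
        rw [mul_comm ((b₁ - P r) * (P r + b₂)) _, div_mul_cancel₀ _ (ne_of_gt hden_pos)]
      have h2 : (b₁ - P r) * (P r + b₂) = (RR b₁ b₂ * Real.cos (Θ r))^2 := by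
        show (b₁ - (mm b₁ b₂ + RR b₁ b₂ * Real.sin (Θ r))) *
          ((mm b₁ b₂ + RR b₁ b₂ * Real.sin (Θ r)) + b₂) = _
        have hpy := Real.sin_sq_add_cos_sq (Θ r)
        unfold mm RR
        linear_combination (-(((b₁+b₂)/2)^2)) * hpy
      rw [← h1, h2]
    have hsqrtPhi : hf r = RR b₁ b₂ * Real.cos (Θ r) * sq := by
      show Real.sqrt (Phi a b₁ (P r)) = _
      rw [hfactor, Real.sqrt_mul (sq_nonneg _), Real.sqrt_sq
        (mul_nonneg (RR_pos hb₁ hb₂).le hcos.le)]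
    have hPd' : HasDerivAt P (-(hf r/2)) r := by
      have : RR b₁ b₂ * (Real.cos (Θ r) * (-(sq/2))) = -(hf r/2) := by
        rw [hsqrtPhi]; ring
      rw [← this]
      exact hPd
    have hΦpos : 0 < Phi a b₁ (P r) := Phi_pos hb₁ hb₂ ha hroot _ (hPmemO r hr)
    have hΦPd : HasDerivAt (fun r => Phi a b₁ (P r))
        ((-2*a*Cc a b₁*Real.exp (-(2*a*(P r))) - 2/a) * (-(hf r/2))) r :=
      (hasDerivAt_Phi ha (P r)).comp r hPd'
    have hfrpos : 0 < hf r := hfpos r hr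
    have hfd : HasDerivAt hf (hf' r) r := by
      have hsqrtd : HasDerivAt Real.sqrt (1/(2*Real.sqrt (Phi a b₁ (P r)))) (Phi a b₁ (P r)) :=
        Real.hasDerivAt_sqrt (ne_of_gt hΦpos)
      have hcomp := hsqrtd.comp r hΦPd
      have hval : 1/(2*Real.sqrt (Phi a b₁ (P r))) *
          ((-2*a*Cc a b₁*Real.exp (-(2*a*(P r))) - 2/a) * (-(hf r/2))) = hf' r := by
        have hid := Phi_deriv_identity (b₁ := b₁) ha (P r)
        have hsq2 : (hf r)^2 = Phi a b₁ (P r) := Real.sq_sqrt hΦpos.le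
        have hhf : Real.sqrt (Phi a b₁ (P r)) = hf r := rfl
        rw [hhf]
        have : 1/(2*hf r) * ((-2*a*Cc a b₁*Real.exp (-(2*a*(P r))) - 2/a) * (-(hf r/2)))
            = -(-2*a*Cc a b₁*Real.exp (-(2*a*(P r))) - 2/a)/4 := by
          field_simp
          ring
        rw [this, hid]
        show P r + a/2 * Phi a b₁ (P r) = P r + a/2 * (hf r)^2
        rw [hsq2]
      rw [← hval]
      exact hcomp
    constructor
    · exact hfd
    · have hd := hPd'.add ((hfd.pow 2).const_mul (a/2))
      have : -(hf r/2) + a/2*((2:ℕ)*(hf r)^1*(hf' r)) = hf'' r := by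
        show _ = a * hf r * hf' r - hf r / 2
        push_cast
        ring
      rw [← this]
      exact hd
  -- assemble the HasDerivWithinAt statements
  have hdiff_hf : DifferentiableOn ℝ hf (Ioo (0:ℝ) A) := fun x hx =>
    ((hInt x hx).1).differentiableAt.differentiableWithinAt
  have hdiff_hf' : DifferentiableOn ℝ hf' (Ioo (0:ℝ) A) := fun x hx =>
    ((hInt x hx).2).differentiableAt.differentiableWithinAt
  have hIoo_mem_right : Ioo (0:ℝ) A ∈ nhdsWithin (0:ℝ) (Ioi 0) :=
    Ioo_mem_nhdsGT_of_mem (left_mem_Ico.2 hApos)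
  have hIoo_mem_left : Ioo (0:ℝ) A ∈ nhdsWithin A (Iio A) :=
    Ioo_mem_nhdsLT_of_mem (right_mem_Ioc.2 hApos)
  have hderiv_hf_ev : ∀ x ∈ Ioo (0:ℝ) A, deriv hf x = hf' x := fun x hx =>
    ((hInt x hx).1).deriv
  have hderiv_hf'_ev : ∀ x ∈ Ioo (0:ℝ) A, deriv hf' x = hf'' x := fun x hx =>
    ((hInt x hx).2).deriv
  have hd1 : ∀ r ∈ Icc (0:ℝ) A, HasDerivWithinAt hf (hf' r) (Icc (0:ℝ) A) r := by
    intro r hr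
    rcases eq_or_lt_of_le hr.1 with h0 | h0
    · -- r = 0
      subst h0
      apply HasDerivWithinAt.mono _ Icc_subset_Ici_self
      apply hasDerivWithinAt_Ici_of_tendsto_deriv hdiff_hf
        hfcont.continuousWithinAt hIoo_mem_right
      have hev : (fun x => deriv hf x) =ᶠ[nhdsWithin 0 (Ioi 0)] hf' :=
        Filter.eventuallyEq_of_mem hIoo_mem_right hderiv_hf_ev
      apply Filter.Tendsto.congr' hev.symm
      exact (hf'cont.tendsto 0).mono_left nhdsWithin_le_nhds
    rcases eq_or_lt_of_le hr.2 with hA' | hA'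
    · -- r = A
      subst hA'
      apply HasDerivWithinAt.mono _ Icc_subset_Iic_self
      apply hasDerivWithinAt_Iic_of_tendsto_deriv hdiff_hf
        hfcont.continuousWithinAt hIoo_mem_left
      have hev : (fun x => deriv hf x) =ᶠ[nhdsWithin A (Iio A)] hf' :=
        Filter.eventuallyEq_of_mem hIoo_mem_left hderiv_hf_ev
      apply Filter.Tendsto.congr' hev.symm
      exact (hf'cont.tendsto A).mono_left nhdsWithin_le_nhds
    · exact ((hInt r ⟨h0, hA'⟩).1).hasDerivWithinAt
  have hd2 : ∀ r ∈ Icc (0:ℝ) A, HasDerivWithinAt hf' (hf'' r) (Icc (0:ℝ) A) r := by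
    intro r hr
    rcases eq_or_lt_of_le hr.1 with h0 | h0
    · subst h0
      apply HasDerivWithinAt.mono _ Icc_subset_Ici_self
      apply hasDerivWithinAt_Ici_of_tendsto_deriv hdiff_hf'
        hf'cont.continuousWithinAt hIoo_mem_right
      have hev : (fun x => deriv hf' x) =ᶠ[nhdsWithin 0 (Ioi 0)] hf'' :=
        Filter.eventuallyEq_of_mem hIoo_mem_right hderiv_hf'_ev
      apply Filter.Tendsto.congr' hev.symm
      exact (hf''cont.tendsto 0).mono_left nhdsWithin_le_nhds
    rcases eq_or_lt_of_le hr.2 with hA' | hA'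
    · subst hA'
      apply HasDerivWithinAt.mono _ Icc_subset_Iic_self
      apply hasDerivWithinAt_Iic_of_tendsto_deriv hdiff_hf'
        hf'cont.continuousWithinAt hIoo_mem_left
      have hev : (fun x => deriv hf' x) =ᶠ[nhdsWithin A (Iio A)] hf'' :=
        Filter.eventuallyEq_of_mem hIoo_mem_left hderiv_hf'_ev
      apply Filter.Tendsto.congr' hev.symm
      exact (hf''cont.tendsto A).mono_left nhdsWithin_le_nhds
    · exact ((hInt r ⟨h0, hA'⟩).2).hasDerivWithinAt
  refine ⟨A, hf, hf', hf'', hApos, hd1, hd2, ?_, hfpos, hf0, hfA, hf'0, hf'A⟩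
  intro r _
  show (a * hf r * hf' r - hf r / 2) - a * hf r * hf' r + hf r / 2 = 0
  ring

end FootballAux

end

/-- Existence and uniqueness of the football soliton parameter: for `0 < α₁ < α₂`
there is a unique `a > 0` for which the shrinking soliton ODE
`h'' − a·h·h' + h/2 = 0` has a solution on `[0, A]`, positive on `(0, A)`, with
`h(0) = h(A) = 0`, `h'(0) = α₁/(2π)` and `h'(A) = −α₂/(2π)`. -/
theorem football_soliton_exists_unique (α₁ α₂ : ℝ) (h1 : 0 < α₁) (h2 : α₁ < α₂) :
    ∃! a : ℝ, 0 < a ∧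
      ∃ (A : ℝ) (h h' h'' : ℝ → ℝ), 0 < A ∧
        (∀ r ∈ Set.Icc (0 : ℝ) A, HasDerivWithinAt h (h' r) (Set.Icc (0 : ℝ) A) r) ∧
        (∀ r ∈ Set.Icc (0 : ℝ) A, HasDerivWithinAt h' (h'' r) (Set.Icc (0 : ℝ) A) r) ∧
        (∀ r ∈ Set.Icc (0 : ℝ) A, h'' r - a * h r * h' r + h r / 2 = 0) ∧
        (∀ r ∈ Set.Ioo (0 : ℝ) A, 0 < h r) ∧
        h 0 = 0 ∧ h A = 0 ∧
        h' 0 = α₁ / (2 * Real.pi) ∧ h' A = -α₂ / (2 * Real.pi) := by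
  classical
  have hπ := Real.pi_pos
  set b₁ : ℝ := α₁ / (2 * Real.pi) with hb₁def
  set b₂ : ℝ := α₂ / (2 * Real.pi) with hb₂def
  have hb₁ : 0 < b₁ := div_pos h1 (by positivity)
  have hblt : b₁ < b₂ := by
    rw [hb₁def, hb₂def]
    gcongr
  have hb₂ : 0 < b₂ := lt_trans hb₁ hblt
  obtain ⟨a₀, ha₀, hroot₀⟩ := FootballAux.Dfun_root_exists hb₁ hblt
  have hneg : -α₂ / (2 * Real.pi) = -b₂ := by rw [hb₂def, neg_div]
  refine ⟨a₀, ⟨ha₀, ?_⟩, ?_⟩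
  · obtain ⟨A, h, h', h'', hApos, hd1, hd2, hode, hpos, h0, hA0, hb1', hb2'⟩ :=
      FootballAux.solution_exists hb₁ hb₂ ha₀ hroot₀
    exact ⟨A, h, h', h'', hApos, hd1, hd2, hode, hpos, h0, hA0, hb1',
      by rw [hb2', hneg]⟩
  · rintro y ⟨hy, A, h, h', h'', hApos, hd1, hd2, hode, hpos, h0, hA0, hb1', hb2'⟩
    have hD : FootballAux.Dfun b₁ b₂ y = 0 :=
      FootballAux.root_of_solution hApos hd1 hd2 hode h0 hA0 hb1' (by rw [hb2', hneg])
    exact FootballAux.Dfun_root_unique hb₁ hb₂ hy ha₀ hD hroot₀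
end

section
/- Let a, ε ∈ ℝ and A > 0, and let h : [0, A] → ℝ be twice continuously differentiable with h(0) = h(A) = 0, h'(0) = −h'(A) ≠ 0, h(r) > 0 for all r ∈ (0, A), and h''(r) − a·h(r)·h'(r) − (ε/2)·h(r) = 0 for all r ∈ [0, A]. Then a = 0. -/
open Set MeasureTheory intervalIntegral Filter

/-- A closed rotationally symmetric soliton with two equal cone angles has `a = 0`:
if `h` solves `h'' − a·h·h' − (ε/2)·h = 0` on `[0, A]` with `h(0) = h(A) = 0`,
`h'(0) = −h'(A) ≠ 0` and `h > 0` on `(0, A)`, then `a = 0`. -/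
theorem closed_equal_angles_soliton_a_eq_zero
    (a ε A : ℝ) (hA : 0 < A) (h h' h'' : ℝ → ℝ)
    (hd1 : ∀ r ∈ Set.Icc (0 : ℝ) A, HasDerivWithinAt h (h' r) (Set.Icc (0 : ℝ) A) r)
    (hd2 : ∀ r ∈ Set.Icc (0 : ℝ) A, HasDerivWithinAt h' (h'' r) (Set.Icc (0 : ℝ) A) r)
    (hcont : ContinuousOn h'' (Set.Icc (0 : ℝ) A))
    (h0 : h 0 = 0) (hA0 : h A = 0)
    (hsym : h' 0 = -h' A) (hne : h' 0 ≠ 0)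
    (hpos : ∀ r ∈ Set.Ioo (0 : ℝ) A, 0 < h r)
    (hode : ∀ r ∈ Set.Icc (0 : ℝ) A, h'' r - a * h r * h' r - ε / 2 * h r = 0) :
    a = 0 := by
  by_contra ha
  -- continuity facts
  have hch : ContinuousOn h (Icc 0 A) := fun x hx => (hd1 x hx).continuousWithinAt
  have hch' : ContinuousOn h' (Icc 0 A) := fun x hx => (hd2 x hx).continuousWithinAt
  -- the nonnegative integrand f = h * h'^2
  set f : ℝ → ℝ := fun r => h r * (h' r) ^ 2 with hf
  have hcf : ContinuousOn f (Icc 0 A) := hch.mul (hch'.pow 2)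
  have hfint : IntervalIntegrable f volume 0 A := hcf.intervalIntegrable_of_Icc hA.le
  -- the energy Φ = h'^2/2 - (ε/4) h^2 has derivative a * f on (0,A)
  set Φ : ℝ → ℝ := fun r => (h' r) ^ 2 / 2 - ε / 4 * (h r) ^ 2 with hΦ
  have hcΦ : ContinuousOn Φ (Icc 0 A) :=
    ((hch'.pow 2).div_const 2).sub (continuousOn_const.mul (hch.pow 2))
  have hderivΦ : ∀ x ∈ Ioo (0 : ℝ) A, HasDerivWithinAt Φ (a * f x) (Ioi x) x := by
    intro x hx
    have hxI : x ∈ Icc (0 : ℝ) A := Ioo_subset_Icc_self hx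
    have hnb : Icc (0 : ℝ) A ∈ nhds x := Icc_mem_nhds hx.1 hx.2
    have hdh : HasDerivAt h (h' x) x := (hd1 x hxI).hasDerivAt hnb
    have hdh' : HasDerivAt h' (h'' x) x := (hd2 x hxI).hasDerivAt hnb
    have hstep : HasDerivAt Φ (h'' x * h' x - ε / 2 * (h x * h' x)) x := by
      have e1 : HasDerivAt (fun r => (h' r) ^ 2 / 2) (h'' x * h' x) x := by
        have := (hdh'.fun_pow 2).div_const 2
        exact this.congr_deriv (by ring)
      have e2 : HasDerivAt (fun r => ε / 4 * (h r) ^ 2) (ε / 2 * (h x * h' x)) x := by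
        have := (hdh.fun_pow 2).const_mul (ε / 4)
        exact this.congr_deriv (by ring)
      exact e1.sub e2
    have hode' := hode x hxI
    have : HasDerivAt Φ (a * f x) x := by
      convert hstep using 1
      have hx'' : h'' x = a * h x * h' x + ε / 2 * h x := by linarith
      rw [hf]; simp only []; rw [hx'']; ring
    exact this.hasDerivWithinAt
  -- FTC: a * ∫ f = Φ(A) - Φ(0) = 0
  have hint0 : a * ∫ x in (0:ℝ)..A, f x = 0 := by
    rw [← intervalIntegral.integral_const_mul,
      integral_eq_sub_of_hasDeriv_right_of_le hA.le hcΦ hderivΦ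
        (hfint.const_mul a)]
    have hsq : (h' A) ^ 2 = (h' 0) ^ 2 := by rw [hsym]; ring
    simp [hΦ, h0, hA0, hsq]
  have hintf : ∫ x in (0:ℝ)..A, f x = 0 := by
    rcases mul_eq_zero.mp hint0 with h1 | h1
    · exact absurd h1 ha
    · exact h1
  -- find a point c ∈ (0, A) where h' c ≠ 0, hence f c > 0
  have hhalf : 0 < h (A / 2) := hpos _ ⟨by linarith, by linarith⟩
  obtain ⟨c, hc, hc'⟩ : ∃ c ∈ Ioo (0 : ℝ) (A / 2),
      h' c = (h (A / 2) - h 0) / (A / 2 - 0) := by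
    apply exists_hasDerivAt_eq_slope h h' (by linarith)
    · exact hch.mono (Icc_subset_Icc le_rfl (by linarith))
    · intro x hx
      have hxI : x ∈ Icc (0 : ℝ) A := ⟨hx.1.le, by linarith [hx.2]⟩
      exact (hd1 x hxI).hasDerivAt (Icc_mem_nhds hx.1 (by linarith [hx.2]))
  have hcA : c ∈ Ioo (0 : ℝ) A := ⟨hc.1, by linarith [hc.2]⟩
  have hfc : 0 < f c := by
    have hh'c : h' c ≠ 0 := by
      rw [hc']
      exact ne_of_gt (div_pos (by linarith) (by linarith))
    have := hpos c hcA
    rw [hf]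
    positivity
  -- f is continuous at c, so f > 0 on a small interval around c
  have hfat : ContinuousAt f c :=
    (hcf c (Ioo_subset_Icc_self hcA)).continuousAt (Icc_mem_nhds hcA.1 hcA.2)
  have hev : ∀ᶠ x in nhds c, 0 < f x := hfat.eventually (eventually_gt_nhds hfc)
  obtain ⟨δ, hδ, hball⟩ := Metric.eventually_nhds_iff.mp hev
  set d : ℝ := min δ (min c (A - c)) with hd
  have hd0 : 0 < d := lt_min hδ (lt_min hcA.1 (by linarith [hcA.2]))
  have hsub : Ioo (c - d / 2) (c + d / 2) ⊆ Function.support f ∩ Ioc 0 A := by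
    intro x hx
    have hdist : dist x c < δ := by
      rw [Real.dist_eq, abs_lt]
      constructor
      · have := hx.1; have : d ≤ δ := min_le_left _ _; linarith [hx.1]
      · have : d ≤ δ := min_le_left _ _; linarith [hx.2]
    have hfx : 0 < f x := hball hdist
    refine ⟨ne_of_gt hfx, ?_, ?_⟩
    · have h1 : d ≤ c := le_trans (min_le_right _ _) (min_le_left _ _)
      linarith [hx.1]
    · have h2 : d ≤ A - c := le_trans (min_le_right _ _) (min_le_right _ _)
      linarith [hx.2]
  -- hence the integral of f is positive, contradiction
  have hnonneg : 0 ≤ᵐ[volume.restrict (Set.uIoc (0:ℝ) A)] f := by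
    rw [uIoc_of_le hA.le]
    refine ae_restrict_of_forall_mem measurableSet_Ioc ?_
    intro x hx
    rcases eq_or_lt_of_le hx.2 with hxA | hxA
    · rw [hf]; simp [hxA, hA0]
    · exact (mul_nonneg (hpos x ⟨hx.1, hxA⟩).le (sq_nonneg _))
  have hposint : 0 < ∫ x in (0:ℝ)..A, f x := by
    rw [integral_pos_iff_support_of_nonneg_ae' hnonneg hfint]
    refine ⟨hA, ?_⟩
    calc (0 : ENNReal) < volume (Ioo (c - d / 2) (c + d / 2)) := by
          rw [Real.volume_Ioo]
          simp only [ENNReal.ofReal_pos]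
          linarith
      _ ≤ volume (Function.support f ∩ Ioc 0 A) := measure_mono hsub
  rw [hintf] at hposint
  exact lt_irrefl 0 hposint
end

section
/- Let H, F : ℝ → ℝ be differentiable, nonconstant functions satisfying H'(r) = H(r)·F(r) − 2·H(r)² + 1/2 and F'(r) = 2·H(r)·F(r) − 2·H(r)² + 1/2 for all r ∈ ℝ, with H bounded on ℝ and H(r) → 1/2 as r → −∞. Then 0 < H(r) < 1/2 and −1/2 < F'(r) < 0 for all r ∈ ℝ. -/
open Filter

set_option maxHeartbeats 1000000

namespace CuspAux
open Set Topology



noncomputable def dH (H F : ℝ → ℝ) : ℝ → ℝ := fun r => H r * F r - 2 * H r ^ 2 + 1 / 2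
noncomputable def dF (H F : ℝ → ℝ) : ℝ → ℝ := fun r => 2 * H r * F r - 2 * H r ^ 2 + 1 / 2
noncomputable def dG (H F : ℝ → ℝ) : ℝ → ℝ :=
  fun r => 2 * dH H F r * F r + 2 * H r * dF H F r - 4 * H r * dH H F r

theorem hG (H F : ℝ → ℝ)
    (hH : ∀ r : ℝ, HasDerivAt H (dH H F r) r)
    (hF : ∀ r : ℝ, HasDerivAt F (dF H F r) r) (r : ℝ) :
    HasDerivAt (dF H F) (dG H F r) r := by
  have h1 := ((hH r).const_mul (2:ℝ)).mul (hF r)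
  have h2 := ((hH r).pow 2).const_mul (2:ℝ)
  have h3 := (h1.sub h2).add_const (1/2 : ℝ)
  refine h3.congr_deriv ?_
  simp only [dG, dH, dF]; push_cast; ring

/-- If `g` is negative on `[s, t)` and vanishes at `t`, the derivative at `t` is `≥ 0`. -/
theorem slope_le {g : ℝ → ℝ} {d t s : ℝ} (hg : HasDerivAt g d t) (h0 : g t = 0)
    (hst : s < t) (hneg : ∀ u, s ≤ u → u < t → g u < 0) : 0 ≤ d := by
  have hs : Tendsto (slope g t) (𝓝[<] t) (𝓝 d) :=
    (hasDerivAt_iff_tendsto_slope.mp hg).mono_left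
      (nhdsWithin_mono _ (fun x hx => ne_of_lt hx))
  refine ge_of_tendsto hs ?_
  filter_upwards [Ioo_mem_nhdsLT_of_mem (show t ∈ Ioc s t from ⟨hst, le_refl t⟩)] with u hu
  have hgu : g u < 0 := hneg u hu.1.le hu.2
  have hslope : slope g t u = g u / (u - t) := by
    rw [slope_def_field]; rw [h0]; ring
  rw [hslope]
  have h1 : u - t < 0 := by linarith [hu.2]
  exact le_of_lt (div_pos_of_neg_of_neg hgu h1)

/-- From positive derivative at a zero, `g` is positive just to the right. -/
theorem ev_right_pos {g : ℝ → ℝ} {d t : ℝ} (hg : HasDerivAt g d t) (h0 : g t = 0)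
    (hd : 0 < d) : ∀ᶠ u in 𝓝[>] t, 0 < g u := by
  have hs : Tendsto (slope g t) (𝓝[>] t) (𝓝 d) :=
    (hasDerivAt_iff_tendsto_slope.mp hg).mono_left
      (nhdsWithin_mono _ (fun x hx => ne_of_gt hx))
  have hev : ∀ᶠ u in 𝓝[>] t, 0 < slope g t u := hs.eventually (eventually_gt_nhds hd)
  filter_upwards [hev, self_mem_nhdsWithin] with u hu (hu2 : t < u)
  have : slope g t u = g u / (u - t) := by rw [slope_def_field]; rw [h0]; ring
  rw [this] at hu
  rcases div_pos_iff.mp hu with ⟨h2, _⟩ | ⟨_, h3⟩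
  · exact h2
  · linarith

/-- From negative derivative at a zero, `g` is positive just to the left. -/
theorem ev_left_pos {g : ℝ → ℝ} {d t : ℝ} (hg : HasDerivAt g d t) (h0 : g t = 0)
    (hd : d < 0) : ∀ᶠ u in 𝓝[<] t, 0 < g u := by
  have hs : Tendsto (slope g t) (𝓝[<] t) (𝓝 d) :=
    (hasDerivAt_iff_tendsto_slope.mp hg).mono_left
      (nhdsWithin_mono _ (fun x hx => ne_of_lt hx))
  have hev : ∀ᶠ u in 𝓝[<] t, slope g t u < 0 := hs.eventually (eventually_lt_nhds hd)
  filter_upwards [hev, self_mem_nhdsWithin] with u hu (hu2 : u < t)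
  have : slope g t u = g u / (u - t) := by rw [slope_def_field]; rw [h0]; ring
  rw [this] at hu
  rcases div_neg_iff.mp hu with ⟨_, h3⟩ | ⟨h2, _⟩
  · linarith
  · linarith



/-- If the solution hits the fixed point `(1/2, 0)`, then `H` is constant: contradiction. -/
theorem fix (H F : ℝ → ℝ)
    (hH : ∀ r : ℝ, HasDerivAt H (dH H F r) r)
    (hF : ∀ r : ℝ, HasDerivAt F (dF H F r) r)
    (hHnc : ∃ r s : ℝ, H r ≠ H s) (r₀ : ℝ) (h1 : H r₀ = 1/2) (h2 : F r₀ = 0) : False := by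
  obtain ⟨a0, b0, hne⟩ := hHnc
  suffices key : ∀ t : ℝ, H t = 1/2 by
    exact hne (by rw [key a0, key b0])
  intro t
  set W : ℝ → ℝ := fun x => (H x - 1/2)^2 + (F x)^2 with hWdef
  have hW : ∀ x : ℝ, HasDerivAt W (2*(H x - 1/2)*(dH H F x) + 2*(F x)*(dF H F x)) x := by
    intro x
    have hh := (((hH x).sub_const (1/2:ℝ)).pow 2).add ((hF x).pow 2)
    refine hh.congr_deriv ?_
    push_cast; ring
  have hW0 : W r₀ = 0 := by simp [hWdef, h1, h2]
  have hWnn : ∀ x, 0 ≤ W x := fun x => by positivity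
  set a : ℝ := min t r₀ - 1 with hadef
  set b : ℝ := max t r₀ + 1 with hbdef
  have hab : a ≤ b := by
    have := min_le_max (a := t) (b := r₀); simp only [hadef, hbdef]; linarith
  have hta : t ∈ Icc a b :=
    ⟨by simp only [hadef]; linarith [min_le_left t r₀],
     by simp only [hbdef]; linarith [le_max_left t r₀]⟩
  have hr₀ab : r₀ ∈ Icc a b :=
    ⟨by simp only [hadef]; linarith [min_le_right t r₀],
     by simp only [hbdef]; linarith [le_max_right t r₀]⟩
  have hHc : Continuous H := by
    rw [continuous_iff_continuousAt]; exact fun x => (hH x).differentiableAt.continuousAt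
  have hFc : Continuous F := by
    rw [continuous_iff_continuousAt]; exact fun x => (hF x).differentiableAt.continuousAt
  obtain ⟨C₁, hC₁⟩ :=
    (isCompact_Icc (a := a) (b := b)).exists_bound_of_continuousOn hHc.continuousOn
  obtain ⟨C₂, hC₂⟩ :=
    (isCompact_Icc (a := a) (b := b)).exists_bound_of_continuousOn hFc.continuousOn
  set B : ℝ := |C₁| + |C₂| + 2 with hBdef
  have hB1 : (1:ℝ) ≤ B := by
    have := abs_nonneg C₁; have := abs_nonneg C₂; simp only [hBdef]; linarith
  set K : ℝ := 18 * B with hKdef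
  -- pointwise differential inequality
  have hkey : ∀ x ∈ Icc a b,
      |2*(H x - 1/2)*(dH H F x) + 2*(F x)*(dF H F x)| ≤ K * W x := by
    intro x hx
    have hpB : |H x - 1/2| ≤ B := by
      have := hC₁ x hx
      have : |H x| ≤ C₁ := by simpa [Real.norm_eq_abs] using this
      have h' : |H x| ≤ |C₁| := le_trans this (le_abs_self C₁)
      have := abs_sub_abs_le_abs_sub (H x) (1/2 : ℝ)
      have habs : |H x - 1/2| ≤ |H x| + 1/2 := by
        calc |H x - 1/2| ≤ |H x| + |(1/2 : ℝ)| := abs_sub (H x) (1/2)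
        _ = |H x| + 1/2 := by norm_num
      have := abs_nonneg C₂
      simp only [hBdef]; linarith
    have hqB : |F x| ≤ B := by
      have := hC₂ x hx
      have h' : |F x| ≤ |C₂| := le_trans (by simpa [Real.norm_eq_abs] using this) (le_abs_self C₂)
      have := abs_nonneg C₁
      simp only [hBdef]; linarith
    set p : ℝ := H x - 1/2 with hpdef
    set q : ℝ := F x with hqdef
    have hp1 : -B ≤ p := neg_le_of_abs_le hpB
    have hp2 : p ≤ B := le_of_abs_le hpB
    have hq1 : -B ≤ q := neg_le_of_abs_le hqB
    have hq2 : q ≤ B := le_of_abs_le hqB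
    have hWx : W x = p^2 + q^2 := rfl
    have hval : 2*(H x - 1/2)*(dH H F x) + 2*(F x)*(dF H F x)
        = -2*p^2*q - 3*p*q - 4*p^3 - 4*p^2 + 4*p*q^2 + 2*q^2 := by
      simp only [dH, dF]
      have hHx : H x = p + 1/2 := by rw [hpdef]; ring
      rw [hHx, ← hqdef]; ring
    rw [hval, hWx, abs_le, hKdef]
    constructor
    · nlinarith [sq_nonneg (p - q),
        mul_nonneg (sq_nonneg p) (by linarith : (0:ℝ) ≤ B - q),
        mul_nonneg (sq_nonneg p) (by linarith : (0:ℝ) ≤ B - p),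
        mul_nonneg (sq_nonneg q) (by linarith : (0:ℝ) ≤ B + p),
        sq_nonneg p, sq_nonneg q]
    · nlinarith [sq_nonneg (p + q),
        mul_nonneg (sq_nonneg p) (by linarith : (0:ℝ) ≤ B + q),
        mul_nonneg (sq_nonneg p) (by linarith : (0:ℝ) ≤ B + p),
        mul_nonneg (sq_nonneg q) (by linarith : (0:ℝ) ≤ B - p),
        sq_nonneg p, sq_nonneg q]
  -- auxiliary exponentially weighted functions
  have hWc : Continuous W := by
    rw [continuous_iff_continuousAt]; exact fun x => (hW x).continuousAt
  have hWzero : ∀ x ∈ Icc a b, W x = 0 := by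
    intro x hx
    rcases le_total x r₀ with hx0 | hx0
    · -- backward: use exp (K * r) * W r monotone on [a, r₀]
      set g : ℝ → ℝ := fun r => Real.exp (K * r) * W r with hgdef
      have hg : ∀ r : ℝ, HasDerivAt g
          (Real.exp (K * r) * (K * W r + (2*(H r - 1/2)*(dH H F r) + 2*(F r)*(dF H F r)))) r := by
        intro r
        have e1 : HasDerivAt (fun u : ℝ => Real.exp (K * u)) (K * Real.exp (K * r)) r := by
          have := (Real.hasDerivAt_exp (K * r)).comp r ((hasDerivAt_id r).const_mul K)
          refine this.congr_deriv ?_; ring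
        have := e1.mul (hW r)
        refine this.congr_deriv ?_; ring
      have hmono : MonotoneOn g (Icc a r₀) := by
        apply monotoneOn_of_deriv_nonneg (convex_Icc a r₀)
        · exact ((Real.continuous_exp.comp (continuous_const.mul continuous_id)).mul hWc).continuousOn
        · intro r hr
          exact ((hg r).differentiableAt).differentiableWithinAt
        · intro r hr
          rw [interior_Icc] at hr
          rw [(hg r).deriv]
          have hrab : r ∈ Icc a b := ⟨hr.1.le, le_trans hr.2.le hr₀ab.2⟩
          have h1 := hkey r hrab
          have h2 := neg_le_of_abs_le h1
          have hKW : 0 ≤ K * W r := by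
            have := hWnn r
            have hK0 : (0:ℝ) ≤ K := by simp only [hKdef]; linarith
            positivity
          have : 0 ≤ K * W r + (2*(H r - 1/2)*(dH H F r) + 2*(F r)*(dF H F r)) := by linarith
          positivity
      have hle : g x ≤ g r₀ := hmono ⟨hx.1, hx0⟩ ⟨hr₀ab.1, le_refl r₀⟩ hx0
      have : g r₀ = 0 := by simp [hgdef, hW0]
      rw [this] at hle
      have hgx : Real.exp (K * x) * W x ≤ 0 := hle
      have hexp : 0 < Real.exp (K * x) := Real.exp_pos _
      have : W x ≤ 0 := by
        by_contra hc
        push_neg at hc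
        exact absurd hgx (not_le.mpr (mul_pos hexp hc))
      linarith [hWnn x]
    · -- forward: use exp (-K * r) * W r antitone on [r₀, b]
      set g : ℝ → ℝ := fun r => Real.exp (-K * r) * W r with hgdef
      have hg : ∀ r : ℝ, HasDerivAt g
          (Real.exp (-K * r) * ((2*(H r - 1/2)*(dH H F r) + 2*(F r)*(dF H F r)) - K * W r)) r := by
        intro r
        have e1 : HasDerivAt (fun u : ℝ => Real.exp (-K * u)) (-K * Real.exp (-K * r)) r := by
          have := (Real.hasDerivAt_exp (-K * r)).comp r ((hasDerivAt_id r).const_mul (-K))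
          refine this.congr_deriv ?_; ring
        have := e1.mul (hW r)
        refine this.congr_deriv ?_; ring
      have hmono : AntitoneOn g (Icc r₀ b) := by
        apply antitoneOn_of_deriv_nonpos (convex_Icc r₀ b)
        · exact ((Real.continuous_exp.comp (continuous_const.mul continuous_id)).mul hWc).continuousOn
        · intro r hr
          exact ((hg r).differentiableAt).differentiableWithinAt
        · intro r hr
          rw [interior_Icc] at hr
          rw [(hg r).deriv]
          have hrab : r ∈ Icc a b := ⟨le_trans hr₀ab.1 hr.1.le, hr.2.le⟩
          have h1 := hkey r hrab
          have h2 := le_of_abs_le h1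
          have hexp : 0 ≤ Real.exp (-K * r) := (Real.exp_pos _).le
          have : (2*(H r - 1/2)*(dH H F r) + 2*(F r)*(dF H F r)) - K * W r ≤ 0 := by linarith
          exact mul_nonpos_of_nonneg_of_nonpos hexp this
      have hle : g x ≤ g r₀ := hmono ⟨le_refl r₀, hr₀ab.2⟩ ⟨hx0, hx.2⟩ hx0
      have : g r₀ = 0 := by simp [hgdef, hW0]
      rw [this] at hle
      have hgx : Real.exp (-K * x) * W x ≤ 0 := hle
      have hexp : 0 < Real.exp (-K * x) := Real.exp_pos _
      have : W x ≤ 0 := by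
        by_contra hc
        push_neg at hc
        exact absurd hgx (not_le.mpr (mul_pos hexp hc))
      linarith [hWnn x]
  have := hWzero t hta
  have hsq : (H t - 1/2)^2 = 0 := by
    have h2 := sq_nonneg (F t); have h3 := sq_nonneg (H t - 1/2)
    simp only [hWdef] at this; linarith
  have := pow_eq_zero_iff (n := 2) (by norm_num) |>.mp hsq
  linarith [this]


theorem firstZero {m : ℝ → ℝ} (hm : Continuous m) {s t : ℝ} (hst : s ≤ t)
    (hs : m s < 0) (ht : 0 ≤ m t) :
    ∃ w, s < w ∧ w ≤ t ∧ m w = 0 ∧ ∀ u, s ≤ u → u < w → m u < 0 := by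
  set E : Set ℝ := {x | x ∈ Icc s t ∧ 0 ≤ m x} with hEdef
  have hEclosed : IsClosed E := by
    have : E = Icc s t ∩ m ⁻¹' (Ici 0) := rfl
    rw [this]
    exact isClosed_Icc.inter (isClosed_Ici.preimage hm)
  have hEne : E.Nonempty := ⟨t, ⟨hst, le_refl t⟩, ht⟩
  have hEbdd : BddBelow E := ⟨s, fun x hx => hx.1.1⟩
  set w := sInf E with hwdef
  have hwE : w ∈ E := hEclosed.csInf_mem hEne hEbdd
  have hsw : s < w := by
    rcases lt_or_eq_of_le hwE.1.1 with h | h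
    · exact h
    · exfalso; rw [← h] at hwE; linarith [hwE.2]
  have hbefore : ∀ u, s ≤ u → u < w → m u < 0 := by
    intro u hsu huw
    by_contra hc
    push_neg at hc
    have huE : u ∈ E := ⟨⟨hsu, le_trans huw.le hwE.1.2⟩, hc⟩
    exact absurd (csInf_le hEbdd huE) (not_le.mpr huw)
  refine ⟨w, hsw, hwE.1.2, le_antisymm ?_ hwE.2, hbefore⟩
  have htend : Tendsto m (𝓝[<] w) (𝓝 (m w)) :=
    (hm.continuousAt).tendsto.mono_left nhdsWithin_le_nhds
  refine le_of_tendsto htend ?_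
  filter_upwards [Ioo_mem_nhdsLT_of_mem (show w ∈ Ioc s w from ⟨hsw, le_refl w⟩)] with u hu
  exact (hbefore u hu.1.le hu.2).le

/-- Forward invariance of the pinching region. -/
theorem regionB (H F : ℝ → ℝ)
    (hH : ∀ r : ℝ, HasDerivAt H (dH H F r) r)
    (hF : ∀ r : ℝ, HasDerivAt F (dF H F r) r)
    (hHnc : ∃ r s : ℝ, H r ≠ H s)
    {s : ℝ} (h1 : 0 < H s) (h2 : H s < 1/2) (h3 : -(1/2) < dF H F s) (h4 : dF H F s < 0) :
    ∀ t, s ≤ t → 0 < H t ∧ H t < 1/2 ∧ -(1/2) < dF H F t ∧ dF H F t < 0 := by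
  have hGd : ∀ r, HasDerivAt (dF H F) (dG H F r) r := hG H F hH hF
  have hHc : Continuous H := by
    rw [continuous_iff_continuousAt]; exact fun x => (hH x).differentiableAt.continuousAt
  have hGc : Continuous (dF H F) := by
    rw [continuous_iff_continuousAt]; exact fun x => (hGd x).continuousAt
  set m : ℝ → ℝ := fun x =>
    max (max (-H x) (H x - 1/2)) (max (-dF H F x - 1/2) (dF H F x)) with hmdef
  have hmc : Continuous m := by
    apply Continuous.max
    · exact (hHc.neg).max (hHc.sub continuous_const)
    · exact ((hGc.neg).sub continuous_const).max hGc
  have hmiff : ∀ x, m x < 0 ↔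
      (0 < H x ∧ H x < 1/2 ∧ -(1/2) < dF H F x ∧ dF H F x < 0) := by
    intro x
    simp only [hmdef, max_lt_iff]
    constructor
    · rintro ⟨⟨a1, a2⟩, ⟨a3, a4⟩⟩
      exact ⟨by linarith, by linarith, by linarith, a4⟩
    · rintro ⟨a1, a2, a3, a4⟩
      exact ⟨⟨by linarith, by linarith⟩, ⟨by linarith, a4⟩⟩
  intro t hstt
  by_contra hc
  rw [← hmiff] at hc
  push_neg at hc
  have hms : m s < 0 := (hmiff s).mpr ⟨h1, h2, h3, h4⟩
  obtain ⟨w, hsw, hwt, hw0, hbef⟩ := firstZero hmc hstt hms hc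
  -- at w all four quantities are ≤ 0 and one is = 0
  have hb1 : -H w ≤ 0 := by
    have := le_max_left (-H w) (H w - 1/2)
    have := le_max_left (max (-H w) (H w - 1/2)) (max (-dF H F w - 1/2) (dF H F w))
    calc -H w ≤ max (-H w) (H w - 1/2) := le_max_left _ _
      _ ≤ m w := le_max_left _ _
      _ = 0 := hw0
  have hb2 : H w - 1/2 ≤ 0 :=
    le_trans (le_trans (le_max_right _ _) (le_max_left _ _)) (le_of_eq hw0)
  have hb3 : -dF H F w - 1/2 ≤ 0 :=
    le_trans (le_trans (le_max_left _ _) (le_max_right _ _)) (le_of_eq hw0)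
  have hb4 : dF H F w ≤ 0 :=
    le_trans (le_trans (le_max_right _ _) (le_max_right _ _)) (le_of_eq hw0)
  have hbef1 : ∀ u, s ≤ u → u < w → 0 < H u := fun u ha hb => ((hmiff u).mp (hbef u ha hb)).1
  have hbef2 : ∀ u, s ≤ u → u < w → H u - 1/2 < 0 := fun u ha hb => by
    linarith [((hmiff u).mp (hbef u ha hb)).2.1]
  have hbef3 : ∀ u, s ≤ u → u < w → -dF H F u - 1/2 < 0 := fun u ha hb => by
    linarith [((hmiff u).mp (hbef u ha hb)).2.2.1]
  have hbef4 : ∀ u, s ≤ u → u < w → dF H F u < 0 := fun u ha hb =>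
    ((hmiff u).mp (hbef u ha hb)).2.2.2
  -- H w > 0 always (else dF w = 1/2 > 0)
  have hHw_pos : 0 < H w := by
    rcases lt_or_eq_of_le hb1 with h | h
    · linarith
    · exfalso
      have hH0 : H w = 0 := by linarith
      have : dF H F w = 1/2 := by simp [dF, hH0]
      linarith
  have hone : H w - 1/2 = 0 ∨ -dF H F w - 1/2 = 0 ∨ dF H F w = 0 := by
    by_contra hno
    push_neg at hno
    obtain ⟨hn2, hn3, hn4⟩ := hno
    have : m w < 0 := by
      rw [hmdef]
      apply max_lt
      · exact max_lt (by linarith) (lt_of_le_of_ne hb2 hn2)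
      · exact max_lt (lt_of_le_of_ne hb3 hn3) (lt_of_le_of_ne hb4 hn4)
    linarith [hw0 ▸ this]
  rcases hone with hcase | hcase | hcase
  · -- H w = 1/2
    have hH2 : H w = 1/2 := by linarith
    have hFval : dF H F w = F w := by simp only [dF]; rw [hH2]; ring
    rcases lt_or_eq_of_le hb4 with hFneg | hF0
    · -- F w < 0 : derivative of H - 1/2 at w is F w / 2 < 0, contradiction
      have hd := slope_le ((hH w).sub_const (1/2:ℝ)) hcase hsw hbef2
      have : dH H F w = F w / 2 := by simp only [dH]; rw [hH2]; ring
      rw [this] at hd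
      rw [hFval] at hFneg
      linarith
    · -- F w = 0 : fixed point
      exact fix H F hH hF hHnc w hH2 (by rw [← hFval, ← hF0])
  · -- dF w = -1/2
    have hGw : dF H F w = -(1/2) := by linarith
    have hHne : H w < 1/2 := by
      rcases lt_or_eq_of_le hb2 with h | h
      · linarith
      · exfalso
        have hH2 : H w = 1/2 := by linarith
        have : dF H F w = F w := by simp only [dF]; rw [hH2]; ring
        have hFw : F w = -(1/2) := by linarith
        -- then H=1/2, F=-1/2 : this is the c2 boundary handled by slope on c2
        have hd := slope_le ((hH w).sub_const (1/2:ℝ)) (by linarith) hsw hbef2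
        have hdH : dH H F w = F w / 2 := by simp only [dH]; rw [hH2]; ring
        rw [hdH, hFw] at hd
        linarith
    have hHF : H w * F w - H w ^ 2 + 1/2 = 0 := by
      simp only [dF] at hGw; linarith
    have heq : dG H F w = 2 * H w ^ 3 := by
      simp only [dG, dH, dF]
      linear_combination (2 * (F w - H w)) * hHF
    have hd := slope_le ((hGd w).neg.sub_const (1/2:ℝ)) hcase hsw hbef3
    have : 0 < dG H F w := by rw [heq]; positivity
    linarith
  · -- dF w = 0
    have hHne : H w < 1/2 := by
      rcases lt_or_eq_of_le hb2 with h | h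
      · linarith
      · exfalso
        have hH2 : H w = 1/2 := by linarith
        have hFval : dF H F w = F w := by simp only [dF]; rw [hH2]; ring
        exact fix H F hH hF hHnc w hH2 (by rw [← hFval, hcase])
    have hHF : H w * F w - H w ^ 2 + 1/4 = 0 := by
      simp only [dF] at hcase; linarith
    have hFneg : F w < 0 := by
      by_contra hFc
      push_neg at hFc
      have := mul_nonneg hHw_pos.le hFc
      nlinarith
    have heq : dG H F w = 2 * (1/4 - H w ^ 2) * (F w - 2 * H w) := by
      simp only [dG, dH, dF]
      linear_combination (2 * F w) * hHF
    have hd := slope_le (hGd w) hcase hsw hbef4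
    have hq1 : 0 < 1/4 - H w ^ 2 := by nlinarith
    have hq2 : F w - 2 * H w < 0 := by linarith
    nlinarith [mul_pos hq1 (neg_pos.mpr hq2)]

theorem keyIneq {φ vt vs : ℝ} (hφ1 : 0 < φ) (hφ2 : φ ≤ vs / 2) (h2 : vs ≤ vt) (h0 : 0 < vs) :
    vs / 2 ≤ (φ + 1) * vt - φ := by
  nlinarith [mul_nonneg hφ1.le (sub_nonneg.mpr h2), mul_nonneg hφ1.le h0.le]

theorem derivLin (H F : ℝ → ℝ) (hH : ∀ r : ℝ, HasDerivAt H (dH H F r) r) (k x : ℝ) :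
    HasDerivAt (fun y => 2 * H y - 1 - k * y) (2 * dH H F x - k) x := by
  have h := (((hH x).const_mul 2).sub_const 1).sub ((hasDerivAt_id x).const_mul k)
  exact h.congr_deriv (by ring)

/-- No point can have `H > 1/2` and `F > 2H - 1`: otherwise `H` blows up. -/
theorem regionC (H F : ℝ → ℝ)
    (hH : ∀ r : ℝ, HasDerivAt H (dH H F r) r)
    (hF : ∀ r : ℝ, HasDerivAt F (dF H F r) r)
    (hHnc : ∃ r s : ℝ, H r ≠ H s)
    {M : ℝ} (hM : ∀ r : ℝ, |H r| ≤ M)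
    (s : ℝ) (hs1 : 1/2 < H s) (hs2 : 2 * H s - 1 < F s) : False := by
  have hHc : Continuous H := by
    rw [continuous_iff_continuousAt]; exact fun x => (hH x).differentiableAt.continuousAt
  have hFc : Continuous F := by
    rw [continuous_iff_continuousAt]; exact fun x => (hF x).differentiableAt.continuousAt
  -- forward invariance of the region
  have hinv : ∀ t, s ≤ t → 1/2 < H t ∧ 2 * H t - 1 < F t := by
    set m : ℝ → ℝ := fun x => max (1/2 - H x) (2 * H x - 1 - F x) with hmdef
    have hmc : Continuous m :=
      (continuous_const.sub hHc).max (((continuous_const.mul hHc).sub continuous_const).sub hFc)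
    have hmiff : ∀ x, m x < 0 ↔ (1/2 < H x ∧ 2 * H x - 1 < F x) := by
      intro x
      simp only [hmdef, max_lt_iff]
      constructor
      · rintro ⟨a1, a2⟩; exact ⟨by linarith, by linarith⟩
      · rintro ⟨a1, a2⟩; exact ⟨by linarith, by linarith⟩
    intro t hstt
    by_contra hc
    rw [← hmiff] at hc
    push_neg at hc
    obtain ⟨w, hsw, hwt, hw0, hbef⟩ := firstZero hmc hstt ((hmiff s).mpr ⟨hs1, hs2⟩) hc
    have hb1 : 1/2 - H w ≤ 0 := le_trans (le_max_left _ _) (le_of_eq hw0)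
    have hb2 : 2 * H w - 1 - F w ≤ 0 := le_trans (le_max_right _ _) (le_of_eq hw0)
    have hbef1 : ∀ u, s ≤ u → u < w → 1/2 - H u < 0 := fun u ha hb => by
      linarith [((hmiff u).mp (hbef u ha hb)).1]
    have hbef2 : ∀ u, s ≤ u → u < w → 2 * H u - 1 - F u < 0 := fun u ha hb => by
      linarith [((hmiff u).mp (hbef u ha hb)).2]
    have hone : 1/2 - H w = 0 ∨ 2 * H w - 1 - F w = 0 := by
      by_contra hno
      push_neg at hno
      have : m w < 0 := max_lt (lt_of_le_of_ne hb1 hno.1) (lt_of_le_of_ne hb2 hno.2)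
      linarith [hw0 ▸ this]
    rcases hone with hcase | hcase
    · have hH2 : H w = 1/2 := by linarith
      rcases lt_or_eq_of_le (show (0:ℝ) ≤ F w by linarith) with hFpos | hF0
      · have hd' : 0 ≤ -dH H F w :=
          slope_le ((hH w).const_sub (1/2:ℝ)) (by linarith) hsw hbef1
        have hdHw : dH H F w = F w / 2 := by simp only [dH]; rw [hH2]; ring
        rw [hdHw] at hd'
        linarith
      · exact fix H F hH hF hHnc w hH2 (by linarith)
    · rcases lt_or_eq_of_le (show (1:ℝ)/2 ≤ H w by linarith) with hHgt | hH2
      · have hd := slope_le (g := fun x => 2 * H x - 1 - F x)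
          (d := 2 * dH H F w - dF H F w)
          ((((hH w).const_mul 2).sub_const 1).sub (hF w)) hcase hsw hbef2
        have : 2 * dH H F w - dF H F w = -2 * H w ^ 2 + 1/2 := by
          simp only [dH, dF]; ring
        rw [this] at hd
        nlinarith
      · have hH2' : H w = 1/2 := hH2.symm
        exact fix H F hH hF hHnc w hH2' (by linarith)
  -- v = F - 2H + 1 is positive and nondecreasing on [s, ∞)
  set v : ℝ → ℝ := fun x => F x - 2 * H x + 1 with hvdef
  have hv : ∀ x : ℝ, HasDerivAt v (2 * H x ^ 2 - 1/2) x := by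
    intro x
    have h0 := ((hF x).sub ((hH x).const_mul 2)).add_const (1:ℝ)
    refine h0.congr_deriv ?_
    simp only [dH, dF]; ring
  have hvc : Continuous v := (hFc.sub (continuous_const.mul hHc)).add continuous_const
  have hvmono : MonotoneOn v (Ici s) := by
    apply monotoneOn_of_deriv_nonneg (convex_Ici s) hvc.continuousOn
    · intro x hx; exact (hv x).differentiableAt.differentiableWithinAt
    · intro x hx
      rw [interior_Ici] at hx
      rw [(hv x).deriv]
      have := (hinv x (le_of_lt hx)).1
      nlinarith
  have hv0 : 0 < v s := by
    have := hs2; simp only [hvdef]; linarith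
  set c : ℝ := v s / 2 with hcdef
  have hcpos : 0 < c := by positivity
  have hvge : ∀ t, s ≤ t → v s ≤ v t := fun t ht =>
    hvmono (self_mem_Ici) ht ht
  -- pointwise derivative bound for 2H-1 when it is ≤ c
  have hkey : ∀ t, s ≤ t → 2 * H t - 1 ≤ c → c ≤ 2 * dH H F t := by
    intro t ht hφ
    have h1 := (hinv t ht).1
    have h2 := hvge t ht
    have hid : 2 * dH H F t = (2 * H t - 1 + 1) * v t - (2 * H t - 1) := by
      simp only [dH, hvdef]; ring
    rw [hid]
    simp only [hcdef] at hφ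
    have hres := keyIneq (show 0 < 2 * H t - 1 by linarith) hφ h2 hv0
    simp only [hcdef]
    linarith [hres]
  -- Stage 1 : some t₁ ≥ s has 2H - 1 > c
  have hstage1 : ∃ t₁, s ≤ t₁ ∧ c < 2 * H t₁ - 1 := by
    by_contra hcon
    push_neg at hcon
    have hall : ∀ t, s ≤ t → 2 * H t - 1 ≤ c := fun t ht => hcon t ht
    have hgrow : MonotoneOn (fun x => 2 * H x - 1 - c * x) (Ici s) := by
      apply monotoneOn_of_deriv_nonneg (convex_Ici s)
      · exact fun x _ => (derivLin H F hH c x).continuousAt.continuousWithinAt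
      · intro x hx
        exact (derivLin H F hH c x).differentiableAt.differentiableWithinAt
      · intro x hx
        rw [interior_Ici] at hx
        rw [(derivLin H F hH c x).deriv]
        have := hkey x hx.le (hall x hx.le)
        linarith
    set T := s + (c + 2) / c with hTdef
    have hsT : s ≤ T := by
      have : 0 < (c + 2) / c := by positivity
      simp only [hTdef]; linarith
    have h5 : 2 * H s - 1 - c * s ≤ 2 * H T - 1 - c * T := hgrow self_mem_Ici hsT hsT
    have hHT := hall T hsT
    have hcT : c * (T - s) = c + 2 := by
      simp only [hTdef]; field_simp; ring
    nlinarith [hs1, h5, hcT, hHT]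
  obtain ⟨t₁, ht₁s, hφ₁⟩ := hstage1
  -- Stage 2 : 2H - 1 > c for all t ≥ t₁
  have hstage2 : ∀ t, t₁ ≤ t → c < 2 * H t - 1 := by
    intro t ht
    by_contra hc2
    push_neg at hc2
    set m2 : ℝ → ℝ := fun x => c - (2 * H x - 1) with hm2def
    have hm2c : Continuous m2 :=
      continuous_const.sub ((continuous_const.mul hHc).sub continuous_const)
    obtain ⟨w, hsw, hwt, hw0, hbef⟩ := firstZero hm2c ht
      (by simp only [hm2def]; linarith) (by simp only [hm2def]; linarith)
    have hφw : 2 * H w - 1 ≤ c := by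
      have : m2 w = 0 := hw0; simp only [hm2def] at this; linarith
    have hkw := hkey w (le_trans ht₁s (le_of_lt hsw)) hφw
    have hd : 0 ≤ -(2 * dH H F w) :=
      slope_le (((((hH w).const_mul 2).sub_const 1)).const_sub c) hw0 hsw
        (fun u ha hb => hbef u ha hb)
    linarith
  -- Stage 3 : v grows linearly, reaches 1
  set d : ℝ := (c ^ 2 + 2 * c) / 2 with hddef
  have hdpos : 0 < d := by simp only [hddef]; positivity
  have hv' : ∀ x : ℝ, HasDerivAt (fun y => v y - d * y) (2 * H x ^ 2 - 1/2 - d) x := by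
    intro x
    have h := (hv x).sub ((hasDerivAt_id x).const_mul d)
    exact h.congr_deriv (by ring)
  have hstage3 : MonotoneOn (fun x => v x - d * x) (Ici t₁) := by
    apply monotoneOn_of_deriv_nonneg (convex_Ici t₁)
    · exact fun x _ => (hv' x).continuousAt.continuousWithinAt
    · intro x hx
      exact (hv' x).differentiableAt.differentiableWithinAt
    · intro x hx
      rw [interior_Ici] at hx
      rw [(hv' x).deriv]
      have := hstage2 x hx.le
      simp only [hddef]
      nlinarith
  set t₂ : ℝ := t₁ + 1 / d with ht₂def
  have ht₁₂ : t₁ ≤ t₂ := by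
    have : 0 < 1 / d := by positivity
    simp only [ht₂def]; linarith
  have hv₂ : 1 ≤ v t₂ := by
    have h3 : v t₁ - d * t₁ ≤ v t₂ - d * t₂ := hstage3 self_mem_Ici ht₁₂ ht₁₂
    have hv₁pos : 0 < v t₁ := by
      have := (hinv t₁ ht₁s).2
      simp only [hvdef]; linarith
    have hdt : d * (t₂ - t₁) = 1 := by
      simp only [ht₂def]; field_simp; ring
    nlinarith [h3, hdt, hv₁pos]
  have hvge1 : ∀ t, t₂ ≤ t → 1 ≤ v t := by
    intro t ht
    have := hvmono (show t₂ ∈ Ici s from le_trans ht₁s ht₁₂)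
      (show t ∈ Ici s from le_trans (le_trans ht₁s ht₁₂) ht) ht
    linarith
  -- Stage 4 : 2H - 1 grows at rate ≥ 1, contradiction with boundedness
  have hstage4 : MonotoneOn (fun x => 2 * H x - 1 - 1 * x) (Ici t₂) := by
    apply monotoneOn_of_deriv_nonneg (convex_Ici t₂)
    · exact fun x _ => (derivLin H F hH 1 x).continuousAt.continuousWithinAt
    · intro x hx
      exact (derivLin H F hH 1 x).differentiableAt.differentiableWithinAt
    · intro x hx
      rw [interior_Ici] at hx
      rw [(derivLin H F hH 1 x).deriv]
      have hphi := hstage2 x (le_trans ht₁₂ hx.le)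
      have hvx := hvge1 x hx.le
      have hid : 2 * dH H F x = (2 * H x - 1 + 1) * v x - (2 * H x - 1) := by
        simp only [dH, hvdef]; ring
      have : 1 ≤ 2 * dH H F x := by
        rw [hid]
        nlinarith
      linarith
  set t₃ : ℝ := t₂ + 2 * M + 2 with ht₃def
  have hMnn : 0 ≤ M := le_trans (abs_nonneg _) (hM s)
  have ht₂₃ : t₂ ≤ t₃ := by simp only [ht₃def]; linarith
  have h4 : 2 * H t₂ - 1 - 1 * t₂ ≤ 2 * H t₃ - 1 - 1 * t₃ := hstage4 self_mem_Ici ht₂₃ ht₂₃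
  have hH₂ := hstage2 t₂ ht₁₂
  have hH₃ : H t₃ ≤ M := le_of_abs_le (hM t₃)
  have ht₃eq : t₃ = t₂ + 2 * M + 2 := ht₃def
  nlinarith [h4, hH₂, hH₃, hcpos]

/-- Backward exclusion of the quadrant `H < 1/2, F > 2H - 1` near `-∞`. -/
theorem quadQ2 (H F : ℝ → ℝ)
    (hH : ∀ r : ℝ, HasDerivAt H (dH H F r) r)
    (hF : ∀ r : ℝ, HasDerivAt F (dF H F r) r)
    (hHbot : Tendsto H atBot (nhds (1 / 2)))
    {R : ℝ} (hray : ∀ t, t ≤ R → |H t - 1/2| < 1/16)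
    {s : ℝ} (hsR : s ≤ R) (h1 : H s < 1/2) (h2 : 2 * H s - 1 < F s) : False := by
  have hHc : Continuous H := by
    rw [continuous_iff_continuousAt]; exact fun x => (hH x).differentiableAt.continuousAt
  have hFc : Continuous F := by
    rw [continuous_iff_continuousAt]; exact fun x => (hF x).differentiableAt.continuousAt
  set m : ℝ → ℝ := fun x => max (H x - 1/2) (2 * H x - 1 - F x) with hmdef
  have hmc : Continuous m :=
    (hHc.sub continuous_const).max (((continuous_const.mul hHc).sub continuous_const).sub hFc)
  have hms : m s < 0 := by
    apply max_lt <;> [linarith; linarith]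
  -- positive derivative of H inside the region, on the ray
  have hdHpos : ∀ x, x ≤ R → m x < 0 → 0 < dH H F x := by
    intro x hxR hmx
    rw [hmdef, max_lt_iff] at hmx
    have hHx : |H x - 1/2| < 1/16 := hray x hxR
    have hHlb : 7/16 < H x := by
      have := abs_lt.mp hHx; linarith [this.1]
    have hvpos : 0 < F x - 2 * H x + 1 := by linarith [hmx.2]
    have hid : 2 * dH H F x = 2 * H x * (F x - 2 * H x + 1) - (2 * H x - 1) := by
      simp only [dH]; ring
    nlinarith [mul_pos (show (0:ℝ) < 2 * H x by linarith) hvpos, hmx.1]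
  set E : Set ℝ := {x | x ≤ s ∧ 0 ≤ m x} with hEdef
  rcases eq_empty_or_nonempty E with hE | hE
  · -- the whole ray (-∞, s] is in the region: H strictly increasing there
    have hreg : ∀ x, x ≤ s → m x < 0 := by
      intro x hx
      by_contra hcx
      push_neg at hcx
      exact (eq_empty_iff_forall_notMem.mp hE x) ⟨hx, hcx⟩
    have hmono : StrictMonoOn H (Iic s) := by
      apply strictMonoOn_of_deriv_pos (convex_Iic s) hHc.continuousOn
      intro x hx
      rw [interior_Iic] at hx
      rw [(hH x).deriv]
      exact hdHpos x (le_trans hx.le hsR) (hreg x hx.le)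
    have hev1 : ∀ᶠ t in atBot, dist (H t) (1/2) < 1/2 - H s := by
      refine Metric.tendsto_nhds.mp hHbot _ (by linarith)
    obtain ⟨t, htdist, htle⟩ := (hev1.and (eventually_le_atBot (s - 1))).exists
    have hts : t < s := by linarith
    have hlt := hmono (le_of_lt hts : t ∈ Iic s) (self_mem_Iic) hts
    rw [Real.dist_eq] at htdist
    have habs : |H t - 1/2| = 1/2 - H t := by
      rw [abs_of_nonpos (by linarith)]; ring
    rw [habs] at htdist
    linarith
  · set w := sSup E with hwdef
    have hEclosed : IsClosed E := by
      have : E = Iic s ∩ m ⁻¹' (Ici 0) := rfl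
      rw [this]; exact isClosed_Iic.inter (isClosed_Ici.preimage hmc)
    have hEbdd : BddAbove E := ⟨s, fun x hx => hx.1⟩
    have hwE : w ∈ E := hEclosed.csSup_mem hE hEbdd
    have hws : w < s := by
      rcases lt_or_eq_of_le hwE.1 with h | h
      · exact h
      · exfalso; rw [h] at hwE; linarith [hwE.2]
    have hreg : ∀ u, w < u → u ≤ s → m u < 0 := by
      intro u hwu hus
      by_contra hcu
      push_neg at hcu
      exact absurd (le_csSup hEbdd (show u ∈ E from ⟨hus, hcu⟩)) (not_le.mpr hwu)
    have hmono : StrictMonoOn H (Icc w s) := by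
      apply strictMonoOn_of_deriv_pos (convex_Icc w s) hHc.continuousOn
      intro x hx
      rw [interior_Icc] at hx
      rw [(hH x).deriv]
      exact hdHpos x (le_trans hx.2.le hsR) (hreg x hx.1 hx.2.le)
    have hanti : StrictAntiOn (fun x => F x - 2 * H x + 1) (Icc w s) := by
      apply strictAntiOn_of_deriv_neg (convex_Icc w s)
      · exact ((hFc.sub (continuous_const.mul hHc)).add continuous_const).continuousOn
      · intro x hx
        rw [interior_Icc] at hx
        have hd : HasDerivAt (fun y => F y - 2 * H y + 1) (2 * H x ^ 2 - 1/2) x := by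
          have h0 := ((hF x).sub ((hH x).const_mul 2)).add_const (1:ℝ)
          refine h0.congr_deriv ?_
          simp only [dH, dF]; ring
        rw [hd.deriv]
        have hHx := abs_lt.mp (hray x (le_trans hx.2.le hsR))
        have hmx := hreg x hx.1 hx.2.le
        rw [hmdef, max_lt_iff] at hmx
        nlinarith [hmx.1, hHx.1]
    have hHw : H w < H s := hmono (left_mem_Icc.mpr hws.le) (right_mem_Icc.mpr hws.le) hws
    have hvw : F s - 2 * H s + 1 < F w - 2 * H w + 1 :=
      hanti (left_mem_Icc.mpr hws.le) (right_mem_Icc.mpr hws.le) hws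
    have : m w < 0 := by
      apply max_lt
      · linarith
      · linarith
    linarith [hwE.2]

/-- Backward exclusion of the quadrant `H > 1/2, F < 2H - 1` near `-∞`. -/
theorem quadQ4 (H F : ℝ → ℝ)
    (hH : ∀ r : ℝ, HasDerivAt H (dH H F r) r)
    (hF : ∀ r : ℝ, HasDerivAt F (dF H F r) r)
    (hHbot : Tendsto H atBot (nhds (1 / 2)))
    {s : ℝ} (h1 : 1/2 < H s) (h2 : F s < 2 * H s - 1) : False := by
  have hHc : Continuous H := by
    rw [continuous_iff_continuousAt]; exact fun x => (hH x).differentiableAt.continuousAt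
  have hFc : Continuous F := by
    rw [continuous_iff_continuousAt]; exact fun x => (hF x).differentiableAt.continuousAt
  set m : ℝ → ℝ := fun x => max (1/2 - H x) (F x - (2 * H x - 1)) with hmdef
  have hmc : Continuous m :=
    (continuous_const.sub hHc).max (hFc.sub ((continuous_const.mul hHc).sub continuous_const))
  have hms : m s < 0 := by
    apply max_lt <;> [linarith; linarith]
  have hdHneg : ∀ x, m x < 0 → dH H F x < 0 := by
    intro x hmx
    rw [hmdef, max_lt_iff] at hmx
    have hvneg : F x - 2 * H x + 1 < 0 := by linarith [hmx.2]
    have hid : 2 * dH H F x = 2 * H x * (F x - 2 * H x + 1) - (2 * H x - 1) := by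
      simp only [dH]; ring
    nlinarith [mul_pos (show (0:ℝ) < 2 * H x by linarith [hmx.1]) (neg_pos.mpr hvneg), hmx.1]
  set E : Set ℝ := {x | x ≤ s ∧ 0 ≤ m x} with hEdef
  rcases eq_empty_or_nonempty E with hE | hE
  · have hreg : ∀ x, x ≤ s → m x < 0 := by
      intro x hx
      by_contra hcx
      push_neg at hcx
      exact (eq_empty_iff_forall_notMem.mp hE x) ⟨hx, hcx⟩
    have hmono : StrictAntiOn H (Iic s) := by
      apply strictAntiOn_of_deriv_neg (convex_Iic s) hHc.continuousOn
      intro x hx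
      rw [interior_Iic] at hx
      rw [(hH x).deriv]
      exact hdHneg x (hreg x hx.le)
    have hev1 : ∀ᶠ t in atBot, dist (H t) (1/2) < H s - 1/2 := by
      refine Metric.tendsto_nhds.mp hHbot _ (by linarith)
    obtain ⟨t, htdist, htle⟩ := (hev1.and (eventually_le_atBot (s - 1))).exists
    have hts : t < s := by linarith
    have hlt := hmono (le_of_lt hts : t ∈ Iic s) (self_mem_Iic) hts
    rw [Real.dist_eq] at htdist
    have habs : |H t - 1/2| = H t - 1/2 := abs_of_nonneg (by linarith)
    rw [habs] at htdist
    linarith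
  · set w := sSup E with hwdef
    have hEclosed : IsClosed E := by
      have : E = Iic s ∩ m ⁻¹' (Ici 0) := rfl
      rw [this]; exact isClosed_Iic.inter (isClosed_Ici.preimage hmc)
    have hEbdd : BddAbove E := ⟨s, fun x hx => hx.1⟩
    have hwE : w ∈ E := hEclosed.csSup_mem hE hEbdd
    have hws : w < s := by
      rcases lt_or_eq_of_le hwE.1 with h | h
      · exact h
      · exfalso; rw [h] at hwE; linarith [hwE.2]
    have hreg : ∀ u, w < u → u ≤ s → m u < 0 := by
      intro u hwu hus
      by_contra hcu
      push_neg at hcu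
      exact absurd (le_csSup hEbdd (show u ∈ E from ⟨hus, hcu⟩)) (not_le.mpr hwu)
    have hmono : StrictAntiOn H (Icc w s) := by
      apply strictAntiOn_of_deriv_neg (convex_Icc w s) hHc.continuousOn
      intro x hx
      rw [interior_Icc] at hx
      rw [(hH x).deriv]
      exact hdHneg x (hreg x hx.1 hx.2.le)
    have hanti : StrictMonoOn (fun x => F x - 2 * H x + 1) (Icc w s) := by
      apply strictMonoOn_of_deriv_pos (convex_Icc w s)
      · exact ((hFc.sub (continuous_const.mul hHc)).add continuous_const).continuousOn
      · intro x hx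
        rw [interior_Icc] at hx
        have hd : HasDerivAt (fun y => F y - 2 * H y + 1) (2 * H x ^ 2 - 1/2) x := by
          have h0 := ((hF x).sub ((hH x).const_mul 2)).add_const (1:ℝ)
          refine h0.congr_deriv ?_
          simp only [dH, dF]; ring
        rw [hd.deriv]
        have hmx := hreg x hx.1 hx.2.le
        rw [hmdef, max_lt_iff] at hmx
        nlinarith [hmx.1]
    have hHw : H s < H w := hmono (left_mem_Icc.mpr hws.le) (right_mem_Icc.mpr hws.le) hws
    have hvw : F w - 2 * H w + 1 < F s - 2 * H s + 1 :=
      hanti (left_mem_Icc.mpr hws.le) (right_mem_Icc.mpr hws.le) hws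
    have : m w < 0 := by
      apply max_lt
      · linarith
      · linarith
    linarith [hwE.2]

theorem main (H F : ℝ → ℝ)
    (hH : ∀ r : ℝ, HasDerivAt H (dH H F r) r)
    (hF : ∀ r : ℝ, HasDerivAt F (dF H F r) r)
    (hHnc : ∃ r s : ℝ, H r ≠ H s)
    (hbdd : ∃ M : ℝ, ∀ r : ℝ, |H r| ≤ M)
    (hHbot : Tendsto H atBot (nhds (1 / 2))) :
    ∀ r : ℝ, 0 < H r ∧ H r < 1 / 2 ∧
      -(1 / 2) < dF H F r ∧ dF H F r < 0 := by
  obtain ⟨M, hM⟩ := hbdd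
  have hHc : Continuous H := by
    rw [continuous_iff_continuousAt]; exact fun x => (hH x).differentiableAt.continuousAt
  have hGd : ∀ r, HasDerivAt (dF H F) (dG H F r) r := hG H F hH hF
  have hGc : Continuous (dF H F) := by
    rw [continuous_iff_continuousAt]; exact fun x => (hGd x).differentiableAt.continuousAt
  -- the ray where H is within 1/16 of 1/2
  obtain ⟨R, hray⟩ : ∃ R : ℝ, ∀ t, t ≤ R → |H t - 1/2| < 1/16 := by
    have h0 := Metric.tendsto_nhds.mp hHbot (1/16) (by norm_num)
    rw [eventually_atBot] at h0
    obtain ⟨R, hR⟩ := h0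
    exact ⟨R, fun t ht => by have := hR t ht; rwa [Real.dist_eq] at this⟩
  have hrayH : ∀ t, t ≤ R → 7/16 < H t ∧ H t < 9/16 := by
    intro t ht
    have := abs_lt.mp (hray t ht)
    constructor <;> linarith [this.1, this.2]
  -- A1 : H ≤ 1/2 on the ray
  have hA1 : ∀ t, t ≤ R → H t ≤ 1/2 := by
    intro t ht
    by_contra hc
    push_neg at hc
    rcases lt_trichotomy (F t) (2 * H t - 1) with hv | hv | hv
    · exact quadQ4 H F hH hF hHbot hc hv
    · -- v t = 0, v' > 0 : points just right have H > 1/2 and v > 0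
      have hd0 : HasDerivAt (fun y => F y - (2 * H y - 1)) (2 * H t ^ 2 - 1/2) t := by
        have h0 := (hF t).sub (((hH t).const_mul 2).sub_const 1)
        refine h0.congr_deriv ?_
        simp only [dH, dF]; ring
      have hev := ev_right_pos hd0 (by linarith : F t - (2 * H t - 1) = 0)
        (by nlinarith : (0:ℝ) < 2 * H t ^ 2 - 1/2)
      have hevH : ∀ᶠ u in 𝓝[>] t, 1/2 < H u := by
        have hopen : IsOpen {u : ℝ | 1/2 < H u} := isOpen_lt continuous_const hHc
        exact (eventually_of_mem (hopen.mem_nhds hc) (fun u hu => hu)).filter_mono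
          nhdsWithin_le_nhds
      obtain ⟨u, hu1, hu2⟩ := (hev.and hevH).exists
      have hu1' : 0 < F u - (2 * H u - 1) := hu1
      exact regionC H F hH hF hHnc hM u hu2 (by linarith)
    · exact regionC H F hH hF hHnc hM t hc hv
  set R' : ℝ := R - 1 with hR'def
  -- A2 : H < 1/2 strictly on the shorter ray
  have hA2 : ∀ t, t ≤ R' → H t < 1/2 := by
    intro t ht
    rcases lt_or_eq_of_le (hA1 t (by simp only [hR'def] at ht; linarith)) with h | h
    · exact h
    · exfalso
      rcases lt_trichotomy (F t) 0 with hFt | hFt | hFt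
      · -- H' = F/2 < 0 at t, so H > 1/2 just to the left
        have hdH : dH H F t = F t / 2 := by simp only [dH]; rw [h]; ring
        have hev := ev_left_pos ((hH t).sub_const (1/2:ℝ))
          (sub_eq_zero.mpr h) (by rw [hdH]; linarith)
        obtain ⟨u, hu1, hu2⟩ := (hev.and self_mem_nhdsWithin).exists
        have hu1' : 0 < H u - 1/2 := hu1
        have hut : u < t := hu2
        have := hA1 u (by simp only [hR'def] at ht; linarith)
        linarith
      · exact fix H F hH hF hHnc t h hFt
      · -- H' = F/2 > 0 at t, so H > 1/2 just to the right, still on the ray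
        have hdH : dH H F t = F t / 2 := by simp only [dH]; rw [h]; ring
        have hev := ev_right_pos ((hH t).sub_const (1/2:ℝ))
          (sub_eq_zero.mpr h) (by rw [hdH]; linarith)
        have hmem : Ioo t R ∈ 𝓝[>] t :=
          Ioo_mem_nhdsGT_of_mem ⟨le_refl t, by simp only [hR'def] at ht; linarith⟩
        obtain ⟨u, hu1, hu2⟩ := (hev.and (eventually_of_mem hmem (fun u hu => hu))).exists
        have hu1' : 0 < H u - 1/2 := hu1
        have := hA1 u hu2.2.le
        linarith
  -- A3 : F ≤ 2H - 1 on the shorter ray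
  have hA3 : ∀ t, t ≤ R' → F t ≤ 2 * H t - 1 := by
    intro t ht
    by_contra hcv
    push_neg at hcv
    exact quadQ2 H F hH hF hHbot hray
      (by simp only [hR'def] at ht; linarith : t ≤ R) (hA2 t ht) hcv
  -- main goal at an arbitrary point r
  intro r
  set r₁ : ℝ := min r (R' - 2) with hr₁def
  have hr₁r : r₁ ≤ r := min_le_left _ _
  have hr₁R' : r₁ ≤ R' - 2 := min_le_right _ _
  have hR'R : R' ≤ R := by simp only [hR'def]; linarith
  -- it suffices to find a point s ≤ r₁ in the pinching region
  by_cases hex : ∃ s, s ≤ r₁ ∧ 0 < H s ∧ H s < 1/2 ∧ -(1/2) < dF H F s ∧ dF H F s < 0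
  · obtain ⟨s, hs, b1, b2, b3, b4⟩ := hex
    exact regionB H F hH hF hHnc b1 b2 b3 b4 r (le_trans hs hr₁r)
  exfalso
  push_neg at hex
  -- every point of the ray has dF ≤ -1/2 or 0 ≤ dF
  have hdich : ∀ s, s ≤ r₁ → dF H F s ≤ -(1/2) ∨ 0 ≤ dF H F s := by
    intro s hs
    by_contra hcc
    push_neg at hcc
    have hsR' : s ≤ R' := by linarith
    have h1 := (hrayH s (by linarith)).1
    exact absurd (hex s hs (by linarith) (hA2 s hsR') hcc.1) (not_le.mpr hcc.2)
  by_cases hcase : ∃ t, t ≤ r₁ ∧ dF H F t ≤ -(1/2)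
  · -- Case 1 : dF ≤ -1/2 somewhere, hence everywhere to the left; H decreases fast
    obtain ⟨t, htr₁, htG⟩ := hcase
    have hGle : ∀ u, u ≤ t → dF H F u ≤ -(1/2) := by
      intro u hut
      by_contra hGu
      push_neg at hGu
      have hu_lt : u < t := by
        rcases lt_or_eq_of_le hut with h | h
        · exact h
        · exfalso; rw [h] at hGu; linarith
      have hmc : Continuous (fun x => -dF H F x - 1/2) := (hGc.neg).sub continuous_const
      obtain ⟨w, huw, hwt, hw0, hbef⟩ := firstZero hmc hut
        (show -dF H F u - 1/2 < 0 by linarith)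
        (show (0:ℝ) ≤ -dF H F t - 1/2 by linarith)
      have hwR' : w ≤ R' := by linarith
      have hGw : dF H F w = -(1/2) := by
        have h0 : -dF H F w - 1/2 = 0 := hw0
        linarith
      have hHw1 := (hrayH w (by linarith)).1
      have hHw2 : H w < 1/2 := hA2 w hwR'
      have hHF : H w * F w - H w ^ 2 + 1/2 = 0 := by
        simp only [dF] at hGw; linarith
      have heq : dG H F w = 2 * H w ^ 3 := by
        simp only [dG, dH, dF]
        linear_combination (2 * (F w - H w)) * hHF
      have hd : 0 ≤ -dG H F w :=
        slope_le ((hGd w).neg.sub_const (1/2:ℝ)) hw0 huw hbef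
      have hpos : 0 < dG H F w := by
        rw [heq]
        have : 0 < H w := by linarith
        positivity
      linarith
    -- hence v ≤ -1/2 on (-∞, t]
    have hvle : ∀ u, u ≤ t → F u - 2 * H u + 1 ≤ -(1/2) := by
      intro u hut
      have hGu := hGle u hut
      have huR : u ≤ R := by linarith
      have h1 := (hrayH u huR).1
      have h2 := hA1 u huR
      have hid : dF H F u = 2 * H u * (F u - 2 * H u + 1) + (2 * H u - 1)^2 / 2 := by
        simp only [dF]; ring
      have h2Hv : 2 * H u * (F u - 2 * H u + 1) ≤ -(1/2) := by
        nlinarith [sq_nonneg (2 * H u - 1)]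
      have hvneg : F u - 2 * H u + 1 < 0 := by nlinarith
      nlinarith [mul_nonneg (neg_nonneg.mpr hvneg.le) (show 0 ≤ 1 - 2 * H u by linarith)]
    -- so H' ≤ -1/8 on (-∞, t], and H(t-2) > 1/2 : contradiction
    have hder : ∀ u, u ≤ t → dH H F u ≤ -(1/8) := by
      intro u hut
      have hv := hvle u hut
      have huR : u ≤ R := by linarith
      have h1 := (hrayH u huR).1
      have h2 := hA1 u huR
      have hid : 2 * dH H F u = 2 * H u * (F u - 2 * H u + 1) - (2 * H u - 1) := by
        simp only [dH]; ring
      nlinarith [mul_nonneg (show 0 ≤ 2 * H u - 7/8 by linarith)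
        (show 0 ≤ -(F u - 2 * H u + 1) - 1/2 by linarith)]
    have hanti : AntitoneOn (fun x => H x + (1/8) * x) (Icc (t-2) t) := by
      apply antitoneOn_of_deriv_nonpos (convex_Icc _ _)
      · exact (hHc.add (continuous_const.mul continuous_id')).continuousOn
      · intro x hx
        exact ((hH x).add
          ((hasDerivAt_id x).const_mul (1/8))).differentiableAt.differentiableWithinAt
      · intro x hx
        rw [interior_Icc] at hx
        have hd : HasDerivAt (fun y => H y + (1/8) * y) (dH H F x + 1/8) x := by
          have h0 := (hH x).add ((hasDerivAt_id x).const_mul (1/8))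
          exact h0.congr_deriv (by ring)
        rw [hd.deriv]
        linarith [hder x hx.2.le]
    have h5 : H t + (1/8) * t ≤ H (t-2) + (1/8) * (t-2) :=
      hanti (⟨le_refl _, by linarith⟩ : (t-2:ℝ) ∈ Icc (t-2) t)
        (⟨by linarith, le_refl _⟩ : t ∈ Icc (t-2) t) (by linarith)
    have h6 := (hrayH t (by linarith)).1
    have h7 := hA1 (t-2) (by linarith)
    linarith
  · -- Case 2 : dF ≥ 0 on the whole left ray: H strictly increasing, contradiction
    push_neg at hcase
    have hGge : ∀ s, s ≤ r₁ → 0 ≤ dF H F s := by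
      intro s hs
      rcases hdich s hs with h | h
      · exact absurd h (not_le.mpr (hcase s hs))
      · exact h
    have hmono : StrictMonoOn H (Iic r₁) := by
      apply strictMonoOn_of_deriv_pos (convex_Iic r₁) hHc.continuousOn
      intro x hx
      rw [interior_Iic] at hx
      rw [(hH x).deriv]
      have hxlt : x < r₁ := hx
      have hxR : x ≤ R := by linarith
      have h1 := (hrayH x hxR).1
      have h2 := hA2 x (by linarith)
      have hG0 := hGge x hxlt.le
      have hid : 2 * dH H F x = dF H F x + (1 - 4 * H x ^ 2) / 2 := by
        simp only [dH, dF]; ring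
      nlinarith
    have hHr₁ : H r₁ < 1/2 := hA2 r₁ (by linarith)
    have hev1 : ∀ᶠ u in atBot, dist (H u) (1/2) < 1/2 - H r₁ :=
      Metric.tendsto_nhds.mp hHbot _ (by linarith)
    obtain ⟨u, hud, hule⟩ := (hev1.and (eventually_le_atBot (r₁ - 1))).exists
    have hus : u < r₁ := by linarith
    have hlt := hmono (le_of_lt hus : u ∈ Iic r₁) self_mem_Iic hus
    rw [Real.dist_eq] at hud
    have habs : |H u - 1/2| = 1/2 - H u := by
      rw [abs_of_nonpos (by linarith)]; ring
    rw [habs] at hud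
    linarith

end CuspAux

/-- Curvature pinching along the cusp-soliton separatrix: for a nonconstant bounded
solution of the system with `H → 1/2` as `r → −∞`, one has `0 < H < 1/2` and
`−1/2 < F' < 0` everywhere. -/
theorem cusp_soliton_pinching
    (H F : ℝ → ℝ)
    (hH : ∀ r : ℝ, HasDerivAt H (H r * F r - 2 * H r ^ 2 + 1 / 2) r)
    (hF : ∀ r : ℝ, HasDerivAt F (2 * H r * F r - 2 * H r ^ 2 + 1 / 2) r)
    (hHnc : ∃ r s : ℝ, H r ≠ H s) (hFnc : ∃ r s : ℝ, F r ≠ F s)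
    (hbdd : ∃ M : ℝ, ∀ r : ℝ, |H r| ≤ M)
    (hHbot : Tendsto H atBot (nhds (1 / 2))) :
    ∀ r : ℝ, 0 < H r ∧ H r < 1 / 2 ∧
      -(1 / 2) < 2 * H r * F r - 2 * H r ^ 2 + 1 / 2 ∧
      2 * H r * F r - 2 * H r ^ 2 + 1 / 2 < 0 := by
  have h := CuspAux.main H F (fun r => hH r) (fun r => hF r) hHnc hbdd hHbot
  intro r
  exact ⟨(h r).1, (h r).2.1, (h r).2.2.1, (h r).2.2.2⟩
end

section
/- Let u : ℝ² → ℝ be real-analytic and h : ℝ² → ℝ be smooth, both ℤ²-periodic (u(x+1, y) = u(x, y+1) = u(x, y) and likewise for h). Suppose that for all (x, y) ∈ ℝ²: ∂²u/∂x∂y = (∂u/∂y)(∂h/∂x) + (∂u/∂x)(∂h/∂y), and ∂²u/∂x² − ∂²u/∂y² = −2(∂u/∂x)(∂h/∂x) + 2(∂u/∂y)(∂h/∂y). Then u is constant. -/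
/-- Partial derivative in the first variable of a function on `ℝ × ℝ`. -/
noncomputable def pdX (f : ℝ × ℝ → ℝ) (p : ℝ × ℝ) : ℝ :=
  deriv (fun s => f (s, p.2)) p.1

/-- Partial derivative in the second variable of a function on `ℝ × ℝ`. -/
noncomputable def pdY (f : ℝ × ℝ → ℝ) (p : ℝ × ℝ) : ℝ :=
  deriv (fun s => f (p.1, s)) p.2


open Set Function

namespace PASaux

lemma oneLe : ((⊤ : ℕ∞) : WithTop ℕ∞) ≠ 0 := by simp

lemma succLe : ((⊤ : ℕ∞) : WithTop ℕ∞) + 1 ≤ ((⊤ : ℕ∞) : WithTop ℕ∞) := by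
  exact_mod_cast le_top


variable {w f g : ℝ × ℝ → ℝ} {p : ℝ × ℝ}

lemma hasDerivAt_sliceX (hw : DifferentiableAt ℝ w p) :
    HasDerivAt (fun s => w (s, p.2)) (fderiv ℝ w p (1, 0)) p.1 := by
  have h1 : HasDerivAt (fun s : ℝ => (s, p.2)) ((1 : ℝ), (0 : ℝ)) p.1 :=
    (hasDerivAt_id p.1).prodMk (hasDerivAt_const _ _)
  exact hw.hasFDerivAt.comp_hasDerivAt p.1 h1

lemma hasDerivAt_sliceY (hw : DifferentiableAt ℝ w p) :
    HasDerivAt (fun s => w (p.1, s)) (fderiv ℝ w p (0, 1)) p.2 := by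
  have h1 : HasDerivAt (fun s : ℝ => (p.1, s)) ((0 : ℝ), (1 : ℝ)) p.2 :=
    (hasDerivAt_const _ _).prodMk (hasDerivAt_id p.2)
  exact hw.hasFDerivAt.comp_hasDerivAt p.2 h1

lemma pdX_eq (hw : DifferentiableAt ℝ w p) : pdX w p = fderiv ℝ w p (1, 0) :=
  (hasDerivAt_sliceX hw).deriv

lemma pdY_eq (hw : DifferentiableAt ℝ w p) : pdY w p = fderiv ℝ w p (0, 1) :=
  (hasDerivAt_sliceY hw).deriv

lemma hasDerivAt_pdX (hw : DifferentiableAt ℝ w p) :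
    HasDerivAt (fun s => w (s, p.2)) (pdX w p) p.1 := by
  rw [pdX_eq hw]; exact hasDerivAt_sliceX hw

lemma hasDerivAt_pdY (hw : DifferentiableAt ℝ w p) :
    HasDerivAt (fun s => w (p.1, s)) (pdY w p) p.2 := by
  rw [pdY_eq hw]; exact hasDerivAt_sliceY hw

lemma contDiff_pdX (hw : ContDiff ℝ (⊤ : ℕ∞) w) : ContDiff ℝ (⊤ : ℕ∞) (pdX w) := by
  have h : pdX w = fun q => fderiv ℝ w q (1, 0) :=
    funext fun q => pdX_eq (hw.differentiable oneLe q)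
  rw [h]
  exact (hw.fderiv_right succLe).clm_apply contDiff_const

lemma contDiff_pdY (hw : ContDiff ℝ (⊤ : ℕ∞) w) : ContDiff ℝ (⊤ : ℕ∞) (pdY w) := by
  have h : pdY w = fun q => fderiv ℝ w q (0, 1) :=
    funext fun q => pdY_eq (hw.differentiable oneLe q)
  rw [h]
  exact (hw.fderiv_right succLe).clm_apply contDiff_const

lemma pdX_add (hf : DifferentiableAt ℝ f p) (hg : DifferentiableAt ℝ g p) :
    pdX (fun q => f q + g q) p = pdX f p + pdX g p :=
  ((hasDerivAt_pdX hf).add (hasDerivAt_pdX hg)).deriv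

lemma pdY_add (hf : DifferentiableAt ℝ f p) (hg : DifferentiableAt ℝ g p) :
    pdY (fun q => f q + g q) p = pdY f p + pdY g p :=
  ((hasDerivAt_pdY hf).add (hasDerivAt_pdY hg)).deriv

lemma pdX_cmul (c : ℝ) (hf : DifferentiableAt ℝ f p) :
    pdX (fun q => c * f q) p = c * pdX f p :=
  ((hasDerivAt_pdX hf).const_mul c).deriv

lemma pdY_cmul (c : ℝ) (hf : DifferentiableAt ℝ f p) :
    pdY (fun q => c * f q) p = c * pdY f p :=
  ((hasDerivAt_pdY hf).const_mul c).deriv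

lemma pdX_mul (hf : DifferentiableAt ℝ f p) (hg : DifferentiableAt ℝ g p) :
    pdX (fun q => f q * g q) p = pdX f p * g p + f p * pdX g p :=
  ((hasDerivAt_pdX hf).mul (hasDerivAt_pdX hg)).deriv

lemma pdY_mul (hf : DifferentiableAt ℝ f p) (hg : DifferentiableAt ℝ g p) :
    pdY (fun q => f q * g q) p = pdY f p * g p + f p * pdY g p :=
  ((hasDerivAt_pdY hf).mul (hasDerivAt_pdY hg)).deriv

lemma pdX_pdY (hw : ContDiff ℝ (⊤ : ℕ∞) w) (p : ℝ × ℝ) : pdX (pdY w) p = pdY (pdX w) p := by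
  have hd : Differentiable ℝ w := hw.differentiable oneLe
  have hfd : ContDiff ℝ (⊤ : ℕ∞) (fderiv ℝ w) := hw.fderiv_right succLe
  have hfdd : Differentiable ℝ (fderiv ℝ w) := hfd.differentiable oneLe
  have key : fderiv ℝ (fderiv ℝ w) p (1, 0) (0, 1) = fderiv ℝ (fderiv ℝ w) p (0, 1) (1, 0) :=
    second_derivative_symmetric (f := w) (fun y => (hd y).hasFDerivAt)
      ((hfdd p).hasFDerivAt) _ _
  have hY : pdY w = fun q => fderiv ℝ w q (0, 1) := funext fun q => pdY_eq (hd q)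
  have hX : pdX w = fun q => fderiv ℝ w q (1, 0) := funext fun q => pdX_eq (hd q)
  have hdY : DifferentiableAt ℝ (pdY w) p := ((contDiff_pdY hw).differentiable oneLe) p
  have hdX : DifferentiableAt ℝ (pdX w) p := ((contDiff_pdX hw).differentiable oneLe) p
  rw [pdX_eq hdY, pdY_eq hdX, hY, hX]
  rw [fderiv_clm_apply (hfdd p) (differentiableAt_const _),
      fderiv_clm_apply (hfdd p) (differentiableAt_const _)]
  simp [key]


/-! ### Iterates -/

lemma contDiff_pdX_iter (n : ℕ) (hw : ContDiff ℝ (⊤ : ℕ∞) w) : ContDiff ℝ (⊤ : ℕ∞) (pdX^[n] w) := by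
  induction n generalizing w with
  | zero => exact hw
  | succ n ih => rw [Function.iterate_succ_apply]; exact ih (contDiff_pdX hw)

lemma contDiff_pdY_iter (n : ℕ) (hw : ContDiff ℝ (⊤ : ℕ∞) w) : ContDiff ℝ (⊤ : ℕ∞) (pdY^[n] w) := by
  induction n generalizing w with
  | zero => exact hw
  | succ n ih => rw [Function.iterate_succ_apply]; exact ih (contDiff_pdY hw)

lemma pdX_add_fun (hf : ContDiff ℝ (⊤ : ℕ∞) f) (hg : ContDiff ℝ (⊤ : ℕ∞) g) :
    pdX (fun q => f q + g q) = fun q => pdX f q + pdX g q :=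
  funext fun q => pdX_add (hf.differentiable oneLe q) (hg.differentiable oneLe q)

lemma pdY_add_fun (hf : ContDiff ℝ (⊤ : ℕ∞) f) (hg : ContDiff ℝ (⊤ : ℕ∞) g) :
    pdY (fun q => f q + g q) = fun q => pdY f q + pdY g q :=
  funext fun q => pdY_add (hf.differentiable oneLe q) (hg.differentiable oneLe q)

lemma pdX_cmul_fun (c : ℝ) (hf : ContDiff ℝ (⊤ : ℕ∞) f) :
    pdX (fun q => c * f q) = fun q => c * pdX f q :=
  funext fun q => pdX_cmul c (hf.differentiable oneLe q)

lemma pdY_cmul_fun (c : ℝ) (hf : ContDiff ℝ (⊤ : ℕ∞) f) :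
    pdY (fun q => c * f q) = fun q => c * pdY f q :=
  funext fun q => pdY_cmul c (hf.differentiable oneLe q)

lemma pdX_iter_add (n : ℕ) (hf : ContDiff ℝ (⊤ : ℕ∞) f) (hg : ContDiff ℝ (⊤ : ℕ∞) g) :
    pdX^[n] (fun q => f q + g q) = fun q => pdX^[n] f q + pdX^[n] g q := by
  induction n generalizing f g with
  | zero => rfl
  | succ n ih =>
      rw [Function.iterate_succ_apply, Function.iterate_succ_apply,
        Function.iterate_succ_apply, pdX_add_fun hf hg]
      exact ih (contDiff_pdX hf) (contDiff_pdX hg)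

lemma pdY_iter_add (n : ℕ) (hf : ContDiff ℝ (⊤ : ℕ∞) f) (hg : ContDiff ℝ (⊤ : ℕ∞) g) :
    pdY^[n] (fun q => f q + g q) = fun q => pdY^[n] f q + pdY^[n] g q := by
  induction n generalizing f g with
  | zero => rfl
  | succ n ih =>
      rw [Function.iterate_succ_apply, Function.iterate_succ_apply,
        Function.iterate_succ_apply, pdY_add_fun hf hg]
      exact ih (contDiff_pdY hf) (contDiff_pdY hg)

lemma pdX_iter_cmul (n : ℕ) (c : ℝ) (hf : ContDiff ℝ (⊤ : ℕ∞) f) :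
    pdX^[n] (fun q => c * f q) = fun q => c * pdX^[n] f q := by
  induction n generalizing f with
  | zero => rfl
  | succ n ih =>
      rw [Function.iterate_succ_apply, Function.iterate_succ_apply, pdX_cmul_fun c hf]
      exact ih (contDiff_pdX hf)

lemma pdY_iter_cmul (n : ℕ) (c : ℝ) (hf : ContDiff ℝ (⊤ : ℕ∞) f) :
    pdY^[n] (fun q => c * f q) = fun q => c * pdY^[n] f q := by
  induction n generalizing f with
  | zero => rfl
  | succ n ih =>
      rw [Function.iterate_succ_apply, Function.iterate_succ_apply, pdY_cmul_fun c hf]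
      exact ih (contDiff_pdY hf)

lemma pdX_pdY_iter (hw : ContDiff ℝ (⊤ : ℕ∞) w) (j : ℕ) :
    pdX (pdY^[j] w) = pdY^[j] (pdX w) := by
  induction j generalizing w with
  | zero => rfl
  | succ j ih =>
      rw [Function.iterate_succ_apply, Function.iterate_succ_apply]
      rw [ih (contDiff_pdY hw), funext (pdX_pdY hw)]

/-! ### Mixed partials and vanishing classes -/

noncomputable def Dij (i j : ℕ) (w : ℝ × ℝ → ℝ) : ℝ × ℝ → ℝ := pdX^[i] (pdY^[j] w)

lemma Dij_zero_zero : Dij 0 0 w = w := rfl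

lemma contDiff_Dij (i j : ℕ) (hw : ContDiff ℝ (⊤ : ℕ∞) w) : ContDiff ℝ (⊤ : ℕ∞) (Dij i j w) :=
  contDiff_pdX_iter i (contDiff_pdY_iter j hw)

lemma Dij_pdX (hw : ContDiff ℝ (⊤ : ℕ∞) w) (i j : ℕ) : Dij i j (pdX w) = Dij (i + 1) j w := by
  unfold Dij
  rw [← pdX_pdY_iter hw j, ← Function.iterate_succ_apply]

lemma Dij_pdY (i j : ℕ) : Dij i j (pdY w) = Dij i (j + 1) w := by
  unfold Dij
  rw [← Function.iterate_succ_apply]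

lemma Dij_add (i j : ℕ) (hf : ContDiff ℝ (⊤ : ℕ∞) f) (hg : ContDiff ℝ (⊤ : ℕ∞) g) :
    Dij i j (fun q => f q + g q) = fun q => Dij i j f q + Dij i j g q := by
  unfold Dij
  rw [pdY_iter_add j hf hg, pdX_iter_add i (contDiff_pdY_iter j hf) (contDiff_pdY_iter j hg)]

lemma Dij_cmul (i j : ℕ) (c : ℝ) (hf : ContDiff ℝ (⊤ : ℕ∞) f) :
    Dij i j (fun q => c * f q) = fun q => c * Dij i j f q := by
  unfold Dij
  rw [pdY_iter_cmul j c hf, pdX_iter_cmul i c (contDiff_pdY_iter j hf)]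

/-- All mixed partials of order `≤ m` vanish at `p₀`. -/
def Van (p₀ : ℝ × ℝ) (m : ℕ) (w : ℝ × ℝ → ℝ) : Prop :=
  ∀ i j, i + j ≤ m → Dij i j w p₀ = 0

lemma Van.mono {m m' : ℕ} (h : Van p₀ m w) (hm : m' ≤ m) : Van p₀ m' w :=
  fun i j hij => h i j (hij.trans hm)

lemma Van.val {m : ℕ} (h : Van p₀ m w) : w p₀ = 0 := h 0 0 (Nat.zero_le _)

lemma Van.pdX {m : ℕ} (h : Van p₀ (m + 1) w) (hw : ContDiff ℝ (⊤ : ℕ∞) w) : Van p₀ m (pdX w) := by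
  intro i j hij
  rw [Dij_pdX hw]
  exact h _ _ (by omega)

lemma Van.pdY {m : ℕ} (h : Van p₀ (m + 1) w) : Van p₀ m (pdY w) := by
  intro i j hij
  rw [Dij_pdY]
  exact h _ _ (by omega)

lemma van_of (hval : w p₀ = 0) (hw : ContDiff ℝ (⊤ : ℕ∞) w) {m : ℕ}
    (hX : Van p₀ m (pdX w)) (hY : Van p₀ m (pdY w)) : Van p₀ (m + 1) w := by
  intro i j hij
  match i, j with
  | 0, 0 => exact hval
  | (i + 1), j =>
      have := hX i j (by omega)
      rwa [Dij_pdX hw] at this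
  | 0, (j + 1) =>
      have := hY 0 j (by omega)
      rwa [Dij_pdY] at this

lemma van_add {m : ℕ} (hf : ContDiff ℝ (⊤ : ℕ∞) f) (hg : ContDiff ℝ (⊤ : ℕ∞) g)
    (h1 : Van p₀ m f) (h2 : Van p₀ m g) : Van p₀ m (fun q => f q + g q) := by
  intro i j hij
  rw [Dij_add i j hf hg]
  simp only
  rw [h1 i j hij, h2 i j hij, add_zero]

lemma van_cmul {m : ℕ} (c : ℝ) (hf : ContDiff ℝ (⊤ : ℕ∞) f)
    (h1 : Van p₀ m f) : Van p₀ m (fun q => c * f q) := by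
  intro i j hij
  rw [Dij_cmul i j c hf]
  simp only
  rw [h1 i j hij, mul_zero]

lemma van_mul : ∀ (m : ℕ) {f g : ℝ × ℝ → ℝ}, ContDiff ℝ (⊤ : ℕ∞) f → ContDiff ℝ (⊤ : ℕ∞) g →
    Van p₀ m f → Van p₀ m (fun q => f q * g q) := by
  intro m
  induction m with
  | zero =>
      intro f g hf hg h i j hij
      have hi : i = 0 := by omega
      have hj : j = 0 := by omega
      subst hi; subst hj
      show f p₀ * g p₀ = 0
      rw [h.val, zero_mul]
  | succ m ih =>
      intro f g hf hg h
      refine van_of (by show f p₀ * g p₀ = 0; rw [h.val, zero_mul]) (hf.mul hg) ?_ ?_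
      · have hx : pdX (fun q => f q * g q) = fun q => pdX f q * g q + f q * pdX g q :=
          funext fun q => pdX_mul (hf.differentiable oneLe q) (hg.differentiable oneLe q)
        rw [hx]
        exact van_add ((contDiff_pdX hf).mul hg) (hf.mul (contDiff_pdX hg))
          (ih (contDiff_pdX hf) hg (h.pdX hf)) (ih hf (contDiff_pdX hg) (h.mono (by omega)))
      · have hy : pdY (fun q => f q * g q) = fun q => pdY f q * g q + f q * pdY g q :=
          funext fun q => pdY_mul (hf.differentiable oneLe q) (hg.differentiable oneLe q)
        rw [hy]
        exact van_add ((contDiff_pdY hf).mul hg) (hf.mul (contDiff_pdY hg))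
          (ih (contDiff_pdY hf) hg h.pdY) (ih hf (contDiff_pdY hg) (h.mono (by omega)))



/-! ### Order induction at a degenerate critical point -/

section Orders

variable {u h : ℝ × ℝ → ℝ} {p₀ : ℝ × ℝ}

lemma step_lemma
    (hu : ContDiff ℝ (⊤ : ℕ∞) u) (hh : ContDiff ℝ (⊤ : ℕ∞) h)
    (heq1 : ∀ p : ℝ × ℝ, pdX (pdY u) p = pdY u p * pdX h p + pdX u p * pdY h p)
    (heq2 : ∀ p : ℝ × ℝ,
      pdX (pdX u) p - pdY (pdY u) p = -2 * pdX u p * pdX h p + 2 * pdY u p * pdY h p)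
    (m : ℕ) (IH : ∀ i j, i + j ≤ m + 2 → 1 ≤ i + j → Dij i j u p₀ = 0) :
    ∀ i j, i + j = m + 3 → Dij i j u p₀ = 0 := by
  set U1 := pdX u with hU1
  set U2 := pdY u with hU2
  have hU1c : ContDiff ℝ (⊤ : ℕ∞) U1 := contDiff_pdX hu
  have hU2c : ContDiff ℝ (⊤ : ℕ∞) U2 := contDiff_pdY hu
  have hH1c : ContDiff ℝ (⊤ : ℕ∞) (pdX h) := contDiff_pdX hh
  have hH2c : ContDiff ℝ (⊤ : ℕ∞) (pdY h) := contDiff_pdY hh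
  set G : ℝ × ℝ → ℝ := fun q => U2 q * pdX h q + U1 q * pdY h q with hGdef
  set R : ℝ × ℝ → ℝ := fun q => (-2 * U1 q) * pdX h q + (2 * U2 q) * pdY h q with hRdef
  have hGc : ContDiff ℝ (⊤ : ℕ∞) G := (hU2c.mul hH1c).add (hU1c.mul hH2c)
  have hRc : ContDiff ℝ (⊤ : ℕ∞) R :=
    ((contDiff_const.mul hU1c).mul hH1c).add ((contDiff_const.mul hU2c).mul hH2c)
  have hG : pdX (pdY u) = G := funext fun p => heq1 p
  have hXX : pdX (pdX u) = fun q => pdY (pdY u) q + R q := by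
    funext p
    have := heq2 p
    simp only [hRdef, hU1, hU2]
    ring_nf
    ring_nf at this
    linarith
  have hYY : pdY (pdY u) = fun q => pdX (pdX u) q + (-1 : ℝ) * R q := by
    funext p
    have := heq2 p
    simp only [hRdef, hU1, hU2]
    ring_nf
    ring_nf at this
    linarith
  have vanU1 : Van p₀ (m + 1) U1 := by
    intro i j hij
    rw [hU1, Dij_pdX hu]
    exact IH _ _ (by omega) (by omega)
  have vanU2 : Van p₀ (m + 1) U2 := by
    intro i j hij
    rw [hU2, Dij_pdY]
    exact IH _ _ (by omega) (by omega)
  have vanG : Van p₀ (m + 1) G :=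
    van_add (hU2c.mul hH1c) (hU1c.mul hH2c)
      (van_mul _ hU2c hH1c vanU2) (van_mul _ hU1c hH2c vanU1)
  have vanR : Van p₀ (m + 1) R :=
    van_add ((contDiff_const.mul hU1c).mul hH1c) ((contDiff_const.mul hU2c).mul hH2c)
      (van_mul _ (contDiff_const.mul hU1c) hH1c (van_cmul (-2) hU1c vanU1))
      (van_mul _ (contDiff_const.mul hU2c) hH2c (van_cmul 2 hU2c vanU2))
  have vanPXY : Van p₀ (m + 1) (pdX (pdY u)) := by rw [hG]; exact vanG
  have mixed : ∀ a b, a + b = m + 1 → Dij (a + 1) (b + 1) u p₀ = 0 := by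
    intro a b hab
    have e1 : Dij (a + 1) (b + 1) u = Dij a b (pdX (pdY u)) := by
      unfold Dij
      rw [Function.iterate_succ_apply pdX a, Function.iterate_succ_apply pdY b,
        pdX_pdY_iter (contDiff_pdY hu) b]
    rw [e1]
    exact vanPXY a b (by omega)
  intro i j hij
  match i, j with
  | (a + 1), (b + 1) => exact mixed a b (by omega)
  | (i : ℕ), 0 =>
      -- pure `x` derivatives; here i = m + 3
      have hi : i = m + 3 := by omega
      subst hi
      have e : Dij (m + 3) 0 u p₀ = pdX^[m + 1] (pdX (pdX u)) p₀ := by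
        show pdX^[m+3] (pdY^[0] u) p₀ = _
        rw [Function.iterate_zero_apply, Function.iterate_succ_apply,
          Function.iterate_succ_apply]
      rw [e, hXX, pdX_iter_add (m + 1) ((contDiff_pdY (contDiff_pdY hu))) hRc]
      have t2 : pdX^[m + 1] R p₀ = 0 := vanR (m + 1) 0 (by omega)
      have t1 : pdX^[m + 1] (pdY (pdY u)) p₀ = 0 := mixed m 1 (by omega)
      simp only
      rw [t1, t2, add_zero]
  | 0, (j : ℕ) =>
      have hj : j = m + 3 := by omega
      subst hj
      have e : Dij 0 (m + 3) u p₀ = pdY^[m + 1] (pdY (pdY u)) p₀ := by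
        show pdX^[0] (pdY^[m+3] u) p₀ = _
        rw [Function.iterate_zero_apply, Function.iterate_succ_apply,
          Function.iterate_succ_apply]
      rw [e, hYY, pdY_iter_add (m + 1) ((contDiff_pdX (contDiff_pdX hu))) (contDiff_const.mul hRc)]
      have t2 : pdY^[m + 1] (fun q => (-1 : ℝ) * R q) p₀ = 0 :=
        van_cmul (-1) hRc vanR 0 (m + 1) (by omega)
      have t1 : pdY^[m + 1] (pdX (pdX u)) p₀ = 0 := by
        rw [show pdY^[m + 1] (pdX (pdX u)) = pdX (pdY^[m + 1] (pdX u)) from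
            (pdX_pdY_iter (contDiff_pdX hu) (m + 1)).symm,
          show pdY^[m + 1] (pdX u) = pdX (pdY^[m + 1] u) from
            (pdX_pdY_iter hu (m + 1)).symm]
        exact mixed 1 m (by omega)
      simp only
      rw [t1, t2, add_zero]


lemma orders_lemma
    (hu : ContDiff ℝ (⊤ : ℕ∞) u) (hh : ContDiff ℝ (⊤ : ℕ∞) h)
    (heq1 : ∀ p : ℝ × ℝ, pdX (pdY u) p = pdY u p * pdX h p + pdX u p * pdY h p)
    (heq2 : ∀ p : ℝ × ℝ,
      pdX (pdX u) p - pdY (pdY u) p = -2 * pdX u p * pdX h p + 2 * pdY u p * pdY h p)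
    (hc1 : pdX u p₀ = 0) (hc2 : pdY u p₀ = 0) (hc3 : pdX (pdX u) p₀ = 0) :
    ∀ N i j, i + j ≤ N + 1 → 1 ≤ i + j → Dij i j u p₀ = 0 := by
  intro N
  induction N with
  | zero =>
      intro i j h1 h2
      have hd : (i = 1 ∧ j = 0) ∨ (i = 0 ∧ j = 1) := by omega
      rcases hd with ⟨hi, hj⟩ | ⟨hi, hj⟩ <;> subst hi <;> subst hj
      · exact hc1
      · exact hc2
  | succ N ih =>
      intro i j h1 h2
      by_cases hN : i + j ≤ N + 1
      · exact ih i j hN h2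
      · have hij : i + j = N + 2 := by omega
        match N, ih with
        | 0, _ =>
            -- second order derivatives
            have hd : (i = 2 ∧ j = 0) ∨ (i = 1 ∧ j = 1) ∨ (i = 0 ∧ j = 2) := by omega
            rcases hd with ⟨hi, hj⟩ | ⟨hi, hj⟩ | ⟨hi, hj⟩ <;> subst hi <;> subst hj
            · show pdX (pdX u) p₀ = 0
              exact hc3
            · show pdX (pdY u) p₀ = 0
              rw [heq1 p₀, hc1, hc2]; ring
            · show pdY (pdY u) p₀ = 0
              have := heq2 p₀
              rw [hc1, hc2, hc3] at this
              linarith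
        | (M + 1), ih =>
            exact step_lemma hu hh heq1 heq2 M (fun a b hab h1b => ih a b hab h1b) i j (by omega)

/-! ### From infinite flatness to constancy -/

/-- all mixed partials (including order 0) vanish at `p₀` -/
def FlatAll (p₀ : ℝ × ℝ) (w : ℝ × ℝ → ℝ) : Prop := ∀ i j : ℕ, Dij i j w p₀ = 0

lemma FlatAll.pdX' (hw : ContDiff ℝ (⊤ : ℕ∞) w) (hf : FlatAll p₀ w) : FlatAll p₀ (pdX w) :=
  fun i j => by rw [Dij_pdX hw]; exact hf _ _

lemma FlatAll.pdY' (hf : FlatAll p₀ w) : FlatAll p₀ (pdY w) :=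
  fun i j => by rw [Dij_pdY]; exact hf _ _

lemma FlatAll.add (hf : ContDiff ℝ (⊤ : ℕ∞) f) (hg : ContDiff ℝ (⊤ : ℕ∞) g)
    (h1 : FlatAll p₀ f) (h2 : FlatAll p₀ g) : FlatAll p₀ (fun q => f q + g q) :=
  fun i j => by rw [Dij_add i j hf hg]; simp only; rw [h1 i j, h2 i j, add_zero]

lemma FlatAll.cmul (c : ℝ) (hf : ContDiff ℝ (⊤ : ℕ∞) f) (h1 : FlatAll p₀ f) :
    FlatAll p₀ (fun q => c * f q) :=
  fun i j => by rw [Dij_cmul i j c hf]; simp only; rw [h1 i j, mul_zero]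

/-- directional derivative operator -/
noncomputable def Lop (w₁ w₂ : ℝ) (φ : ℝ × ℝ → ℝ) : ℝ × ℝ → ℝ :=
  fun q => w₁ * pdX φ q + w₂ * pdY φ q

lemma contDiff_Lop (w₁ w₂ : ℝ) (hφ : ContDiff ℝ (⊤ : ℕ∞) φ) : ContDiff ℝ (⊤ : ℕ∞) (Lop w₁ w₂ φ) :=
  (contDiff_const.mul (contDiff_pdX hφ)).add (contDiff_const.mul (contDiff_pdY hφ))

lemma FlatAll.lop (w₁ w₂ : ℝ) (hφ : ContDiff ℝ (⊤ : ℕ∞) φ) (hf : FlatAll p₀ φ) :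
    FlatAll p₀ (Lop w₁ w₂ φ) :=
  FlatAll.add (contDiff_const.mul (contDiff_pdX hφ)) (contDiff_const.mul (contDiff_pdY hφ))
    (FlatAll.cmul w₁ (contDiff_pdX hφ) (hf.pdX' hφ)) (FlatAll.cmul w₂ (contDiff_pdY hφ) hf.pdY')

lemma fderiv_apply_pd (hw : DifferentiableAt ℝ w p) (v₁ v₂ : ℝ) :
    fderiv ℝ w p (v₁, v₂) = v₁ * pdX w p + v₂ * pdY w p := by
  have hv : (v₁, v₂) = v₁ • ((1 : ℝ), (0 : ℝ)) + v₂ • ((0 : ℝ), (1 : ℝ)) := by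
    simp [Prod.ext_iff]
  rw [hv, map_add, map_smul, map_smul, pdX_eq hw, pdY_eq hw, smul_eq_mul, smul_eq_mul]

lemma deriv_comp_line (hφ : ContDiff ℝ (⊤ : ℕ∞) φ) (a : ℝ × ℝ) (w₁ w₂ : ℝ) (t : ℝ) :
    deriv (fun s => φ (a.1 + s * w₁, a.2 + s * w₂)) t
      = Lop w₁ w₂ φ (a.1 + t * w₁, a.2 + t * w₂) := by
  have hline : HasDerivAt (fun s : ℝ => (a.1 + s * w₁, a.2 + s * w₂)) (1 * w₁, 1 * w₂) t := by
    exact ((((hasDerivAt_id t).mul_const w₁).const_add a.1)).prodMk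
      ((((hasDerivAt_id t).mul_const w₂).const_add a.2))
  have hd := (hφ.differentiable oneLe (a.1 + t * w₁, a.2 + t * w₂)).hasFDerivAt
  have h3 : HasDerivAt (fun s => φ (a.1 + s * w₁, a.2 + s * w₂))
      (fderiv ℝ φ (a.1 + t * w₁, a.2 + t * w₂) (1 * w₁, 1 * w₂)) t :=
    hd.comp_hasDerivAt t hline
  rw [h3.deriv, fderiv_apply_pd (hφ.differentiable oneLe _)]
  simp [Lop]

lemma deriv_iter_comp_line (hφ : ContDiff ℝ (⊤ : ℕ∞) φ) (a : ℝ × ℝ) (w₁ w₂ : ℝ) (n : ℕ) :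
    deriv^[n] (fun s => φ (a.1 + s * w₁, a.2 + s * w₂))
      = fun s => ((Lop w₁ w₂)^[n] φ) (a.1 + s * w₁, a.2 + s * w₂) := by
  induction n generalizing φ with
  | zero => rfl
  | succ n ih =>
      rw [Function.iterate_succ_apply, Function.iterate_succ_apply]
      have hder : deriv (fun s => φ (a.1 + s * w₁, a.2 + s * w₂))
          = fun s => (Lop w₁ w₂ φ) (a.1 + s * w₁, a.2 + s * w₂) :=
        funext fun t => deriv_comp_line hφ a w₁ w₂ t
      rw [hder]
      exact ih (contDiff_Lop w₁ w₂ hφ)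


lemma contDiff_Lop_iter (w₁ w₂ : ℝ) (n : ℕ) {φ : ℝ × ℝ → ℝ} (hφ : ContDiff ℝ (⊤ : ℕ∞) φ) :
    ContDiff ℝ (⊤ : ℕ∞) ((Lop w₁ w₂)^[n] φ) := by
  induction n generalizing φ with
  | zero => exact hφ
  | succ n ih =>
      rw [Function.iterate_succ_apply]
      exact ih (contDiff_Lop w₁ w₂ hφ)

lemma const_of_flat (huan : AnalyticOnNhd ℝ u Set.univ)
    (hflat : ∀ i j : ℕ, 1 ≤ i + j → Dij i j u p₀ = 0) :
    ∀ q : ℝ × ℝ, u q = u p₀ := by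
  have hu : ContDiff ℝ (⊤ : ℕ∞) u := contDiffOn_univ.mp (huan.contDiffOn uniqueDiffOn_univ)
  intro q
  set w₁ : ℝ := q.1 - p₀.1 with hw₁
  set w₂ : ℝ := q.2 - p₀.2 with hw₂
  set v : ℝ → ℝ := fun s => u (p₀.1 + s * w₁, p₀.2 + s * w₂) with hv
  have hline : AnalyticOnNhd ℝ (fun s : ℝ => (p₀.1 + s * w₁, p₀.2 + s * w₂)) Set.univ :=
    (analyticOnNhd_const.add (analyticOnNhd_id.mul analyticOnNhd_const)).prod
      (analyticOnNhd_const.add (analyticOnNhd_id.mul analyticOnNhd_const))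
  have hva : AnalyticOnNhd ℝ v Set.univ := huan.comp hline (Set.mapsTo_univ _ _)
  have flatX : FlatAll p₀ (pdX u) := fun i j => by rw [Dij_pdX hu]; exact hflat _ _ (by omega)
  have flatY : FlatAll p₀ (pdY u) := fun i j => by rw [Dij_pdY]; exact hflat _ _ (by omega)
  have flatL : FlatAll p₀ (Lop w₁ w₂ u) :=
    FlatAll.add (contDiff_const.mul (contDiff_pdX hu)) (contDiff_const.mul (contDiff_pdY hu))
      (FlatAll.cmul w₁ (contDiff_pdX hu) flatX) (FlatAll.cmul w₂ (contDiff_pdY hu) flatY)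
  have flatLn : ∀ n, FlatAll p₀ ((Lop w₁ w₂)^[n + 1] u) := by
    intro n
    induction n with
    | zero => exact flatL
    | succ n ih =>
        rw [Function.iterate_succ_apply']
        exact ih.lop w₁ w₂ (contDiff_Lop_iter w₁ w₂ (n + 1) hu)
  have hvd : ∀ n, 1 ≤ n → deriv^[n] v 0 = 0 := by
    intro n hn
    rw [hv, deriv_iter_comp_line hu p₀ w₁ w₂ n]
    obtain ⟨m, rfl⟩ : ∃ m, n = m + 1 := ⟨n - 1, by omega⟩
    have h0 : (p₀.1 + 0 * w₁, p₀.2 + 0 * w₂) = p₀ := by simp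
    show ((Lop w₁ w₂)^[m + 1] u) (p₀.1 + 0 * w₁, p₀.2 + 0 * w₂) = 0
    rw [h0]
    exact flatLn m 0 0
  have hva' : AnalyticOnNhd ℝ (deriv v) Set.univ := hva.deriv
  have hall : ∀ n, iteratedDeriv n (deriv v) 0 = 0 := by
    intro n
    have h1 : iteratedDeriv (n + 1) v 0 = 0 := by
      rw [iteratedDeriv_eq_iterate]; exact hvd (n + 1) (by omega)
    rwa [iteratedDeriv_succ'] at h1
  obtain ⟨pser, hp⟩ := hva' 0 (Set.mem_univ 0)
  obtain ⟨r, hpr⟩ := hp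
  have hcoeff : ∀ n, pser.coeff n = 0 := by
    intro n
    have h1 := hpr.factorial_smul (1 : ℝ) n
    rw [← iteratedDeriv_eq_iteratedFDeriv, hall n] at h1
    have h2 : (n.factorial : ℝ) * pser.coeff n = 0 := by
      have hc : pser.coeff n = pser n (fun _ => 1) := rfl
      rw [hc, ← nsmul_eq_mul]
      exact h1
    have h3 : (n.factorial : ℝ) ≠ 0 := by positivity
    exact (mul_eq_zero.mp h2).resolve_left h3
  have hz : ∀ᶠ z in nhds (0 : ℝ), deriv v z = 0 := by
    refine Filter.eventually_of_mem (EMetric.ball_mem_nhds _ hpr.r_pos) ?_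
    intro z hz
    have hsum := hpr.hasSum (by simpa using hz)
    have hz0 : ∀ n, (pser n fun _ => z) = 0 := by
      intro n
      rw [FormalMultilinearSeries.apply_eq_pow_smul_coeff, hcoeff n, smul_zero]
    simp only [hz0] at hsum
    have := hsum.unique hasSum_zero
    simpa using this
  have heqz : Set.EqOn (deriv v) 0 Set.univ :=
    hva'.eqOn_zero_of_preconnected_of_eventuallyEq_zero isPreconnected_univ (Set.mem_univ 0) hz
  have hdiff : Differentiable ℝ v := fun s => (hva s (Set.mem_univ s)).differentiableAt
  have hconst := is_const_of_deriv_eq_zero hdiff (fun s => heqz (Set.mem_univ s)) 1 0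
  have e1 : v 1 = u q := by
    rw [hv]
    simp only
    congr 1
    rw [Prod.ext_iff]
    constructor
    · simp [hw₁]
    · simp [hw₂]
  have e0 : v 0 = u p₀ := by
    rw [hv]
    simp only
    congr 1
    rw [Prod.ext_iff]
    simp
  rw [← e1, ← e0, hconst]


end Orders

/-! ### Periodicity -/

def Per (w : ℝ × ℝ → ℝ) : Prop :=
  ∀ x y : ℝ, w (x + 1, y) = w (x, y) ∧ w (x, y + 1) = w (x, y)

lemma Per.pdX' (hper : Per w) : Per (pdX w) := by
  intro x y
  constructor
  · show deriv (fun s => w (s, y)) (x + 1) = deriv (fun s => w (s, y)) x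
    have h1 : (fun s => (fun s' => w (s', y)) (s + 1)) = fun s => w (s, y) :=
      funext fun s => (hper s y).1
    rw [← deriv_comp_add_const (fun s' => w (s', y)) 1 x, h1]
  · show deriv (fun s => w (s, y + 1)) x = deriv (fun s => w (s, y)) x
    have h1 : (fun s => w (s, y + 1)) = fun s => w (s, y) := funext fun s => (hper s y).2
    rw [h1]

lemma Per.pdY' (hper : Per w) : Per (pdY w) := by
  intro x y
  constructor
  · show deriv (fun t => w (x + 1, t)) y = deriv (fun t => w (x, t)) y
    have h1 : (fun t => w (x + 1, t)) = fun t => w (x, t) := funext fun t => (hper x t).1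
    rw [h1]
  · show deriv (fun t => w (x, t)) (y + 1) = deriv (fun t => w (x, t)) y
    have h1 : (fun t => (fun t' => w (x, t')) (t + 1)) = fun t => w (x, t) :=
      funext fun t => (hper x t).2
    rw [← deriv_comp_add_const (fun t' => w (x, t')) 1 y, h1]

lemma Per.mulw {f g : ℝ × ℝ → ℝ} (h1 : Per f) (h2 : Per g) : Per (fun p => f p * g p) := by
  intro x y
  constructor
  · simp only [(h1 x y).1, (h2 x y).1]
  · simp only [(h1 x y).2, (h2 x y).2]

/-! ### Vanishing of integrals of partial derivatives over a fundamental square -/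

open MeasureTheory in
lemma integrableOn_sq {G : ℝ × ℝ → ℝ} (hG : Continuous G) (s : Set (ℝ × ℝ)) (hs : IsCompact s) :
    IntegrableOn G s :=
  hG.continuousOn.integrableOn_compact hs

open MeasureTheory in
lemma integral_pdY_eq_zero {G : ℝ × ℝ → ℝ} (hG : ContDiff ℝ (⊤ : ℕ∞) G) (hper : Per G) (c d : ℝ) :
    ∫ p in Set.Icc c (c + 1) ×ˢ Set.Icc d (d + 1), pdY G p = 0 := by
  have hcont : Continuous (pdY G) := (contDiff_pdY hG).continuous
  have hint : IntegrableOn (pdY G) (Set.Icc c (c + 1) ×ˢ Set.Icc d (d + 1)) :=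
    integrableOn_sq hcont _ (isCompact_Icc.prod isCompact_Icc)
  rw [Measure.volume_eq_prod] at hint ⊢
  rw [setIntegral_prod _ hint]
  have inner : ∀ x : ℝ, (∫ y in Set.Icc d (d + 1), pdY G (x, y)) = 0 := by
    intro x
    have hle : d ≤ d + 1 := by linarith
    rw [integral_Icc_eq_integral_Ioc, ← intervalIntegral.integral_of_le hle]
    have hder : ∀ y ∈ Set.uIcc d (d + 1), HasDerivAt (fun t => G (x, t)) (pdY G (x, y)) y :=
      fun y _ => hasDerivAt_pdY (p := (x, y)) (hG.differentiable oneLe _)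
    have hint2 : IntervalIntegrable (fun y => pdY G (x, y)) volume d (d + 1) :=
      (hcont.comp (continuous_const.prodMk continuous_id)).intervalIntegrable d (d + 1)
    rw [intervalIntegral.integral_eq_sub_of_hasDerivAt hder hint2]
    rw [(hper x d).2, sub_self]
  simp only [inner, integral_zero]

open MeasureTheory in
lemma integral_pdX_eq_zero {G : ℝ × ℝ → ℝ} (hG : ContDiff ℝ (⊤ : ℕ∞) G) (hper : Per G) (c d : ℝ) :
    ∫ p in Set.Icc c (c + 1) ×ˢ Set.Icc d (d + 1), pdX G p = 0 := by
  have hcont : Continuous (pdX G) := (contDiff_pdX hG).continuous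
  have hint : IntegrableOn (pdX G) (Set.Icc c (c + 1) ×ˢ Set.Icc d (d + 1)) :=
    integrableOn_sq hcont _ (isCompact_Icc.prod isCompact_Icc)
  rw [Measure.volume_eq_prod] at hint ⊢
  rw [setIntegral_prod _ hint]
  have hswap : (∫ x in Set.Icc c (c + 1), ∫ y in Set.Icc d (d + 1), pdX G (x, y))
      = ∫ y in Set.Icc d (d + 1), ∫ x in Set.Icc c (c + 1), pdX G (x, y) := by
    apply integral_integral_swap
    rw [Measure.prod_restrict]
    exact hint
  rw [hswap]
  have inner : ∀ y : ℝ, (∫ x in Set.Icc c (c + 1), pdX G (x, y)) = 0 := by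
    intro y
    have hle : c ≤ c + 1 := by linarith
    rw [integral_Icc_eq_integral_Ioc, ← intervalIntegral.integral_of_le hle]
    have hder : ∀ x ∈ Set.uIcc c (c + 1), HasDerivAt (fun s => G (s, y)) (pdX G (x, y)) x :=
      fun x _ => hasDerivAt_pdX (p := (x, y)) (hG.differentiable oneLe _)
    have hint2 : IntervalIntegrable (fun x => pdX G (x, y)) volume c (c + 1) :=
      (hcont.comp (continuous_id.prodMk continuous_const)).intervalIntegrable c (c + 1)
    rw [intervalIntegral.integral_eq_sub_of_hasDerivAt hder hint2]
    rw [(hper c y).1, sub_self]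
  simp only [inner, integral_zero]


/-! ### The divergence identity -/

noncomputable def Abump (a : ContDiffBump (0 : ℝ)) : ℝ → ℝ := fun x => ∫ t in (0 : ℝ)..x, a t

lemma Abump_hasDerivAt (a : ContDiffBump (0 : ℝ)) (x : ℝ) : HasDerivAt (Abump a) (a x) x :=
  (a.continuous.integral_hasStrictDerivAt 0 x).hasDerivAt

lemma Abump_contDiff (a : ContDiffBump (0 : ℝ)) : ContDiff ℝ (⊤ : ℕ∞) (Abump a) := by
  rw [contDiff_infty_iff_deriv]
  refine ⟨fun x => (Abump_hasDerivAt a x).differentiableAt, ?_⟩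
  have hd : deriv (Abump a) = a := funext fun x => (Abump_hasDerivAt a x).deriv
  rw [hd]; exact a.contDiff

section DivIdentity

variable {P Q : ℝ × ℝ → ℝ}

lemma hasDerivAt_bump (a : ContDiffBump (0 : ℝ)) (z : ℝ) : HasDerivAt a (deriv a z) z :=
  ((a.contDiff.differentiable oneLe) z).hasDerivAt

lemma contDiff_W (hP : ContDiff ℝ (⊤ : ℕ∞) P) (hQ : ContDiff ℝ (⊤ : ℕ∞) Q) (a : ContDiffBump (0 : ℝ)) :
    ContDiff ℝ (⊤ : ℕ∞) (fun p' => Abump a (P p') * a (Q p')) :=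
  ((Abump_contDiff a).comp hP).mul (a.contDiff.comp hQ)

lemma pdX_W (hP : ContDiff ℝ (⊤ : ℕ∞) P) (hQ : ContDiff ℝ (⊤ : ℕ∞) Q) (a : ContDiffBump (0 : ℝ)) (p : ℝ × ℝ) :
    pdX (fun p' => Abump a (P p') * a (Q p')) p
      = (a (P p) * pdX P p) * a (Q p) + Abump a (P p) * (deriv a (Q p) * pdX Q p) := by
  have h1 : HasDerivAt (fun s => Abump a (P (s, p.2))) (a (P p) * pdX P p) p.1 :=
    (Abump_hasDerivAt a (P p)).comp (h₂ := Abump a) (h := fun s => P (s, p.2)) p.1 (hasDerivAt_pdX (hP.differentiable oneLe p))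
  have h2 : HasDerivAt (fun s => a (Q (s, p.2))) (deriv a (Q p) * pdX Q p) p.1 :=
    (hasDerivAt_bump a (Q p)).comp (h₂ := (a : ℝ → ℝ)) (h := fun s => Q (s, p.2)) p.1 (hasDerivAt_pdX (hQ.differentiable oneLe p))
  exact (h1.mul h2).deriv

lemma pdY_W (hP : ContDiff ℝ (⊤ : ℕ∞) P) (hQ : ContDiff ℝ (⊤ : ℕ∞) Q) (a : ContDiffBump (0 : ℝ)) (p : ℝ × ℝ) :
    pdY (fun p' => Abump a (P p') * a (Q p')) p
      = (a (P p) * pdY P p) * a (Q p) + Abump a (P p) * (deriv a (Q p) * pdY Q p) := by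
  have h1 : HasDerivAt (fun t => Abump a (P (p.1, t))) (a (P p) * pdY P p) p.2 :=
    (Abump_hasDerivAt a (P p)).comp (h₂ := Abump a) (h := fun t => P (p.1, t)) p.2 (hasDerivAt_pdY (hP.differentiable oneLe p))
  have h2 : HasDerivAt (fun t => a (Q (p.1, t))) (deriv a (Q p) * pdY Q p) p.2 :=
    (hasDerivAt_bump a (Q p)).comp (h₂ := (a : ℝ → ℝ)) (h := fun t => Q (p.1, t)) p.2 (hasDerivAt_pdY (hQ.differentiable oneLe p))
  exact (h1.mul h2).deriv

lemma div_identity (hP : ContDiff ℝ (⊤ : ℕ∞) P) (hQ : ContDiff ℝ (⊤ : ℕ∞) Q) (a : ContDiffBump (0 : ℝ))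
    (p : ℝ × ℝ) :
    pdX (fun p' => (Abump a (P p') * a (Q p')) * pdY Q p') p
      - pdY (fun p' => (Abump a (P p') * a (Q p')) * pdX Q p') p
    = (a (P p) * a (Q p)) * (pdX P p * pdY Q p - pdY P p * pdX Q p) := by
  have hW : ContDiff ℝ (⊤ : ℕ∞) (fun p' => Abump a (P p') * a (Q p')) := contDiff_W hP hQ a
  rw [pdX_mul (hW.differentiable oneLe p) ((contDiff_pdY hQ).differentiable oneLe p),
    pdY_mul (hW.differentiable oneLe p) ((contDiff_pdX hQ).differentiable oneLe p),
    pdX_W hP hQ a p, pdY_W hP hQ a p, pdX_pdY hQ p]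
  ring

open MeasureTheory in
lemma integral_bump_jac_eq_zero (hP : ContDiff ℝ (⊤ : ℕ∞) P) (hQ : ContDiff ℝ (⊤ : ℕ∞) Q)
    (hperP : Per P) (hperQ : Per Q) (a : ContDiffBump (0 : ℝ)) (c d : ℝ) :
    ∫ p in Set.Icc c (c + 1) ×ˢ Set.Icc d (d + 1),
      (a (P p) * a (Q p)) * (pdX P p * pdY Q p - pdY P p * pdX Q p) = 0 := by
  have hW : ContDiff ℝ (⊤ : ℕ∞) (fun p' => Abump a (P p') * a (Q p')) := contDiff_W hP hQ a
  have hperW : Per (fun p' => Abump a (P p') * a (Q p')) := by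
    intro x y
    constructor
    · simp only [(hperP x y).1, (hperQ x y).1]
    · simp only [(hperP x y).2, (hperQ x y).2]
  have hT1 : ContDiff ℝ (⊤ : ℕ∞) (fun p' => (Abump a (P p') * a (Q p')) * pdY Q p') :=
    hW.mul (contDiff_pdY hQ)
  have hT2 : ContDiff ℝ (⊤ : ℕ∞) (fun p' => (Abump a (P p') * a (Q p')) * pdX Q p') :=
    hW.mul (contDiff_pdX hQ)
  have hperT1 : Per (fun p' => (Abump a (P p') * a (Q p')) * pdY Q p') :=
    Per.mulw hperW hperQ.pdY'
  have hperT2 : Per (fun p' => (Abump a (P p') * a (Q p')) * pdX Q p') :=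
    Per.mulw hperW hperQ.pdX'
  have hcongr : ∀ p : ℝ × ℝ,
      (a (P p) * a (Q p)) * (pdX P p * pdY Q p - pdY P p * pdX Q p)
      = pdX (fun p' => (Abump a (P p') * a (Q p')) * pdY Q p') p
        - pdY (fun p' => (Abump a (P p') * a (Q p')) * pdX Q p') p :=
    fun p => (div_identity hP hQ a p).symm
  rw [show (fun p => (a (P p) * a (Q p)) * (pdX P p * pdY Q p - pdY P p * pdX Q p))
      = fun p => pdX (fun p' => (Abump a (P p') * a (Q p')) * pdY Q p') p
        - pdY (fun p' => (Abump a (P p') * a (Q p')) * pdX Q p') p from funext hcongr]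
  have hi1 : IntegrableOn (fun p => pdX (fun p' => (Abump a (P p') * a (Q p')) * pdY Q p') p)
      (Set.Icc c (c + 1) ×ˢ Set.Icc d (d + 1)) :=
    integrableOn_sq (contDiff_pdX hT1).continuous _ (isCompact_Icc.prod isCompact_Icc)
  have hi2 : IntegrableOn (fun p => pdY (fun p' => (Abump a (P p') * a (Q p')) * pdX Q p') p)
      (Set.Icc c (c + 1) ×ˢ Set.Icc d (d + 1)) :=
    integrableOn_sq (contDiff_pdY hT2).continuous _ (isCompact_Icc.prod isCompact_Icc)
  rw [integral_sub hi1 hi2, integral_pdX_eq_zero hT1 hperT1 c d,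
    integral_pdY_eq_zero hT2 hperT2 c d, sub_self]

end DivIdentity


/-! ### Degree-theoretic contradiction -/

lemma clm_det_eq (T : (ℝ × ℝ) →L[ℝ] (ℝ × ℝ)) :
    T.det = (T (1, 0)).1 * (T (0, 1)).2 - (T (0, 1)).1 * (T (1, 0)).2 := by
  have h : T.det = LinearMap.det (T : (ℝ × ℝ) →ₗ[ℝ] (ℝ × ℝ)) := rfl
  rw [h, ← LinearMap.det_toMatrix (Module.Basis.finTwoProd ℝ), Matrix.det_fin_two]
  simp [LinearMap.toMatrix_apply, Module.Basis.finTwoProd]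

open MeasureTheory Metric in
lemma degree_contradiction {P Q : ℝ × ℝ → ℝ}
    (hP : ContDiff ℝ (⊤ : ℕ∞) P) (hQ : ContDiff ℝ (⊤ : ℕ∞) Q)
    (hperP : Per P) (hperQ : Per Q)
    (p₀ : ℝ × ℝ) (hP0 : P p₀ = 0) (hQ0 : Q p₀ = 0)
    (hjac : ∀ p : ℝ × ℝ, P p = 0 → Q p = 0 →
      0 < pdX P p * pdY Q p - pdY P p * pdX Q p) : False := by
  classical
  set F : ℝ × ℝ → ℝ × ℝ := fun p => (P p, Q p) with hFdef
  set jac : ℝ × ℝ → ℝ := fun p => pdX P p * pdY Q p - pdY P p * pdX Q p with hjacdef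
  have hFsm : ContDiff ℝ (⊤ : ℕ∞) F := hP.prodMk hQ
  have hFc : Continuous F := hFsm.continuous
  have hjc : Continuous jac := by
    exact (((contDiff_pdX hP).continuous.mul (contDiff_pdY hQ).continuous).sub
      ((contDiff_pdY hP).continuous.mul (contDiff_pdX hQ).continuous))
  have hF0 : F p₀ = 0 := by
    rw [hFdef]; simp only; rw [hP0, hQ0]; rfl
  -- determinant of the derivative equals jac
  have hFdiff : ∀ p : ℝ × ℝ, HasFDerivAt F ((fderiv ℝ P p).prod (fderiv ℝ Q p)) p := fun p =>
    (hP.differentiable oneLe p).hasFDerivAt.prodMk (hQ.differentiable oneLe p).hasFDerivAt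
  have hfderivF : ∀ p, fderiv ℝ F p = (fderiv ℝ P p).prod (fderiv ℝ Q p) :=
    fun p => (hFdiff p).fderiv
  have hdet : ∀ p, (fderiv ℝ F p).det = jac p := by
    intro p
    rw [clm_det_eq (fderiv ℝ F p), hfderivF p]
    simp only [ContinuousLinearMap.prod_apply]
    rw [← pdX_eq (hP.differentiable oneLe p), ← pdX_eq (hQ.differentiable oneLe p),
      ← pdY_eq (hP.differentiable oneLe p), ← pdY_eq (hQ.differentiable oneLe p)]
  -- local homeomorphism at p₀
  have hj0 : 0 < jac p₀ := hjac p₀ hP0 hQ0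
  have hd0 : (fderiv ℝ F p₀).det ≠ 0 := by rw [hdet]; exact hj0.ne'
  set E0 := (fderiv ℝ F p₀).toContinuousLinearEquivOfDetNeZero hd0 with hE0
  have hstrict : HasStrictFDerivAt F (E0 : (ℝ × ℝ) →L[ℝ] (ℝ × ℝ)) p₀ := by
    rw [hE0, ContinuousLinearMap.coe_toContinuousLinearEquivOfDetNeZero]
    exact hFsm.contDiffAt.hasStrictFDerivAt oneLe
  set PH := hstrict.toOpenPartialHomeomorph F with hPH
  have hPHcoe : (PH : ℝ × ℝ → ℝ × ℝ) = F := rfl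
  have hsrc : p₀ ∈ PH.source := hstrict.mem_toOpenPartialHomeomorph_source
  have hjopen : IsOpen {p : ℝ × ℝ | 0 < jac p} := isOpen_lt continuous_const hjc
  -- radius r₀
  obtain ⟨r₁, hr₁pos, hr₁sub⟩ := Metric.isOpen_iff.mp (PH.open_source.inter hjopen) p₀
    ⟨hsrc, hj0⟩
  set r₀ : ℝ := min (r₁ / 2) 4⁻¹ with hr₀
  have hr₀pos : 0 < r₀ := by
    apply lt_min (by linarith) (by norm_num)
  have hr₀lt : r₀ < r₁ := by
    calc r₀ ≤ r₁ / 2 := min_le_left _ _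
    _ < r₁ := by linarith
  have hballsub : ball p₀ r₀ ⊆ PH.source ∩ {p : ℝ × ℝ | 0 < jac p} :=
    fun p hp => hr₁sub (lt_trans hp hr₀lt : p ∈ ball p₀ r₁)
  have hballsrc : ball p₀ r₀ ⊆ PH.source := fun p hp => (hballsub hp).1
  have hballjac : ∀ p ∈ ball p₀ r₀, 0 < jac p := fun p hp => (hballsub hp).2
  -- image of the ball contains a ball around 0
  have himgopen : IsOpen (F '' ball p₀ r₀) := by
    rw [← hPHcoe]
    exact PH.isOpen_image_of_subset_source isOpen_ball hballsrc
  have h0mem : (0 : ℝ × ℝ) ∈ F '' ball p₀ r₀ :=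
    ⟨p₀, mem_ball_self hr₀pos, hF0⟩
  obtain ⟨ε₀, hε₀pos, hε₀sub⟩ := Metric.isOpen_iff.mp himgopen 0 h0mem
  -- injectivity
  have hinj : Set.InjOn F (ball p₀ r₀) := by
    have h := PH.injOn
    rw [hPHcoe] at h
    exact h.mono hballsrc
  -- the unit square centered at p₀
  set c : ℝ := p₀.1 - 2⁻¹ with hc
  set d : ℝ := p₀.2 - 2⁻¹ with hd
  set SQ : Set (ℝ × ℝ) := Set.Icc c (c + 1) ×ˢ Set.Icc d (d + 1) with hSQ
  have hSQcomp : IsCompact SQ := isCompact_Icc.prod isCompact_Icc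
  have hSQmeas : MeasurableSet SQ := (measurableSet_Icc.prod measurableSet_Icc)
  -- δ such that small ‖F p‖ on SQ implies jac p > 0
  have hδ : ∃ δ > 0, ∀ p ∈ SQ, ‖F p‖ < δ → 0 < jac p := by
    set K := SQ \ {p : ℝ × ℝ | 0 < jac p} with hK
    have hKcomp : IsCompact K := hSQcomp.diff hjopen
    rcases eq_empty_or_nonempty K with hKe | hKne
    · refine ⟨1, one_pos, fun p hp _ => ?_⟩
      by_contra hneg
      exact (Set.eq_empty_iff_forall_notMem.mp hKe p) ⟨hp, hneg⟩
    · obtain ⟨pK, hpK, hpKmin⟩ := hKcomp.exists_isMinOn hKne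
        (hFc.norm.continuousOn)
      have hFK : F pK ≠ 0 := by
        intro h0
        exact hpK.2 (hjac pK (congrArg Prod.fst h0) (congrArg Prod.snd h0))
      refine ⟨‖F pK‖, norm_pos_iff.mpr hFK, fun p hp hlt => ?_⟩
      by_contra hneg
      have : pK ∈ K → ‖F pK‖ ≤ ‖F p‖ := fun _ => hpKmin ⟨hp, hneg⟩
      exact absurd (this hpK) (not_le.mpr hlt)
  obtain ⟨δ, hδpos, hδprop⟩ := hδ
  set ε : ℝ := min δ ε₀ with hε
  have hεpos : 0 < ε := lt_min hδpos hε₀pos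
  -- bump function
  set a : ContDiffBump (0 : ℝ) := ⟨ε / 4, ε / 2, by positivity, by linarith⟩ with ha
  have hsupp : ∀ z : ℝ, a z ≠ 0 → |z| < ε / 2 := by
    intro z hz
    have : z ∈ Function.support a := hz
    rw [a.support_eq] at this
    simpa [Real.dist_eq] using this
  have hbump_pos : ∀ z : ℝ, |z| < ε / 2 → 0 < a z := by
    intro z hz
    exact a.pos_of_mem_ball (by simpa [Real.dist_eq] using hz)
  -- the integrand
  set g : ℝ × ℝ → ℝ := fun p => (a (P p) * a (Q p)) * jac p with hg
  have hgc : Continuous g := ((a.continuous.comp hP.continuous).mul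
    (a.continuous.comp hQ.continuous)).mul hjc
  have hgz : ∫ p in SQ, g p = 0 := by
    have := integral_bump_jac_eq_zero hP hQ hperP hperQ a c d
    simpa [hSQ, hg, hjacdef] using this
  -- nonnegativity on SQ
  have hnorm : ∀ p : ℝ × ℝ, a (P p) * a (Q p) ≠ 0 → ‖F p‖ < ε := by
    intro p hpne
    have h1 : a (P p) ≠ 0 := fun h => hpne (by rw [h, zero_mul])
    have h2 : a (Q p) ≠ 0 := fun h => hpne (by rw [h, mul_zero])
    have e1 := hsupp _ h1
    have e2 := hsupp _ h2
    have : ‖F p‖ = max ‖P p‖ ‖Q p‖ := rfl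
    rw [this]
    rw [Real.norm_eq_abs, Real.norm_eq_abs]
    apply max_lt <;> linarith
  have hgnn : ∀ p ∈ SQ, 0 ≤ g p := by
    intro p hp
    rcases eq_or_ne (a (P p) * a (Q p)) 0 with h0 | h0
    · rw [hg]; simp only; rw [h0, zero_mul]
    · have hjp : 0 < jac p := hδprop p hp (lt_of_lt_of_le (hnorm p h0) (min_le_left _ _))
      have h1 : 0 ≤ a (P p) := a.nonneg' _
      have h2 : 0 ≤ a (Q p) := a.nonneg' _
      positivity
  -- the positive piece
  set s' : Set (ℝ × ℝ) := ball p₀ r₀ ∩ F ⁻¹' (ball (0 : ℝ × ℝ) ε) with hs'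
  have hs'open : IsOpen s' := isOpen_ball.inter (isOpen_ball.preimage hFc)
  have hs'meas : MeasurableSet s' := hs'open.measurableSet
  have hs'sub : s' ⊆ SQ := by
    intro p hp
    have hd1 : dist p p₀ < 4⁻¹ := lt_of_lt_of_le hp.1 (min_le_right _ _)
    have h1 : dist p.1 p₀.1 < 4⁻¹ :=
      lt_of_le_of_lt (by rw [Prod.dist_eq]; exact le_max_left _ _) hd1
    have h2 : dist p.2 p₀.2 < 4⁻¹ :=
      lt_of_le_of_lt (by rw [Prod.dist_eq]; exact le_max_right _ _) hd1
    rw [Real.dist_eq, abs_lt] at h1 h2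
    constructor
    · rw [hc]; constructor <;> [linarith [h1.1]; linarith [h1.2]]
    · rw [hd]; constructor <;> [linarith [h2.1]; linarith [h2.2]]
  have himg' : F '' s' = ball (0 : ℝ × ℝ) ε := by
    apply Set.Subset.antisymm
    · rintro y ⟨p, hp, rfl⟩
      exact hp.2
    · intro y hy
      have : y ∈ F '' ball p₀ r₀ := hε₀sub (lt_of_lt_of_le hy (min_le_right δ ε₀) : y ∈ ball 0 ε₀)
      obtain ⟨p, hp, rfl⟩ := this
      exact ⟨p, ⟨hp, hy⟩, rfl⟩
  have hCoV : ∫ y in F '' s', a y.1 * a y.2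
      = ∫ p in s', |(fderiv ℝ F p).det| • (a ((F p).1) * a ((F p).2)) :=
    integral_image_eq_integral_abs_det_fderiv_smul volume hs'meas
      (fun x _ => ((hFsm.differentiable oneLe x).hasFDerivAt).hasFDerivWithinAt)
      (hinj.mono Set.inter_subset_left) _
  have hint_eq : ∫ p in s', |(fderiv ℝ F p).det| • (a ((F p).1) * a ((F p).2))
      = ∫ p in s', g p := by
    apply setIntegral_congr_fun hs'meas
    intro p hp
    have hjp : 0 < jac p := hballjac p hp.1
    show |(fderiv ℝ F p).det| • (a (P p) * a (Q p)) = (a (P p) * a (Q p)) * jac p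
    rw [hdet p, abs_of_pos hjp, smul_eq_mul]
    ring
  have hφpos : 0 < ∫ y in ball (0 : ℝ × ℝ) ε, a y.1 * a y.2 := by
    have hφc : Continuous (fun y : ℝ × ℝ => a y.1 * a y.2) :=
      (a.continuous.comp continuous_fst).mul (a.continuous.comp continuous_snd)
    have hnn : 0 ≤ᵐ[volume.restrict (ball (0 : ℝ × ℝ) ε)] fun y : ℝ × ℝ => a y.1 * a y.2 :=
      Filter.Eventually.of_forall fun y => mul_nonneg (a.nonneg' _) (a.nonneg' _)
    have hintb : IntegrableOn (fun y : ℝ × ℝ => a y.1 * a y.2) (ball (0 : ℝ × ℝ) ε) :=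
      (integrableOn_sq hφc _ (isCompact_closedBall 0 ε)).mono_set ball_subset_closedBall
    rw [setIntegral_pos_iff_support_of_nonneg_ae hnn hintb]
    have hsub : ball (0 : ℝ × ℝ) (ε / 4)
        ⊆ Function.support (fun y : ℝ × ℝ => a y.1 * a y.2) ∩ ball (0 : ℝ × ℝ) ε := by
      intro y hy
      have hy' : dist y (0 : ℝ × ℝ) < ε / 4 := mem_ball.mp hy
      have hy1 : dist y.1 (0 : ℝ) < ε / 4 :=
        lt_of_le_of_lt (by rw [Prod.dist_eq]; exact le_max_left _ _) hy'
      have hy2 : dist y.2 (0 : ℝ) < ε / 4 :=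
        lt_of_le_of_lt (by rw [Prod.dist_eq]; exact le_max_right _ _) hy'
      rw [Real.dist_eq, sub_zero] at hy1 hy2
      constructor
      · have b1 : 0 < a y.1 := hbump_pos _ (by linarith)
        have b2 : 0 < a y.2 := hbump_pos _ (by linarith)
        exact Function.mem_support.mpr (by positivity)
      · exact mem_ball.mpr (lt_of_lt_of_le (mem_ball.mp hy) (by linarith))
    exact lt_of_lt_of_le (measure_ball_pos volume 0 (by positivity)) (measure_mono hsub)
  have hintSQ : IntegrableOn g SQ := integrableOn_sq hgc _ hSQcomp
  have hmono : ∫ p in s', g p ≤ ∫ p in SQ, g p := by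
    apply setIntegral_mono_set hintSQ
    · exact (ae_restrict_iff' hSQmeas).mpr (Filter.Eventually.of_forall hgnn)
    · exact HasSubset.Subset.eventuallyLE hs'sub
  rw [himg'] at hCoV
  rw [hCoV, hint_eq] at hφpos
  linarith [hgz, hmono, hφpos]


lemma Per.int_shift {w : ℝ × ℝ → ℝ} (hper : Per w) (m n : ℤ) (x y : ℝ) :
    w (x + m, y + n) = w (x, y) := by
  have h1 : Function.Periodic (fun s => w (s, y + n)) 1 := fun s => (hper s (y + n)).1
  have h2 : Function.Periodic (fun t => w (x, t)) 1 := fun t => (hper x t).2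
  calc w (x + m, y + n) = w (x, y + n) := by
        have := (h1.int_mul m) x
        simpa using this
    _ = w (x, y) := by
        have := (h2.int_mul n) y
        simpa using this

lemma exists_max {w : ℝ × ℝ → ℝ} (hw : Continuous w) (hper : Per w) :
    ∃ p : ℝ × ℝ, ∀ q : ℝ × ℝ, w q ≤ w p := by
  set K : Set (ℝ × ℝ) := Set.Icc (0 : ℝ) 1 ×ˢ Set.Icc (0 : ℝ) 1 with hK
  have hKcomp : IsCompact K := isCompact_Icc.prod isCompact_Icc
  have hKne : K.Nonempty := ⟨(0, 0), by constructor <;> constructor <;> norm_num⟩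
  obtain ⟨p, hpK, hmax⟩ := hKcomp.exists_isMaxOn hKne hw.continuousOn
  refine ⟨p, fun q => ?_⟩
  have hfr : w (Int.fract q.1, Int.fract q.2) = w q := by
    have := hper.int_shift ⌊q.1⌋ ⌊q.2⌋ (Int.fract q.1) (Int.fract q.2)
    rw [Int.fract_add_floor, Int.fract_add_floor] at this
    exact this.symm
  rw [← hfr]
  exact hmax ⟨⟨(Int.fract_nonneg q.1), (Int.fract_lt_one q.1).le⟩,
    ⟨(Int.fract_nonneg q.2), (Int.fract_lt_one q.2).le⟩⟩

lemma max_crit {w : ℝ × ℝ → ℝ} (p : ℝ × ℝ) (hmax : ∀ q : ℝ × ℝ, w q ≤ w p) :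
    pdX w p = 0 ∧ pdY w p = 0 := by
  constructor
  · apply IsLocalMax.deriv_eq_zero
    exact Filter.Eventually.of_forall fun s => hmax (s, p.2)
  · apply IsLocalMax.deriv_eq_zero
    exact Filter.Eventually.of_forall fun s => hmax (p.1, s)

end PASaux

/-- If `u` is real-analytic and `h` is smooth on `ℝ²`, both `ℤ²`-periodic, and they
satisfy `u_{xy} = u_y h_x + u_x h_y` and `u_{xx} − u_{yy} = −2 u_x h_x + 2 u_y h_y`
everywhere, then `u` is constant. -/
theorem periodic_analytic_system_constant
    (u h : ℝ × ℝ → ℝ)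
    (huan : AnalyticOnNhd ℝ u Set.univ)
    (hhsm : ContDiff ℝ (⊤ : ℕ∞) h)
    (huper : ∀ x y : ℝ, u (x + 1, y) = u (x, y) ∧ u (x, y + 1) = u (x, y))
    (hhper : ∀ x y : ℝ, h (x + 1, y) = h (x, y) ∧ h (x, y + 1) = h (x, y))
    (heq1 : ∀ p : ℝ × ℝ, pdX (pdY u) p = pdY u p * pdX h p + pdX u p * pdY h p)
    (heq2 : ∀ p : ℝ × ℝ,
      pdX (pdX u) p - pdY (pdY u) p = -2 * pdX u p * pdX h p + 2 * pdY u p * pdY h p) :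
    ∀ p q : ℝ × ℝ, u p = u q := by
  classical
  have hu : ContDiff ℝ (⊤ : ℕ∞) u := contDiffOn_univ.mp (huan.contDiffOn uniqueDiffOn_univ)
  have hPeru : PASaux.Per u := fun x y => huper x y
  by_cases hdeg : ∃ p₀ : ℝ × ℝ, pdX u p₀ = 0 ∧ pdY u p₀ = 0 ∧ pdX (pdX u) p₀ = 0
  · obtain ⟨p₀, h1, h2, h3⟩ := hdeg
    have horders := PASaux.orders_lemma hu hhsm heq1 heq2 h1 h2 h3
    have hflat : ∀ i j : ℕ, 1 ≤ i + j → PASaux.Dij i j u p₀ = 0 :=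
      fun i j h1j => horders (i + j) i j (by omega) h1j
    have hconst := PASaux.const_of_flat huan hflat
    intro p q
    rw [hconst p, hconst q]
  · push_neg at hdeg
    exfalso
    obtain ⟨pmax, hmax⟩ := PASaux.exists_max hu.continuous hPeru
    obtain ⟨hcx, hcy⟩ := PASaux.max_crit pmax hmax
    apply PASaux.degree_contradiction (PASaux.contDiff_pdX hu) (PASaux.contDiff_pdY hu)
      hPeru.pdX' hPeru.pdY' pmax hcx hcy
    intro p hp1 hp2
    have hxy : pdX (pdY u) p = 0 := by rw [heq1 p, hp1, hp2]; ring
    have hyx : pdY (pdX u) p = 0 := by rw [← PASaux.pdX_pdY hu p]; exact hxy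
    have hyy : pdY (pdY u) p = pdX (pdX u) p := by
      have := heq2 p
      rw [hp1, hp2] at this
      ring_nf at this
      linarith
    have hne : pdX (pdX u) p ≠ 0 := hdeg p hp1 hp2
    rw [hyy, hyx, hxy]
    have : 0 < pdX (pdX u) p * pdX (pdX u) p := mul_self_pos.mpr hne
    linarith
end
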